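/- arXiv:math-ph/0406041 — 5 statements merged into one kernel-verified Lean document; each statement's English description precedes it below -/
import Mathlib

section
/- Suppose in addition e is continuous and there exist ν > 0, e₊ ∈ ℝ, C > 0 with |e(x) − e₊| ≤ C⟨x⟩^{-(2+ν)} for all x ≥ 0, and m₀ ≤ E − e₊ ≤ M₀ for all E ∈ Δ; set k₊(E) := √(2(E − e₊)). Then for every E ∈ Δ the improper integral ω(E) := ∫₀^∞ (k(y,E) − k₊(E)) dy converges, and the remainder r(x,E) := ∫₀ˣ k(y,E) dy − x·k₊(E) − ω(E) satisfies: for every natural number n there is C′(n) with |∂ⁿ/∂Eⁿ r(x,E)| ≤ C′(n) ⟨x⟩^{-(1+ν)} for all x ≥ 0, uniformly in E ∈ Δ. -/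
open MeasureTheory
open Set

noncomputable def s2c : ℕ → ℝ
  | 0 => 1
  | n+1 => (1 - 2*(n:ℝ)) * s2c n

noncomputable def s2P (n : ℕ) (a E : ℝ) : ℝ := s2c n * (2*(E-a)) ^ ((1/2:ℝ) - n)

lemma s2P_zero (a E : ℝ) : s2P 0 a E = Real.sqrt (2*(E-a)) := by
  rw [s2P, Real.sqrt_eq_rpow]
  norm_num [s2c]

lemma s2P_deriv (n : ℕ) (a E : ℝ) (h : 0 < E - a) :
    HasDerivAt (fun E' => s2P n a E') (s2P (n+1) a E) E := by
  have h1 : HasDerivAt (fun E' : ℝ => 2*(E'-a)) 2 E := by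
    simpa using ((hasDerivAt_id E).sub_const a).const_mul 2
  have h2 := (Real.hasDerivAt_rpow_const (p := (1/2:ℝ) - n)
    (Or.inl (by positivity : (2*(E-a)) ≠ 0))).comp E h1
  have h3 := h2.const_mul (s2c n)
  convert h3 using 1
  show s2c (n+1) * (2*(E-a)) ^ ((1/2:ℝ) - (n+1:ℕ)) = _
  rw [s2c]
  push_cast
  rw [show (1/2:ℝ) - ((n:ℝ)+1) = ((1/2:ℝ) - n) - 1 by ring]
  ring
  all_goals rfl

lemma s2P_deriv_a (n : ℕ) (E : ℝ) (t : ℝ) (h : 0 < E - t) :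
    HasDerivAt (fun a => s2P n a E) (-(s2P (n+1) t E)) t := by
  have h1 : HasDerivAt (fun a : ℝ => 2*(E-a)) (-2) t := by
    simpa using ((hasDerivAt_id t).const_sub E).const_mul 2
  have h2 := (Real.hasDerivAt_rpow_const (p := (1/2:ℝ) - n)
    (Or.inl (by positivity : (2*(E-t)) ≠ 0))).comp t h1
  have h3 := h2.const_mul (s2c n)
  convert h3 using 1
  show -(s2c (n+1) * (2*(E-t)) ^ ((1/2:ℝ) - (n+1:ℕ))) = _
  rw [s2c]
  push_cast
  rw [show (1/2:ℝ) - ((n:ℝ)+1) = ((1/2:ℝ) - n) - 1 by ring]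
  ring
  all_goals rfl

noncomputable def s2L (n : ℕ) (m : ℝ) : ℝ := |s2c (n+1)| * (2*m) ^ ((-(1/2:ℝ)) - n)

lemma s2L_nonneg (n : ℕ) {m : ℝ} (hm : 0 ≤ m) : 0 ≤ s2L n m :=
  mul_nonneg (abs_nonneg _) (Real.rpow_nonneg (by linarith) _)

lemma s2P_diff_bound (n : ℕ) {m E a b : ℝ} (hm : 0 < m) (ha : m ≤ E - a) (hb : m ≤ E - b) :
    |s2P n a E - s2P n b E| ≤ s2L n m * |a - b| := by
  have key := Convex.norm_image_sub_le_of_norm_hasDerivWithin_le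
    (f := fun t => s2P n t E) (f' := fun t => -(s2P (n+1) t E))
    (s := Iic (E - m)) (C := s2L n m)
    (fun t ht => (s2P_deriv_a n E t (by simp only [mem_Iic] at ht; linarith)).hasDerivWithinAt)
    (fun t ht => ?_) (convex_Iic _) (by simp only [mem_Iic]; linarith : b ∈ Iic (E - m))
    (by simp only [mem_Iic]; linarith : a ∈ Iic (E - m))
  · simpa [Real.norm_eq_abs, abs_sub_comm] using key
  · simp only [mem_Iic] at ht
    have hpos : (0:ℝ) < 2*(E - t) := by linarith
    have h1 : (2*(E-t)) ^ ((1/2:ℝ) - (n+1:ℕ)) ≤ (2*m) ^ ((-(1/2:ℝ)) - n) := by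
      have heq : ((1/2:ℝ) - (n+1:ℕ)) = (-(1/2:ℝ)) - n := by push_cast; ring
      rw [heq]
      have hn : (0:ℝ) ≤ (n:ℝ) := Nat.cast_nonneg n
      exact Real.rpow_le_rpow_of_nonpos (by linarith) (by linarith) (by linarith)
    have h2 : (0:ℝ) ≤ (2*(E-t)) ^ ((1/2:ℝ) - (n+1:ℕ)) := Real.rpow_nonneg (by linarith) _
    show ‖-(s2P (n+1) t E)‖ ≤ s2L n m
    rw [norm_neg, Real.norm_eq_abs, s2P, abs_mul, abs_of_nonneg h2, s2L]
    exact mul_le_mul_of_nonneg_left h1 (abs_nonneg _)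

lemma s2w_cont (p : ℝ) : Continuous (fun y : ℝ => Real.sqrt (1+y^2) ^ p) := by
  apply Continuous.rpow_const
  · exact (Real.continuous_sqrt.comp (by continuity))
  · intro y
    left
    have : (0:ℝ) < 1 + y^2 := by positivity
    positivity

lemma s2_one_le (y : ℝ) : (1:ℝ) ≤ Real.sqrt (1+y^2) := by
  have : Real.sqrt 1 ≤ Real.sqrt (1+y^2) := Real.sqrt_le_sqrt (by nlinarith)
  simpa using this

lemma s2w_int (ν : ℝ) (hν : 0 < ν) :
    IntegrableOn (fun y : ℝ => Real.sqrt (1+y^2) ^ (-(2+ν))) (Ici (0:ℝ)) := by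
  apply Integrable.integrableOn
  apply Integrable.mono' integrable_inv_one_add_sq (s2w_cont _).aestronglyMeasurable
  filter_upwards with y
  have h1 : (0:ℝ) < 1 + y^2 := by positivity
  have h2 : Real.sqrt (1+y^2) ^ (-(2+ν)) ≤ Real.sqrt (1+y^2) ^ (-2:ℝ) :=
    Real.rpow_le_rpow_of_exponent_le (s2_one_le y) (by linarith)
  have h3 : Real.sqrt (1+y^2) ^ (-2:ℝ) = (1 + y^2)⁻¹ := by
    rw [show ((-2):ℝ) = -((2:ℕ):ℝ) by norm_num, Real.rpow_neg (Real.sqrt_nonneg _),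
      Real.rpow_natCast, Real.sq_sqrt h1.le]
  rw [Real.norm_eq_abs, abs_of_nonneg (Real.rpow_nonneg (Real.sqrt_nonneg _) _), ← h3]
  exact h2

lemma s2_tail (ν : ℝ) (hν : 0 < ν) :
    ∃ B : ℝ, 0 ≤ B ∧ ∀ x : ℝ, 0 ≤ x →
      (∫ y in Ici x, Real.sqrt (1+y^2) ^ (-(2+ν))) ≤ B * Real.sqrt (1+x^2) ^ (-(1+ν)) := by
  set w := fun y : ℝ => Real.sqrt (1+y^2) ^ (-(2+ν)) with hw
  have hwnn : ∀ y, 0 ≤ w y := fun y => Real.rpow_nonneg (Real.sqrt_nonneg _) _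
  set A := ∫ y in Ici (0:ℝ), w y with hA
  have hA0 : 0 ≤ A := setIntegral_nonneg measurableSet_Ici (fun y _ => hwnn y)
  set S := Real.sqrt 2 ^ (1+ν) with hS
  have hS0 : 0 < S := Real.rpow_pos_of_pos (by positivity) _
  refine ⟨S * (A + 1/(1+ν)), by positivity, ?_⟩
  intro x hx
  have hwint := s2w_int ν hν
  have hxs : (0:ℝ) < Real.sqrt (1+x^2) := Real.sqrt_pos.mpr (by positivity)
  set Q := Real.sqrt (1+x^2) ^ (-(1+ν)) with hQ
  have hQ0 : 0 < Q := Real.rpow_pos_of_pos hxs _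
  rcases le_or_gt 1 x with h1 | h1
  · have hx0 : (0:ℝ) < x := by linarith
    have key1 : (∫ y in Ici x, w y) ≤ ∫ y in Ioi x, (fun y : ℝ => y ^ (-(2+ν))) y := by
      rw [integral_Ici_eq_integral_Ioi]
      apply setIntegral_mono_on
      · exact (hwint.mono_set (Ici_subset_Ici.mpr hx)).mono_set Ioi_subset_Ici_self
      · exact integrableOn_Ioi_rpow_of_lt (by linarith) hx0
      · exact measurableSet_Ioi
      · intro y hy
        have hy0 : (0:ℝ) < y := lt_trans hx0 hy
        have : y ≤ Real.sqrt (1+y^2) := by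
          nlinarith [Real.sq_sqrt (show (0:ℝ) ≤ 1+y^2 by positivity),
            Real.sqrt_nonneg (1+y^2)]
        exact Real.rpow_le_rpow_of_nonpos hy0 this (by linarith)
    have key2 : (∫ y in Ioi x, y ^ (-(2+ν))) = x ^ (-(1+ν)) / (1+ν) := by
      rw [integral_Ioi_rpow_of_lt (by linarith) hx0, show -(2+ν) + 1 = -(1+ν) by ring,
        neg_div_neg_eq]
    have key3 : x ^ (-(1+ν)) ≤ S * Q := by
      have hsx : Real.sqrt (1+x^2) ≤ Real.sqrt 2 * x := by
        rw [show Real.sqrt 2 * x = Real.sqrt (2 * x^2) by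
          rw [Real.sqrt_mul (by norm_num), Real.sqrt_sq hx0.le]]
        exact Real.sqrt_le_sqrt (by nlinarith)
      have h4 : (Real.sqrt 2 * x) ^ (-(1+ν)) ≤ Q :=
        Real.rpow_le_rpow_of_nonpos hxs hsx (by linarith)
      rw [Real.mul_rpow (Real.sqrt_nonneg 2) hx0.le] at h4
      have h5 := mul_le_mul_of_nonneg_left h4 hS0.le
      calc x ^ (-(1+ν)) = S * (Real.sqrt 2 ^ (-(1+ν)) * x ^ (-(1+ν))) := by
              rw [← mul_assoc, hS, ← Real.rpow_add (by positivity),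
                show (1:ℝ)+ν + -(1+ν) = 0 by ring, Real.rpow_zero, one_mul]
        _ ≤ S * Q := h5
    have hν1 : (0:ℝ) < 1 + ν := by linarith
    calc (∫ y in Ici x, w y) ≤ x ^ (-(1+ν)) / (1+ν) := by rw [← key2]; exact key1
      _ ≤ (S * Q) / (1+ν) := by gcongr
      _ ≤ S * (A + 1/(1+ν)) * Q := by
          have h6 : (0:ℝ) ≤ S * A * Q := by positivity
          have h7 : S * (A + 1/(1+ν)) * Q = S * A * Q + (S * Q) / (1+ν) := by
            field_simp
          linarith
  · have key1 : (∫ y in Ici x, w y) ≤ A := by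
      apply setIntegral_mono_set hwint
      · filter_upwards with y using hwnn y
      · exact HasSubset.Subset.eventuallyLE (Ici_subset_Ici.mpr hx)
    have hsx : Real.sqrt (1+x^2) ≤ Real.sqrt 2 := Real.sqrt_le_sqrt (by nlinarith)
    have h4 : Real.sqrt 2 ^ (-(1+ν)) ≤ Q :=
      Real.rpow_le_rpow_of_nonpos hxs hsx (by linarith)
    have h5 : (1:ℝ) ≤ S * Q := by
      have h6 := mul_le_mul_of_nonneg_left h4 hS0.le
      calc (1:ℝ) = S * Real.sqrt 2 ^ (-(1+ν)) := by
            rw [hS, ← Real.rpow_add (by positivity),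
              show (1:ℝ)+ν + -(1+ν) = 0 by ring, Real.rpow_zero]
        _ ≤ S * Q := h6
    have hν1 : (0:ℝ) < 1 + ν := by linarith
    calc (∫ y in Ici x, w y) ≤ A := key1
      _ ≤ A * (S * Q) := le_mul_of_one_le_right hA0 h5
      _ ≤ S * (A + 1/(1+ν)) * Q := by
            have h6 : (0:ℝ) < S * Q * (1/(1+ν)) := by positivity
            have h7 : S * (A + 1/(1+ν)) * Q = A * (S * Q) + S * Q * (1/(1+ν)) := by ring
            linarith

/-- Δ = [E₁,E₂]; `e : ℝ → ℝ` continuous with `m₀ ≤ E − e x ≤ M₀` on ℝ × Δ, decay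
`|e x − e₊| ≤ C⟨x⟩^{-(2+ν)}` for `x ≥ 0` (ν > 0), and `m₀ ≤ E − e₊ ≤ M₀` on Δ;
`k(x,E) := √(2(E − e x))`, `k₊(E) := √(2(E − e₊))`.
Then for every `E ∈ Δ` the improper integral `ω(E) := ∫₀^∞ (k(y,E) − k₊(E)) dy`
converges, and the remainder
`r(x,E) := ∫₀ˣ k(y,E) dy − x k₊(E) − ω(E)` satisfies: for every `n` there is `C′(n)`
with `|∂ⁿ/∂Eⁿ r(x,E)| ≤ C′(n)⟨x⟩^{-(1+ν)}` for all `x ≥ 0`, uniformly in `E ∈ Δ`. -/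
theorem stmt_2 (E₁ E₂ m₀ M₀ : ℝ) (hm₀ : 0 < m₀) (hM₀ : m₀ ≤ M₀)
    (e : ℝ → ℝ) (hecont : Continuous e)
    (he : ∀ x : ℝ, ∀ E ∈ Set.Icc E₁ E₂, m₀ ≤ E - e x ∧ E - e x ≤ M₀)
    (ν : ℝ) (hν : 0 < ν) (eplus C : ℝ) (hC : 0 < C)
    (hdecay : ∀ x : ℝ, 0 ≤ x →
      |e x - eplus| ≤ C * Real.sqrt (1 + x ^ 2) ^ (-(2 + ν)))
    (heplus : ∀ E ∈ Set.Icc E₁ E₂, m₀ ≤ E - eplus ∧ E - eplus ≤ M₀) :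
    (∀ E ∈ Set.Icc E₁ E₂,
      IntegrableOn
        (fun y : ℝ => Real.sqrt (2 * (E - e y)) - Real.sqrt (2 * (E - eplus)))
        (Set.Ici (0 : ℝ))) ∧
    ∀ n : ℕ, ∃ C' : ℝ, ∀ x : ℝ, 0 ≤ x → ∀ E ∈ Set.Icc E₁ E₂,
      |iteratedDeriv n
          (fun E' : ℝ =>
            (∫ y in (0 : ℝ)..x, Real.sqrt (2 * (E' - e y)))
              - x * Real.sqrt (2 * (E' - eplus))
              - ∫ y in Set.Ici (0 : ℝ),
                  (Real.sqrt (2 * (E' - e y)) - Real.sqrt (2 * (E' - eplus)))) E|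
        ≤ C' * Real.sqrt (1 + x ^ 2) ^ (-(1 + ν)) := by
  rcases lt_or_ge E₂ E₁ with hE12 | hE12
  · have hempty : Set.Icc E₁ E₂ = ∅ := Set.Icc_eq_empty (not_le.mpr hE12)
    constructor
    · intro E hE; rw [hempty] at hE; exact absurd hE (Set.notMem_empty E)
    · intro n
      refine ⟨0, fun x hx E hE => ?_⟩
      rw [hempty] at hE
      exact absurd hE (Set.notMem_empty E)
  -- main case
  set m := m₀/2 with hmdef
  have hm : 0 < m := by positivity
  set U := Ioo (E₁ - m) (E₂ + m) with hUdef
  have hUo : IsOpen U := isOpen_Ioo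
  have hIccU : Icc E₁ E₂ ⊆ U := fun E hE => ⟨by linarith [hE.1], by linarith [hE.2]⟩
  have hey : ∀ y, e y ≤ E₁ - m₀ := fun y => by
    have := (he y E₁ ⟨le_refl _, hE12⟩).1; linarith
  have hep : eplus ≤ E₁ - m₀ := by
    have := (heplus E₁ ⟨le_refl _, hE12⟩).1; linarith
  have hmarg : ∀ E' ∈ U, ∀ a : ℝ, a ≤ E₁ - m₀ → m ≤ E' - a := by
    intro E' hE' a ha
    have := hE'.1
    simp only [hUdef, mem_Ioo] at hE'
    linarith [hE'.1]
  set w := fun y : ℝ => Real.sqrt (1+y^2) ^ (-(2+ν)) with hwdef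
  have hwnn : ∀ y, 0 ≤ w y := fun y => Real.rpow_nonneg (Real.sqrt_nonneg _) _
  -- pointwise bound
  have hbound : ∀ (n : ℕ), ∀ E' ∈ U, ∀ y : ℝ, 0 ≤ y →
      |s2P n (e y) E' - s2P n eplus E'| ≤ s2L n m * (C * w y) := by
    intro n E' hE' y hy
    have h1 := s2P_diff_bound n hm (hmarg E' hE' _ (hey y)) (hmarg E' hE' _ hep)
    refine h1.trans ?_
    exact mul_le_mul_of_nonneg_left (hdecay y hy) (s2L_nonneg n hm.le)
  -- continuity in y
  have hcont : ∀ (n : ℕ), ∀ E' ∈ U,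
      Continuous (fun y => s2P n (e y) E' - s2P n eplus E') := by
    intro n E' hE'
    have hbase : Continuous (fun y : ℝ => 2*(E' - e y)) := by continuity
    have h1 : Continuous (fun y => (2*(E' - e y)) ^ ((1/2:ℝ) - (n:ℝ))) := by
      apply hbase.rpow_const
      intro y
      left
      have := hmarg E' hE' _ (hey y)
      exact ne_of_gt (by linarith)
    exact (continuous_const.mul h1).sub continuous_const
  -- integrable bound
  have hwint : ∀ x : ℝ, 0 ≤ x → IntegrableOn w (Ici x) := fun x hx =>
    (s2w_int ν hν).mono_set (Ici_subset_Ici.mpr hx)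
  have hbint : ∀ (n : ℕ), ∀ x : ℝ, 0 ≤ x →
      IntegrableOn (fun y => s2L n m * (C * w y)) (Ici x) := by
    intro n x hx
    exact ((hwint x hx).const_mul C).const_mul (s2L n m)
  -- integrability of integrand
  have hint : ∀ (n : ℕ), ∀ x : ℝ, 0 ≤ x → ∀ E' ∈ U,
      IntegrableOn (fun y => s2P n (e y) E' - s2P n eplus E') (Ici x) := by
    intro n x hx E' hE'
    apply Integrable.mono' (hbint n x hx)
      ((hcont n E' hE').aestronglyMeasurable.restrict)
    filter_upwards [ae_restrict_mem measurableSet_Ici] with y hy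
    exact hbound n E' hE' y (le_trans hx hy)
  set G : ℕ → ℝ → ℝ → ℝ :=
    fun n x E' => ∫ y in Ici x, (s2P n (e y) E' - s2P n eplus E') with hGdef
  -- derivative of G
  have hderiv : ∀ (n : ℕ), ∀ x : ℝ, 0 ≤ x → ∀ E ∈ U,
      HasDerivAt (fun E' => G n x E') (G (n+1) x E) E := by
    intro n x hx E hEU
    obtain ⟨ε, hε, hball⟩ := Metric.isOpen_iff.mp hUo E hEU
    have main := hasDerivAt_integral_of_dominated_loc_of_deriv_le (Metric.ball_mem_nhds E hε)
      (F := fun E' y => s2P n (e y) E' - s2P n eplus E')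
      (F' := fun E' y => s2P (n+1) (e y) E' - s2P (n+1) eplus E')
      (bound := fun y => s2L (n+1) m * (C * w y))
      (μ := volume.restrict (Ici x)) (x₀ := E)
      ?_ (hint n x hx E hEU) ?_ ?_ (hbint (n+1) x hx) ?_
    · exact main.2
    · filter_upwards [hUo.mem_nhds hEU] with E' hE'
      exact (hcont n E' hE').aestronglyMeasurable.restrict
    · exact (hcont (n+1) E hEU).aestronglyMeasurable.restrict
    · filter_upwards [ae_restrict_mem measurableSet_Ici] with y hy E' hE'
      exact hbound (n+1) E' (hball hE') y (le_trans hx hy)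
    · filter_upwards with y E' hE'
      have h1 : 0 < E' - e y := lt_of_lt_of_le hm (hmarg E' (hball hE') _ (hey y))
      have h2 : 0 < E' - eplus := lt_of_lt_of_le hm (hmarg E' (hball hE') _ hep)
      exact (s2P_deriv n (e y) E' h1).sub (s2P_deriv n eplus E' h2)
  -- the identity r = -G 0
  have hid : ∀ x : ℝ, 0 ≤ x → ∀ E' ∈ U,
      (∫ y in (0:ℝ)..x, Real.sqrt (2 * (E' - e y)))
        - x * Real.sqrt (2 * (E' - eplus))
        - (∫ y in Ici (0:ℝ), (Real.sqrt (2 * (E' - e y)) - Real.sqrt (2 * (E' - eplus))))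
      = -(G 0 x E') := by
    intro x hx E' hE'
    have hg : Continuous (fun y => s2P 0 (e y) E' - s2P 0 eplus E') := hcont 0 E' hE'
    have e1 : (∫ y in (0:ℝ)..x, Real.sqrt (2 * (E' - e y)))
        = (∫ y in (0:ℝ)..x, (s2P 0 (e y) E' - s2P 0 eplus E')) + x * s2P 0 eplus E' := by
      have : (fun y => Real.sqrt (2 * (E' - e y)))
          = fun y => (s2P 0 (e y) E' - s2P 0 eplus E') + s2P 0 eplus E' := by
        funext y; rw [s2P_zero]; ring
      rw [this, intervalIntegral.integral_add (hg.intervalIntegrable 0 x)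
        (intervalIntegrable_const), intervalIntegral.integral_const, smul_eq_mul]
      ring
    have e2 : (∫ y in Ici (0:ℝ), (Real.sqrt (2 * (E' - e y)) - Real.sqrt (2 * (E' - eplus))))
        = (∫ y in (0:ℝ)..x, (s2P 0 (e y) E' - s2P 0 eplus E')) + G 0 x E' := by
      have hfun : (fun y => Real.sqrt (2 * (E' - e y)) - Real.sqrt (2 * (E' - eplus)))
          = fun y => s2P 0 (e y) E' - s2P 0 eplus E' := by
        funext y; rw [s2P_zero, s2P_zero]
      rw [hfun]
      have hsplit : (∫ y in Ici (0:ℝ), (s2P 0 (e y) E' - s2P 0 eplus E'))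
          = (∫ y in Ioc (0:ℝ) x, (s2P 0 (e y) E' - s2P 0 eplus E'))
            + (∫ y in Ioi x, (s2P 0 (e y) E' - s2P 0 eplus E')) := by
        rw [integral_Ici_eq_integral_Ioi, ← Ioc_union_Ioi_eq_Ioi hx]
        exact setIntegral_union (Ioc_disjoint_Ioi le_rfl) measurableSet_Ioi
          (hg.integrableOn_Ioc) ((hint 0 x hx E' hE').mono_set Ioi_subset_Ici_self)
      rw [hsplit, intervalIntegral.integral_of_le hx, hGdef]
      simp only []
      rw [integral_Ici_eq_integral_Ioi]
    rw [e1, e2, s2P_zero]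
    ring
  -- iterated derivative identity
  have hkey : ∀ (n : ℕ), ∀ x : ℝ, 0 ≤ x → ∀ E ∈ U,
      iteratedDeriv n
        (fun E' : ℝ =>
          (∫ y in (0:ℝ)..x, Real.sqrt (2 * (E' - e y)))
            - x * Real.sqrt (2 * (E' - eplus))
            - ∫ y in Ici (0:ℝ),
                (Real.sqrt (2 * (E' - e y)) - Real.sqrt (2 * (E' - eplus)))) E
      = -(G n x E) := by
    intro n x hx
    rw [iteratedDeriv_eq_iterate]
    induction n with
    | zero => intro E hEU; simpa using hid x hx E hEU
    | succ n ih =>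
      intro E hEU
      rw [Function.iterate_succ_apply']
      have hev : deriv^[n]
          (fun E' : ℝ =>
            (∫ y in (0:ℝ)..x, Real.sqrt (2 * (E' - e y)))
              - x * Real.sqrt (2 * (E' - eplus))
              - ∫ y in Ici (0:ℝ),
                  (Real.sqrt (2 * (E' - e y)) - Real.sqrt (2 * (E' - eplus))))
          =ᶠ[nhds E] (fun E' => -(G n x E')) := by
        filter_upwards [hUo.mem_nhds hEU] with E' hE' using ih E' hE'
      rw [hev.deriv_eq]
      exact ((hderiv n x hx E hEU).neg).deriv
  obtain ⟨B, hB0, hB⟩ := s2_tail ν hν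
  constructor
  · intro E hE
    have : (fun y : ℝ => Real.sqrt (2 * (E - e y)) - Real.sqrt (2 * (E - eplus)))
        = fun y => s2P 0 (e y) E - s2P 0 eplus E := by
      funext y; rw [s2P_zero, s2P_zero]
    rw [this]
    exact hint 0 0 le_rfl E (hIccU hE)
  · intro n
    refine ⟨s2L n m * C * B, ?_⟩
    intro x hx E hE
    rw [hkey n x hx E (hIccU hE), abs_neg]
    have h1 : |G n x E| ≤ ∫ y in Ici x, (s2L n m * (C * w y)) := by
      rw [hGdef]
      simp only []
      rw [← Real.norm_eq_abs]
      apply norm_integral_le_of_norm_le (hbint n x hx)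
      filter_upwards [ae_restrict_mem measurableSet_Ici] with y hy
      rw [Real.norm_eq_abs]
      exact hbound n E (hIccU hE) y (le_trans hx hy)
    have h2 : (∫ y in Ici x, (s2L n m * (C * w y)))
        = s2L n m * C * ∫ y in Ici x, w y := by
      rw [integral_const_mul, integral_const_mul]; ring
    have h3 := hB x hx
    calc |G n x E| ≤ s2L n m * C * ∫ y in Ici x, w y := by rw [← h2]; exact h1
      _ ≤ s2L n m * C * (B * Real.sqrt (1+x^2) ^ (-(1+ν))) := by
          apply mul_le_mul_of_nonneg_left h3
          exact mul_nonneg (s2L_nonneg n hm.le) hC.le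
      _ = s2L n m * C * B * Real.sqrt (1+x^2) ^ (-(1+ν)) := by ring
end

section
/- Let n ∈ ℕ, ν > 0, C > 0, and let M : ℝ → Matrix(n,n,ℂ) be continuous with ‖M(x)‖ ≤ C⟨x⟩^{-(2+ν)} for all x ∈ ℝ. Let c : ℝ → ℂⁿ be differentiable with c′(x) = M(x) c(x) for all x. Then: (i) ‖c(x)‖ ≤ exp(∫_ℝ ‖M(y)‖ dy) · ‖c(0)‖ for all x ∈ ℝ; (ii) the limits c(±∞) := lim_{x→±∞} c(x) exist; and (iii) there is a constant C′, depending only on C, ν and ‖c(0)‖, such that ‖c(x) − c(+∞)‖ ≤ C′ ⟨x⟩^{-(1+ν)} for all x ≥ 0, and ‖c(x) − c(−∞)‖ ≤ C′ ⟨x⟩^{-(1+ν)} for all x ≤ 0. -/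
open Filter MeasureTheory Real

lemma key1 {ν : ℝ} (hν : 0 < ν) (x : ℝ) :
    Real.sqrt (1 + x ^ 2) ^ (-(2 + ν)) ≤ (1 + x ^ 2)⁻¹ := by
  have h0 : (0:ℝ) < 1 + x ^ 2 := by positivity
  have hs1 : 1 ≤ Real.sqrt (1 + x ^ 2) := Real.one_le_sqrt.mpr (by nlinarith)
  have hsq : Real.sqrt (1 + x ^ 2) ^ (2:ℝ) = 1 + x ^ 2 := by
    rw [show (2:ℝ) = ((2:ℕ):ℝ) by norm_num, Real.rpow_natCast]
    exact Real.sq_sqrt h0.le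
  have h1 : 1 + x ^ 2 ≤ Real.sqrt (1 + x ^ 2) ^ (2 + ν) := by
    have := Real.rpow_le_rpow_of_exponent_le hs1 (show (2:ℝ) ≤ 2 + ν by linarith)
    rwa [hsq] at this
  rw [Real.rpow_neg (Real.sqrt_nonneg _)]
  exact inv_anti₀ h0 h1

lemma key2 {ν : ℝ} (hν : 0 < ν) {x : ℝ} (hx : 0 ≤ x) :
    Real.sqrt (1 + x ^ 2) ^ (-(2 + ν)) ≤ Real.sqrt 2 ^ (2 + ν) * (1 + x) ^ (-(2 + ν)) := by
  have h2 : (0:ℝ) < Real.sqrt 2 := by positivity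
  have h1x : (0:ℝ) < 1 + x := by linarith
  have hle : (1 + x) / Real.sqrt 2 ≤ Real.sqrt (1 + x ^ 2) := by
    rw [div_le_iff₀ h2, ← Real.sqrt_mul (by positivity : (0:ℝ) ≤ 1 + x^2)]
    have h := Real.sqrt_le_sqrt (show (1+x)^2 ≤ (1 + x^2) * 2 by nlinarith [sq_nonneg (x-1)])
    rwa [Real.sqrt_sq h1x.le] at h
  have hmain := Real.rpow_le_rpow_of_nonpos (by positivity) hle (by linarith : -(2+ν) ≤ 0)
  calc Real.sqrt (1 + x ^ 2) ^ (-(2 + ν)) ≤ ((1 + x) / Real.sqrt 2) ^ (-(2 + ν)) := hmain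
    _ = Real.sqrt 2 ^ (2 + ν) * (1 + x) ^ (-(2 + ν)) := by
        rw [Real.div_rpow h1x.le h2.le, Real.rpow_neg h2.le, div_eq_mul_inv, inv_inv, mul_comm]

lemma key3 {ν : ℝ} (hν : 0 < ν) {x : ℝ} (hx : 0 ≤ x) :
    (1 + x) ^ (-(1 + ν)) ≤ Real.sqrt (1 + x ^ 2) ^ (-(1 + ν)) := by
  have hs : (0:ℝ) < Real.sqrt (1 + x ^ 2) := by positivity
  have hle : Real.sqrt (1 + x ^ 2) ≤ 1 + x := by
    have h := Real.sqrt_le_sqrt (show 1 + x^2 ≤ (1+x)^2 by nlinarith)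
    rwa [Real.sqrt_sq (by linarith)] at h
  exact Real.rpow_le_rpow_of_nonpos hs hle (by linarith)

lemma bound_pos {n : ℕ} {M : ℝ → (EuclideanSpace ℂ (Fin n) →L[ℂ] EuclideanSpace ℂ (Fin n))}
    {c : ℝ → EuclideanSpace ℂ (Fin n)} (hM : Continuous M)
    (hc : ∀ x : ℝ, HasDerivAt c ((M x) (c x)) x) {x : ℝ} (hx : 0 ≤ x) :
    ‖c x‖ ≤ Real.exp (∫ t in (0:ℝ)..x, ‖M t‖) * ‖c 0‖ := by
  set g : ℝ → ℝ := fun t => ‖M t‖ with hg_def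
  have hg : Continuous g := hM.norm
  set F : ℝ → ℝ := fun u => ∫ t in (0:ℝ)..u, g t with hF_def
  have hF : ∀ u : ℝ, HasDerivAt F (g u) u := fun u =>
    intervalIntegral.integral_hasDerivAt_right (hg.intervalIntegrable 0 u)
      (hg.stronglyMeasurable.stronglyMeasurableAtFilter) hg.continuousAt
  have hN : ∀ u : ℝ, HasDerivAt (fun t => ‖c t‖ ^ 2)
      (2 * (inner ℝ ((M u) (c u)) (c u) : ℝ)) u := by
    intro u
    have h := HasDerivAt.inner ℝ (hc u) (hc u)
    simp only [real_inner_self_eq_norm_sq] at h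
    refine h.congr_deriv ?_
    rw [real_inner_comm]; ring
  set φ : ℝ → ℝ := fun u => Real.exp (-2 * F u) * ‖c u‖ ^ 2 with hφ_def
  have hφ : ∀ u : ℝ, HasDerivAt φ
      (Real.exp (-2 * F u) * (-2 * g u) * ‖c u‖ ^ 2
        + Real.exp (-2 * F u) * (2 * (inner ℝ ((M u) (c u)) (c u) : ℝ))) u := by
    intro u
    exact (((hF u).const_mul (-2)).exp).mul (hN u)
  have hφ'le : ∀ u : ℝ, Real.exp (-2 * F u) * (-2 * g u) * ‖c u‖ ^ 2
        + Real.exp (-2 * F u) * (2 * (inner ℝ ((M u) (c u)) (c u) : ℝ)) ≤ 0 := by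
    intro u
    have h1 : (inner ℝ ((M u) (c u)) (c u) : ℝ) ≤ g u * ‖c u‖ ^ 2 := by
      calc (inner ℝ ((M u) (c u)) (c u) : ℝ) ≤ ‖(M u) (c u)‖ * ‖c u‖ := real_inner_le_norm _ _
        _ ≤ (‖M u‖ * ‖c u‖) * ‖c u‖ := by
            have := (M u).le_opNorm (c u)
            nlinarith [norm_nonneg (c u)]
        _ = g u * ‖c u‖ ^ 2 := by ring
    have he := Real.exp_pos (-2 * F u)
    nlinarith [he]
  have hanti : Antitone φ :=
    antitone_of_deriv_nonpos (fun u => (hφ u).differentiableAt)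
      (fun u => by rw [(hφ u).deriv]; exact hφ'le u)
  have h0 : φ x ≤ φ 0 := hanti hx
  have hF0 : F 0 = 0 := intervalIntegral.integral_same
  rw [hφ_def] at h0
  simp only [hF0, mul_zero, neg_zero, Real.exp_zero, one_mul] at h0
  -- h0 : exp (-2 * F x) * ‖c x‖^2 ≤ ‖c 0‖^2
  have hE := Real.exp_pos (F x)
  have hsq : Real.exp (F x) ^ 2 * Real.exp (-2 * F x) = 1 := by
    rw [sq, ← Real.exp_add, ← Real.exp_add]
    rw [show F x + F x + -2 * F x = 0 by ring, Real.exp_zero]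
  show ‖c x‖ ≤ Real.exp (F x) * ‖c 0‖
  have h1 : ‖c x‖ ^ 2 ≤ (Real.exp (F x) * ‖c 0‖) ^ 2 := by
    have h2 := mul_le_mul_of_nonneg_left h0 (sq_nonneg (Real.exp (F x)))
    calc ‖c x‖ ^ 2 = Real.exp (F x) ^ 2 * (Real.exp (-2 * F x) * ‖c x‖ ^ 2) := by
          rw [← mul_assoc, hsq, one_mul]
      _ ≤ Real.exp (F x) ^ 2 * ‖c 0‖ ^ 2 := h2
      _ = (Real.exp (F x) * ‖c 0‖) ^ 2 := by ring
  exact (pow_le_pow_iff_left₀ (norm_nonneg _) (by positivity) two_ne_zero).mp h1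

lemma g_int {n : ℕ} {C ν : ℝ} (hC : 0 < C) (hν : 0 < ν)
    {M : ℝ → (EuclideanSpace ℂ (Fin n) →L[ℂ] EuclideanSpace ℂ (Fin n))}
    (hM : Continuous M)
    (hMb : ∀ x : ℝ, ‖M x‖ ≤ C * Real.sqrt (1 + x ^ 2) ^ (-(2 + ν))) :
    Integrable (fun x : ℝ => ‖M x‖) := by
  apply Integrable.mono' (integrable_inv_one_add_sq.const_mul C)
    hM.norm.aestronglyMeasurable
  filter_upwards with x
  rw [norm_norm]
  exact (hMb x).trans (mul_le_mul_of_nonneg_left (key1 hν x) hC.le)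

lemma g_int_le {n : ℕ} {C ν : ℝ} (hC : 0 < C) (hν : 0 < ν)
    {M : ℝ → (EuclideanSpace ℂ (Fin n) →L[ℂ] EuclideanSpace ℂ (Fin n))}
    (hM : Continuous M)
    (hMb : ∀ x : ℝ, ‖M x‖ ≤ C * Real.sqrt (1 + x ^ 2) ^ (-(2 + ν))) :
    ∫ x : ℝ, ‖M x‖ ≤ C * Real.pi := by
  calc ∫ x : ℝ, ‖M x‖ ≤ ∫ x : ℝ, C * (1 + x ^ 2)⁻¹ :=
        integral_mono (g_int hC hν hM hMb) (integrable_inv_one_add_sq.const_mul C)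
          (fun x => (hMb x).trans (mul_le_mul_of_nonneg_left (key1 hν x) hC.le))
    _ = C * Real.pi := by rw [integral_const_mul, integral_univ_inv_one_add_sq]

lemma F_le {n : ℕ} {C ν : ℝ} (hC : 0 < C) (hν : 0 < ν)
    {M : ℝ → (EuclideanSpace ℂ (Fin n) →L[ℂ] EuclideanSpace ℂ (Fin n))}
    (hM : Continuous M)
    (hMb : ∀ x : ℝ, ‖M x‖ ≤ C * Real.sqrt (1 + x ^ 2) ^ (-(2 + ν)))
    {x y : ℝ} (hxy : x ≤ y) :
    ∫ t in x..y, ‖M t‖ ≤ ∫ t : ℝ, ‖M t‖ := by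
  rw [intervalIntegral.integral_of_le hxy]
  exact setIntegral_le_integral (g_int hC hν hM hMb)
    (ae_of_all _ fun t => norm_nonneg _)

lemma auxPos (C ν b : ℝ) (hC : 0 < C) (hν : 0 < ν) (hb : 0 ≤ b) (n : ℕ)
    (M : ℝ → (EuclideanSpace ℂ (Fin n) →L[ℂ] EuclideanSpace ℂ (Fin n)))
    (c : ℝ → EuclideanSpace ℂ (Fin n)) (hM : Continuous M)
    (hMb : ∀ x : ℝ, ‖M x‖ ≤ C * Real.sqrt (1 + x ^ 2) ^ (-(2 + ν)))
    (hc : ∀ x : ℝ, HasDerivAt c ((M x) (c x)) x) (hc0 : ‖c 0‖ = b) :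
    ∃ L : EuclideanSpace ℂ (Fin n), Tendsto c atTop (nhds L) ∧
      ∀ x : ℝ, 0 ≤ x → ‖c x - L‖ ≤
        (Real.exp (C * Real.pi) * b * C * Real.sqrt 2 ^ (2 + ν) / (1 + ν))
          * Real.sqrt (1 + x ^ 2) ^ (-(1 + ν)) := by
  have hccont : Continuous c := by
    rw [continuous_iff_continuousAt]; exact fun x => (hc x).continuousAt
  set f : ℝ → EuclideanSpace ℂ (Fin n) := fun t => (M t) (c t) with hf_def
  have hfcont : Continuous f := hM.clm_apply hccont
  set B : ℝ := Real.exp (C * Real.pi) * b with hB_def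
  have hB0 : 0 ≤ B := by positivity
  have hcB : ∀ t : ℝ, 0 ≤ t → ‖c t‖ ≤ B := by
    intro t ht
    calc ‖c t‖ ≤ Real.exp (∫ s in (0:ℝ)..t, ‖M s‖) * ‖c 0‖ := bound_pos hM hc ht
      _ ≤ B := by
          rw [hc0, hB_def]
          apply mul_le_mul_of_nonneg_right _ hb
          exact Real.exp_le_exp.mpr ((F_le hC hν hM hMb ht).trans (g_int_le hC hν hM hMb))
  set A : ℝ := Real.exp (C * Real.pi) * b * C * Real.sqrt 2 ^ (2 + ν) with hA_def
  have hA0 : 0 ≤ A := by positivity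
  have hfB : ∀ t : ℝ, 0 ≤ t → ‖f t‖ ≤ A * (1 + t) ^ (-(2 + ν)) := by
    intro t ht
    calc ‖f t‖ ≤ ‖M t‖ * ‖c t‖ := (M t).le_opNorm (c t)
      _ ≤ (C * Real.sqrt (1 + t ^ 2) ^ (-(2 + ν))) * B := by
          apply mul_le_mul (hMb t) (hcB t ht) (norm_nonneg _)
          positivity
      _ ≤ (C * (Real.sqrt 2 ^ (2 + ν) * (1 + t) ^ (-(2 + ν)))) * B := by
          apply mul_le_mul_of_nonneg_right _ hB0
          exact mul_le_mul_of_nonneg_left (key2 hν ht) hC.le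
      _ = A * (1 + t) ^ (-(2 + ν)) := by rw [hA_def, hB_def]; ring
  -- integrability of f on Ioi 0
  have hfb2 : ∀ t : ℝ, 0 ≤ t → ‖f t‖ ≤ (C * B) * (1 + t ^ 2)⁻¹ := by
    intro t ht
    calc ‖f t‖ ≤ ‖M t‖ * ‖c t‖ := (M t).le_opNorm (c t)
      _ ≤ (C * Real.sqrt (1 + t ^ 2) ^ (-(2 + ν))) * B := by
          apply mul_le_mul (hMb t) (hcB t ht) (norm_nonneg _); positivity
      _ ≤ (C * (1 + t ^ 2)⁻¹) * B := by
          apply mul_le_mul_of_nonneg_right _ hB0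
          exact mul_le_mul_of_nonneg_left (key1 hν t) hC.le
      _ = (C * B) * (1 + t ^ 2)⁻¹ := by ring
  have hfint : IntegrableOn f (Set.Ioi (0:ℝ)) := by
    apply Integrable.mono' (((integrable_inv_one_add_sq).const_mul (C * B)).integrableOn)
      hfcont.aestronglyMeasurable.restrict
    rw [ae_restrict_iff' measurableSet_Ioi]
    exact ae_of_all _ fun t ht => hfb2 t (le_of_lt ht)
  have hrep : ∀ y : ℝ, c y = c 0 + ∫ t in (0:ℝ)..y, f t := by
    intro y
    have h := intervalIntegral.integral_eq_sub_of_hasDerivAt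
      (fun t _ => hc t) (hfcont.intervalIntegrable 0 y)
    rw [h]; abel
  set L : EuclideanSpace ℂ (Fin n) := c 0 + ∫ t in Set.Ioi (0:ℝ), f t with hL_def
  have hten : Tendsto c atTop (nhds L) := by
    have h1 := MeasureTheory.intervalIntegral_tendsto_integral_Ioi 0 hfint tendsto_id
    exact (tendsto_const_nhds.add h1).congr (fun y => (hrep y).symm)
  refine ⟨L, hten, ?_⟩
  intro x hx
  set p : ℝ := -(1 + ν) with hp_def
  set H : ℝ → ℝ := fun u => -((1 + u) ^ p / (1 + ν)) with hH_def
  have hHd : ∀ t : ℝ, 0 ≤ t → HasDerivAt H ((1 + t) ^ (-(2 + ν))) t := by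
    intro t ht
    have h1t : (0:ℝ) < 1 + t := by linarith
    have h0 : HasDerivAt (fun u : ℝ => 1 + u) 1 t := (hasDerivAt_id t).const_add 1
    have h1 : HasDerivAt (fun u : ℝ => (1 + u) ^ p) (1 * p * (1 + t) ^ (p - 1)) t :=
      h0.rpow_const (Or.inl h1t.ne')
    have h2 := (h1.div_const (1 + ν)).neg
    refine h2.congr_deriv ?_
    rw [show p - 1 = -(2 + ν) by rw [hp_def]; ring]
    field_simp [hp_def]
    ring
  have hcont2 : ∀ {u v : ℝ}, 0 ≤ u → u ≤ v →
      IntervalIntegrable (fun t : ℝ => (1 + t) ^ (-(2 + ν))) volume u v := by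
    intro u v hu huv
    apply ContinuousOn.intervalIntegrable
    apply ContinuousOn.rpow_const
    · exact (continuous_const.add continuous_id).continuousOn
    · intro t ht
      rw [Set.uIcc_of_le huv] at ht
      left
      have : (0:ℝ) < 1 + t := by linarith [ht.1]
      exact this.ne'
  have hkey : ∀ y : ℝ, x ≤ y →
      ‖c y - c x‖ ≤ A / (1 + ν) * (1 + x) ^ (-(1 + ν)) := by
    intro y hxy
    have e1 : c y - c x = ∫ t in x..y, f t := by
      rw [hrep y, hrep x, add_sub_add_left_eq_sub,
        intervalIntegral.integral_interval_sub_left (hfcont.intervalIntegrable 0 y)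
          (hfcont.intervalIntegrable 0 x)]
    have hH0 : (0:ℝ) < 1 + x := by linarith
    calc ‖c y - c x‖ = ‖∫ t in x..y, f t‖ := by rw [e1]
      _ ≤ ∫ t in x..y, ‖f t‖ := intervalIntegral.norm_integral_le_integral_norm hxy
      _ ≤ ∫ t in x..y, A * (1 + t) ^ (-(2 + ν)) := by
          apply intervalIntegral.integral_mono_on hxy
            (hfcont.norm.intervalIntegrable x y)
            ((hcont2 hx hxy).const_mul A)
          intro t ht
          exact hfB t (le_trans hx ht.1)
      _ = A * ∫ t in x..y, (1 + t) ^ (-(2 + ν)) := by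
          rw [intervalIntegral.integral_const_mul]
      _ = A * (H y - H x) := by
          rw [intervalIntegral.integral_eq_sub_of_hasDerivAt
            (fun t ht => hHd t (by rw [Set.uIcc_of_le hxy] at ht; linarith [ht.1]))
            (hcont2 hx hxy)]
      _ ≤ A * (0 - H x) := by
          apply mul_le_mul_of_nonneg_left _ hA0
          have : H y ≤ 0 := by
            rw [hH_def]
            simp only [neg_nonpos]
            exact div_nonneg (Real.rpow_nonneg (by linarith) _) (by linarith)
          linarith
      _ = A / (1 + ν) * (1 + x) ^ (-(1 + ν)) := by
          rw [hH_def, hp_def]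
          ring
  have hlim : ‖L - c x‖ ≤ A / (1 + ν) * (1 + x) ^ (-(1 + ν)) :=
    le_of_tendsto ((hten.sub_const (c x)).norm)
      ((eventually_ge_atTop x).mono (fun y hy => hkey y hy))
  calc ‖c x - L‖ = ‖L - c x‖ := norm_sub_rev _ _
    _ ≤ A / (1 + ν) * (1 + x) ^ (-(1 + ν)) := hlim
    _ ≤ A / (1 + ν) * Real.sqrt (1 + x ^ 2) ^ (-(1 + ν)) :=
        mul_le_mul_of_nonneg_left (key3 hν hx) (by positivity)



/-- Let `n ∈ ℕ`, `ν > 0`, `C > 0`, and let `M : ℝ → (ℂⁿ →L ℂⁿ)` be continuous with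
`‖M x‖ ≤ C⟨x⟩^{-(2+ν)}` (operator norm). Let `c : ℝ → ℂⁿ` be differentiable with
`c′(x) = M(x) c(x)`. Then
(i) `‖c x‖ ≤ exp(∫ ‖M‖) ‖c 0‖` for all `x`;
(ii) the limits `c(±∞)` exist; and
(iii) there is `C′` depending only on `C, ν, ‖c 0‖` with
`‖c x − c(+∞)‖ ≤ C′⟨x⟩^{-(1+ν)}` for `x ≥ 0` and `‖c x − c(−∞)‖ ≤ C′⟨x⟩^{-(1+ν)}`
for `x ≤ 0`. -/
theorem stmt_3 (C ν b : ℝ) (hC : 0 < C) (hν : 0 < ν) (hb : 0 ≤ b) :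
    ∃ C' : ℝ,
      ∀ (n : ℕ)
        (M : ℝ → (EuclideanSpace ℂ (Fin n) →L[ℂ] EuclideanSpace ℂ (Fin n)))
        (c : ℝ → EuclideanSpace ℂ (Fin n)),
        Continuous M →
        (∀ x : ℝ, ‖M x‖ ≤ C * Real.sqrt (1 + x ^ 2) ^ (-(2 + ν))) →
        (∀ x : ℝ, HasDerivAt c ((M x) (c x)) x) →
        ‖c 0‖ = b →
        (∀ x : ℝ, ‖c x‖ ≤ Real.exp (∫ y : ℝ, ‖M y‖) * ‖c 0‖) ∧
        ∃ cplus cminus : EuclideanSpace ℂ (Fin n),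
          Tendsto c atTop (nhds cplus) ∧
          Tendsto c atBot (nhds cminus) ∧
          (∀ x : ℝ, 0 ≤ x → ‖c x - cplus‖ ≤ C' * Real.sqrt (1 + x ^ 2) ^ (-(1 + ν))) ∧
          (∀ x : ℝ, x ≤ 0 → ‖c x - cminus‖ ≤ C' * Real.sqrt (1 + x ^ 2) ^ (-(1 + ν))) := by
  refine ⟨Real.exp (C * Real.pi) * b * C * Real.sqrt 2 ^ (2 + ν) / (1 + ν), ?_⟩
  intro n M c hM hMb hc hc0
  -- reflected system
  set Mr : ℝ → (EuclideanSpace ℂ (Fin n) →L[ℂ] EuclideanSpace ℂ (Fin n)) :=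
    fun x => -(M (-x)) with hMr_def
  set cr : ℝ → EuclideanSpace ℂ (Fin n) := fun x => c (-x) with hcr_def
  have hMr : Continuous Mr := (hM.comp continuous_neg).neg
  have hMrb : ∀ x : ℝ, ‖Mr x‖ ≤ C * Real.sqrt (1 + x ^ 2) ^ (-(2 + ν)) := by
    intro x
    rw [hMr_def]
    simp only [norm_neg]
    have := hMb (-x)
    rwa [neg_pow, show ((-1:ℝ))^2 = 1 by norm_num, one_mul] at this
  have hcr : ∀ x : ℝ, HasDerivAt cr ((Mr x) (cr x)) x := by
    intro x
    have h := HasDerivAt.scomp x (hc (-x)) (hasDerivAt_neg x)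
    simp only [Function.comp_def] at h
    refine h.congr_deriv ?_
    simp [hMr_def, hcr_def]
  have hcr0 : ‖cr 0‖ = b := by rw [hcr_def]; simpa using hc0
  constructor
  · -- part (i)
    intro x
    rcases le_total 0 x with hx | hx
    · calc ‖c x‖ ≤ Real.exp (∫ t in (0:ℝ)..x, ‖M t‖) * ‖c 0‖ := bound_pos hM hc hx
        _ ≤ Real.exp (∫ y : ℝ, ‖M y‖) * ‖c 0‖ :=
            mul_le_mul_of_nonneg_right
              (Real.exp_le_exp.mpr (F_le hC hν hM hMb hx)) (norm_nonneg _)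
    · have hx' : (0:ℝ) ≤ -x := by linarith
      have h := bound_pos hMr hcr hx'
      have hval : cr (-x) = c x := by rw [hcr_def]; simp
      have hint : ∫ t in (0:ℝ)..(-x), ‖Mr t‖ = ∫ t in x..(0:ℝ), ‖M t‖ := by
        have : (fun t : ℝ => ‖Mr t‖) = fun t => ‖M (-t)‖ := by
          funext t
          show ‖-(M (-t))‖ = ‖M (-t)‖
          exact norm_neg _
        rw [this, intervalIntegral.integral_comp_neg (fun t => ‖M t‖), neg_neg, neg_zero]
      rw [hval, hcr0, hint] at h
      calc ‖c x‖ ≤ Real.exp (∫ t in x..(0:ℝ), ‖M t‖) * b := h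
        _ ≤ Real.exp (∫ y : ℝ, ‖M y‖) * ‖c 0‖ := by
            rw [hc0]
            exact mul_le_mul_of_nonneg_right
              (Real.exp_le_exp.mpr (F_le hC hν hM hMb hx)) hb
  · obtain ⟨cplus, hten, hrate⟩ := auxPos C ν b hC hν hb n M c hM hMb hc hc0
    obtain ⟨cminus, htenr, hrater⟩ := auxPos C ν b hC hν hb n Mr cr hMr hMrb hcr hcr0
    refine ⟨cplus, cminus, hten, ?_, hrate, ?_⟩
    · have h := htenr.comp tendsto_neg_atBot_atTop
      refine h.congr (fun x => ?_)
      rw [Function.comp_apply, hcr_def]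
      simp
    · intro x hx
      have hx' : (0:ℝ) ≤ -x := by linarith
      have h := hrater (-x) hx'
      rw [hcr_def] at h
      simp only [neg_neg] at h
      rwa [neg_pow, show ((-1:ℝ))^2 = 1 by norm_num, one_mul] at h
end

section
/- There exist C > 0 and δ₁ ∈ (0,δ₀], depending only on L, K, m₀ and Δ, such that for all δ ∈ (0,δ₁] and all E ∈ Δ: |∫₀¹ (2(E − w(t)))^{-1/2} ζ′(t) dt − (2(E − e_c))^{-3/2} ∫₀¹ w(t) ζ′(t) dt| ≤ C δ³ and |∫₀¹ (2(E − w(t)))^{-3/2} ζ′(t) dt − 3·(2(E − e_c))^{-5/2} ∫₀¹ w(t) ζ′(t) dt| ≤ C δ³. -/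
open Complex Set intervalIntegral

private lemma hasDerivAt_aux (E : ℝ) (p : ℂ) (z : ℂ) (hz : 0 < (2*((E:ℂ) - z)).re) :
    HasDerivAt (fun y : ℂ => (2*((E:ℂ) - y))^p) (-2*p*(2*((E:ℂ)-z))^(p-1)) z := by
  have h1 : HasDerivAt (fun y : ℂ => 2*((E:ℂ) - y)) (-2) z := by
    simpa using (((hasDerivAt_id z).const_sub (E:ℂ)).const_mul 2)
  have h2 := h1.cpow_const (c := p) (Or.inl hz)
  convert h2 using 1
  ring

private lemma norm_aux (m₀ : ℝ) (hm : 0 < m₀) (q : ℂ) (hq : q.im = 0) (hqre : q.re ≤ 0)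
    (u : ℂ) (hu : m₀ ≤ u.re) : ‖u ^ q‖ ≤ m₀ ^ q.re := by
  have h1 : m₀ ≤ ‖u‖ := le_trans hu (Complex.re_le_norm u)
  calc ‖u ^ q‖ ≤ ‖u‖ ^ q.re / Real.exp (u.arg * q.im) := Complex.norm_cpow_le u q
    _ = ‖u‖ ^ q.re := by rw [hq]; simp
    _ ≤ m₀ ^ q.re := Real.rpow_le_rpow_of_nonpos hm h1 hqre

private lemma re_aux (E ec m₀ : ℝ) (hE : m₀ ≤ E - ec) (z : ℂ)
    (hz : ‖z - (ec:ℂ)‖ ≤ m₀/2) : m₀ ≤ (2*((E:ℂ) - z)).re := by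
  have h1 : |z.re - ec| ≤ m₀/2 := by
    have := Complex.abs_re_le_norm (z - ec)
    simp only [Complex.sub_re, Complex.ofReal_re] at this
    exact le_trans this hz
  have h2 : (2*((E:ℂ) - z)).re = 2*(E - z.re) := by simp
  rw [h2]
  have := abs_le.mp h1
  linarith [this.2]

private lemma taylor_aux (E ec m₀ : ℝ) (hm : 0 < m₀) (hE : m₀ ≤ E - ec)
    (p : ℂ) (hpim : p.im = 0) (hpre : p.re ≤ 0)
    (z : ℂ) (hz : ‖z - (ec:ℂ)‖ ≤ m₀/2) :
    ‖(2*((E:ℂ) - z))^p - (2*((E:ℂ) - (ec:ℂ)))^p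
        - (-2*p*(2*((E:ℂ)-(ec:ℂ)))^(p-1)) * (z - ec)‖
      ≤ (4*‖p‖*‖p-1‖*m₀^(p.re-2)) * ‖z - (ec:ℂ)‖^2 := by
  set r := ‖z - (ec:ℂ)‖ with hr
  have hr0 : 0 ≤ r := norm_nonneg _
  set s : Set ℂ := Metric.closedBall (ec:ℂ) r with hs
  have hecs : (ec:ℂ) ∈ s := Metric.mem_closedBall_self hr0
  have hzs : z ∈ s := by simp [hs, Metric.mem_closedBall, dist_eq_norm, hr]
  have hmem : ∀ y ∈ s, ‖y - (ec:ℂ)‖ ≤ m₀/2 := by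
    intro y hy
    have : ‖y - (ec:ℂ)‖ ≤ r := by simpa [hs, Metric.mem_closedBall, dist_eq_norm] using hy
    exact le_trans this hz
  have hrepos : ∀ y ∈ s, 0 < (2*((E:ℂ) - y)).re := fun y hy =>
    lt_of_lt_of_le hm (re_aux E ec m₀ hE y (hmem y hy))
  have hconv : Convex ℝ s := convex_closedBall _ _
  set B : ℝ := 2*‖p-1‖*m₀^(p.re-2) with hB
  have hB0 : 0 ≤ B := by positivity
  have hinner : ∀ y ∈ s, ‖(2*((E:ℂ) - y))^(p-1) - (2*((E:ℂ) - (ec:ℂ)))^(p-1)‖ ≤ B * r := by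
    intro y hy
    have key := hconv.norm_image_sub_le_of_norm_hasDerivWithin_le
      (f := fun y : ℂ => (2*((E:ℂ) - y))^(p-1))
      (f' := fun y : ℂ => -2*(p-1)*(2*((E:ℂ)-y))^(p-1-1))
      (C := B)
      (fun x hx => (hasDerivAt_aux E (p-1) x (hrepos x hx)).hasDerivWithinAt)
      (fun x hx => by
        show ‖-2*(p-1)*(2*((E:ℂ)-x))^(p-1-1)‖ ≤ B
        have e1 : (p-1-1).re = p.re - 2 := by simp; ring
        have h1 : ‖(2*((E:ℂ)-x))^(p-1-1)‖ ≤ m₀^(p.re-2) := by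
          have := norm_aux m₀ hm (p-1-1) (by simp [hpim]) (by rw [e1]; linarith)
            (2*((E:ℂ)-x)) (re_aux E ec m₀ hE x (hmem x hx))
          rwa [e1] at this
        calc ‖-2*(p-1)*(2*((E:ℂ)-x))^(p-1-1)‖
            = 2*‖p-1‖*‖(2*((E:ℂ)-x))^(p-1-1)‖ := by
              rw [norm_mul, norm_mul]; norm_num
          _ ≤ 2*‖p-1‖*m₀^(p.re-2) := mul_le_mul_of_nonneg_left h1 (by positivity)
          _ = B := rfl)
      hecs hy
    have key' : ‖(2*((E:ℂ) - y))^(p-1) - (2*((E:ℂ) - (ec:ℂ)))^(p-1)‖ ≤ B * ‖y - (ec:ℂ)‖ := key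
    calc ‖(2*((E:ℂ) - y))^(p-1) - (2*((E:ℂ) - (ec:ℂ)))^(p-1)‖ ≤ B * ‖y - (ec:ℂ)‖ := key'
      _ ≤ B * r := mul_le_mul_of_nonneg_left (by simpa [hs, Metric.mem_closedBall, dist_eq_norm] using hy) hB0
  set c : ℂ := -2*p*(2*((E:ℂ)-(ec:ℂ)))^(p-1) with hc
  have houter := hconv.norm_image_sub_le_of_norm_hasDerivWithin_le
    (f := fun y : ℂ => (2*((E:ℂ) - y))^p - c * y)
    (f' := fun y : ℂ => -2*p*(2*((E:ℂ)-y))^(p-1) - c)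
    (C := 2*‖p‖*(B*r))
    (fun x hx => ((hasDerivAt_aux E p x (hrepos x hx)).sub
      ((hasDerivAt_id x).const_mul c)).hasDerivWithinAt.congr_deriv (by ring))
    (fun x hx => by
      show ‖-2*p*(2*((E:ℂ)-x))^(p-1) - c‖ ≤ 2*‖p‖*(B*r)
      have e2 : -2*p*(2*((E:ℂ)-x))^(p-1) - c
          = (-2*p) * ((2*((E:ℂ)-x))^(p-1) - (2*((E:ℂ)-(ec:ℂ)))^(p-1)) := by
        rw [hc]; ring
      rw [e2, norm_mul]
      have h2 : ‖(-2 : ℂ)*p‖ = 2*‖p‖ := by rw [norm_mul]; norm_num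
      rw [h2]
      exact mul_le_mul_of_nonneg_left (hinner x hx) (by positivity))
    hecs hzs
  have houter' : ‖((2*((E:ℂ) - z))^p - c*z) - ((2*((E:ℂ)-(ec:ℂ)))^p - c*ec)‖
      ≤ 2*‖p‖*(B*r) * ‖z - (ec:ℂ)‖ := houter
  have heq : ((2*((E:ℂ) - z))^p - c * z) - ((2*((E:ℂ) - (ec:ℂ)))^p - c * ec)
      = (2*((E:ℂ) - z))^p - (2*((E:ℂ) - (ec:ℂ)))^p - c * (z - ec) := by ring
  rw [heq] at houter'
  calc ‖(2*((E:ℂ) - z))^p - (2*((E:ℂ) - (ec:ℂ)))^p - c * (z - ec)‖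
      ≤ 2*‖p‖*(B*r) * ‖z - (ec:ℂ)‖ := houter'
    _ = (4*‖p‖*‖p-1‖*m₀^(p.re-2)) * r^2 := by rw [hB]; ring

private lemma integral_aux (E ec m₀ L K δ : ℝ) (hm : 0 < m₀) (hE : m₀ ≤ E - ec)
    (hδ : 0 < δ) (hK : 0 < K)
    (p : ℂ) (hpim : p.im = 0) (hpre : p.re ≤ 0)
    (ζ dζ w : ℝ → ℂ)
    (hζd : ∀ t ∈ Set.Icc (0:ℝ) 1, HasDerivWithinAt ζ (dζ t) (Set.Icc (0:ℝ) 1) t)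
    (hdζc : ContinuousOn dζ (Set.Icc (0:ℝ) 1))
    (hclosed : ζ 0 = ζ 1)
    (harc : (∫ t in (0:ℝ)..1, ‖dζ t‖) ≤ L * δ)
    (hwc : ContinuousOn w (Set.Icc (0:ℝ) 1))
    (hwb : ∀ t ∈ Set.Icc (0:ℝ) 1, ‖w t - (ec:ℂ)‖ ≤ K * δ)
    (hKδ : K * δ ≤ m₀ / 2) :
    ‖(∫ t in (0:ℝ)..1, (2*((E:ℂ) - w t))^p * dζ t)
       - (-2*p*(2*((E:ℂ)-(ec:ℂ)))^(p-1)) * ∫ t in (0:ℝ)..1, w t * dζ t‖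
      ≤ (4*‖p‖*‖p-1‖*m₀^(p.re-2)) * (K*δ)^2 * (L*δ) := by
  have huIcc : Set.uIcc (0:ℝ) 1 = Set.Icc (0:ℝ) 1 := Set.uIcc_of_le zero_le_one
  set c : ℂ := -2*p*(2*((E:ℂ)-(ec:ℂ)))^(p-1) with hc
  set a : ℂ := (2*((E:ℂ)-(ec:ℂ)))^p - c*ec with ha
  set M : ℝ := (4*‖p‖*‖p-1‖*m₀^(p.re-2)) * (K*δ)^2 with hM
  have hM0 : 0 ≤ M := by positivity
  have hwball : ∀ t ∈ Set.Icc (0:ℝ) 1, ‖w t - (ec:ℂ)‖ ≤ m₀/2 :=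
    fun t ht => le_trans (hwb t ht) hKδ
  have hfwc : ContinuousOn (fun t => (2*((E:ℂ) - w t))^p) (Set.Icc (0:ℝ) 1) := by
    apply ContinuousOn.cpow_const (continuousOn_const.mul (continuousOn_const.sub hwc))
    intro t ht
    exact Or.inl (lt_of_lt_of_le hm (re_aux E ec m₀ hE (w t) (hwball t ht)))
  have hI1 : IntervalIntegrable (fun t => (2*((E:ℂ) - w t))^p * dζ t)
      MeasureTheory.volume 0 1 :=
    (hfwc.mul hdζc).intervalIntegrable_of_Icc zero_le_one
  have hI2 : IntervalIntegrable (fun t => w t * dζ t) MeasureTheory.volume 0 1 :=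
    (hwc.mul hdζc).intervalIntegrable_of_Icc zero_le_one
  have hI3 : IntervalIntegrable dζ MeasureTheory.volume 0 1 :=
    hdζc.intervalIntegrable_of_Icc zero_le_one
  have hζ0 : (∫ t in (0:ℝ)..1, dζ t) = 0 := by
    have := integral_eq_sub_of_hasDeriv_right_of_le zero_le_one
      (fun t ht => (hζd t ht).continuousWithinAt)
      (fun t ht => (hζd t (Set.mem_Icc_of_Ioo ht)).mono_of_mem_nhdsWithin
        (Icc_mem_nhdsGT_of_mem ⟨ht.1.le, ht.2⟩))
      hI3
    rw [this, ← hclosed, sub_self]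
  have key : (∫ t in (0:ℝ)..1, (2*((E:ℂ) - w t))^p * dζ t)
      - c * ∫ t in (0:ℝ)..1, w t * dζ t
    = ∫ t in (0:ℝ)..1,
        ((2*((E:ℂ) - w t))^p - (2*((E:ℂ) - (ec:ℂ)))^p - c * (w t - ec)) * dζ t := by
    have hfun : ∀ t : ℝ,
        ((2*((E:ℂ) - w t))^p - (2*((E:ℂ) - (ec:ℂ)))^p - c * (w t - ec)) * dζ t
        = (2*((E:ℂ) - w t))^p * dζ t - c * (w t * dζ t) - a * dζ t := by
      intro t; rw [ha]; ring
    rw [intervalIntegral.integral_congr (fun t _ => hfun t),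
      intervalIntegral.integral_sub ((hI1.sub (hI2.const_mul c))) (hI3.const_mul a),
      intervalIntegral.integral_sub hI1 (hI2.const_mul c),
      intervalIntegral.integral_const_mul, intervalIntegral.integral_const_mul, hζ0]
    ring
  rw [key]
  have hRc : ContinuousOn (fun t =>
      (2*((E:ℂ) - w t))^p - (2*((E:ℂ) - (ec:ℂ)))^p - c * (w t - ec)) (Set.Icc (0:ℝ) 1) :=
    (hfwc.sub continuousOn_const).sub (continuousOn_const.mul (hwc.sub continuousOn_const))
  have hIR : IntervalIntegrable (fun t =>
      ‖((2*((E:ℂ) - w t))^p - (2*((E:ℂ) - (ec:ℂ)))^p - c * (w t - ec)) * dζ t‖)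
      MeasureTheory.volume 0 1 :=
    ((hRc.mul hdζc).norm).intervalIntegrable_of_Icc zero_le_one
  have hIn : IntervalIntegrable (fun t => M * ‖dζ t‖) MeasureTheory.volume 0 1 :=
    (hdζc.norm.intervalIntegrable_of_Icc zero_le_one).const_mul M
  calc ‖∫ t in (0:ℝ)..1,
        ((2*((E:ℂ) - w t))^p - (2*((E:ℂ) - (ec:ℂ)))^p - c * (w t - ec)) * dζ t‖
      ≤ ∫ t in (0:ℝ)..1,
        ‖((2*((E:ℂ) - w t))^p - (2*((E:ℂ) - (ec:ℂ)))^p - c * (w t - ec)) * dζ t‖ :=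
        intervalIntegral.norm_integral_le_integral_norm zero_le_one
    _ ≤ ∫ t in (0:ℝ)..1, M * ‖dζ t‖ := by
        apply intervalIntegral.integral_mono_on zero_le_one hIR hIn
        intro t ht
        rw [norm_mul]
        apply mul_le_mul_of_nonneg_right _ (norm_nonneg _)
        calc ‖(2*((E:ℂ) - w t))^p - (2*((E:ℂ) - (ec:ℂ)))^p - c * (w t - ec)‖
            ≤ (4*‖p‖*‖p-1‖*m₀^(p.re-2)) * ‖w t - (ec:ℂ)‖^2 :=
              taylor_aux E ec m₀ hm hE p hpim hpre (w t) (hwball t ht)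
          _ ≤ M := by
              rw [hM]
              apply mul_le_mul_of_nonneg_left _ (by positivity)
              have := hwb t ht
              have h0 : (0:ℝ) ≤ ‖w t - (ec:ℂ)‖ := norm_nonneg _
              nlinarith
    _ = M * ∫ t in (0:ℝ)..1, ‖dζ t‖ := intervalIntegral.integral_const_mul M _
    _ ≤ M * (L * δ) := mul_le_mul_of_nonneg_left harc hM0
    _ = (4*‖p‖*‖p-1‖*m₀^(p.re-2)) * (K*δ)^2 * (L*δ) := by rw [hM]


/-- Same setting as Statement 7.  There exist `C > 0` and `δ₁ ∈ (0,δ₀]`, depending only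
on `L, K, m₀, Δ`, such that for all `δ ∈ (0,δ₁]` and all `E ∈ Δ`:
`|∫₀¹ (2(E−w))^{-1/2} ζ′ dt − (2(E−e_c))^{-3/2} ∫₀¹ w ζ′ dt| ≤ Cδ³` and
`|∫₀¹ (2(E−w))^{-3/2} ζ′ dt − 3(2(E−e_c))^{-5/2} ∫₀¹ w ζ′ dt| ≤ Cδ³`. -/
theorem stmt_8 (E₁ E₂ ec m₀ L K δ₀ : ℝ)
    (h12 : E₁ ≤ E₂) (hm₀ : 0 < m₀) (hgap : ∀ E ∈ Set.Icc E₁ E₂, m₀ ≤ E - ec)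
    (hL : 0 < L) (hK : 0 < K) (hδ₀ : 0 < δ₀) :
    ∃ C : ℝ, 0 < C ∧ ∃ δ₁ ∈ Set.Ioc (0 : ℝ) δ₀,
      ∀ ζ dζ w : ℝ → ℝ → ℂ,
        (∀ δ ∈ Set.Ioc (0 : ℝ) δ₀,
          (∀ t ∈ Set.Icc (0 : ℝ) 1,
            HasDerivWithinAt (ζ δ) (dζ δ t) (Set.Icc (0 : ℝ) 1) t) ∧
          ContinuousOn (dζ δ) (Set.Icc (0 : ℝ) 1) ∧
          ζ δ 0 = ζ δ 1 ∧
          (∫ t in (0 : ℝ)..1, ‖dζ δ t‖) ≤ L * δ ∧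
          ContinuousOn (w δ) (Set.Icc (0 : ℝ) 1) ∧
          (∀ t ∈ Set.Icc (0 : ℝ) 1, ‖w δ t - (ec : ℂ)‖ ≤ K * δ)) →
        ∀ δ ∈ Set.Ioc (0 : ℝ) δ₁, ∀ E ∈ Set.Icc E₁ E₂,
          ‖(∫ t in (0 : ℝ)..1, (2 * ((E : ℂ) - w δ t)) ^ (-(1 / 2) : ℂ) * dζ δ t)
              - ((2 * (E - ec) : ℝ) : ℂ) ^ (-(3 / 2) : ℂ) *
                  ∫ t in (0 : ℝ)..1, w δ t * dζ δ t‖ ≤ C * δ ^ 3 ∧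
          ‖(∫ t in (0 : ℝ)..1, (2 * ((E : ℂ) - w δ t)) ^ (-(3 / 2) : ℂ) * dζ δ t)
              - 3 * ((2 * (E - ec) : ℝ) : ℂ) ^ (-(5 / 2) : ℂ) *
                  ∫ t in (0 : ℝ)..1, w δ t * dζ δ t‖ ≤ C * δ ^ 3 := by
  refine ⟨(3 * m₀ ^ (-(5/2):ℝ) + 15 * m₀ ^ (-(7/2):ℝ)) * (K^2 * L), by positivity,
    min δ₀ (m₀/(2*K)), ⟨lt_min hδ₀ (by positivity), min_le_left _ _⟩, ?_⟩
  intro ζ dζ w hcurve δ hδ E hEmem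
  have hδpos : 0 < δ := hδ.1
  have hδδ₀ : δ ≤ δ₀ := le_trans hδ.2 (min_le_left _ _)
  have hKδ : K * δ ≤ m₀ / 2 := by
    have h1 : δ ≤ m₀/(2*K) := le_trans hδ.2 (min_le_right _ _)
    have := mul_le_mul_of_nonneg_left h1 hK.le
    calc K * δ ≤ K * (m₀/(2*K)) := this
      _ = m₀ / 2 := by field_simp
  obtain ⟨hζd, hdζc, hclosed, harc, hwc, hwb⟩ := hcurve δ ⟨hδpos, hδδ₀⟩
  have hE := hgap E hEmem
  -- exponent facts
  have he1 : (-(1/2) : ℂ) = ((-(1/2) : ℝ) : ℂ) := by norm_num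
  have he2 : (-(3/2) : ℂ) = ((-(3/2) : ℝ) : ℂ) := by norm_num
  have him1 : (-(1/2) : ℂ).im = 0 := by rw [he1]; simp
  have hre1 : (-(1/2) : ℂ).re = -(1/2) := by rw [he1]; simp
  have him2 : (-(3/2) : ℂ).im = 0 := by rw [he2]; simp
  have hre2 : (-(3/2) : ℂ).re = -(3/2) := by rw [he2]; simp
  have hn1 : ‖(-(1/2) : ℂ)‖ = 1/2 := by rw [he1, Complex.norm_real]; norm_num
  have hn1' : ‖(-(1/2) : ℂ) - 1‖ = 3/2 := by
    rw [show (-(1/2) : ℂ) - 1 = ((-(3/2):ℝ):ℂ) by push_cast; ring, Complex.norm_real]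
    norm_num
  have hn2 : ‖(-(3/2) : ℂ)‖ = 3/2 := by rw [he2, Complex.norm_real]; norm_num
  have hn2' : ‖(-(3/2) : ℂ) - 1‖ = 5/2 := by
    rw [show (-(3/2) : ℂ) - 1 = ((-(5/2):ℝ):ℂ) by push_cast; ring, Complex.norm_real]
    norm_num
  have hbase : ((2 * (E - ec) : ℝ) : ℂ) = 2*((E:ℂ)-(ec:ℂ)) := by push_cast; ring
  constructor
  · have hb := integral_aux E ec m₀ L K δ hm₀ hE hδpos hK (-(1/2) : ℂ)
      him1 (by rw [hre1]; norm_num) (ζ δ) (dζ δ) (w δ) hζd hdζc hclosed harc hwc hwb hKδ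
    have hcoef : ((2 * (E - ec) : ℝ) : ℂ) ^ (-(3/2) : ℂ)
        = -2*(-(1/2) : ℂ)*(2*((E:ℂ)-(ec:ℂ)))^((-(1/2) : ℂ)-1) := by
      rw [hbase, show ((-(1/2) : ℂ)-1) = (-(3/2):ℂ) by norm_num,
        show (-2*(-(1/2) : ℂ)) = 1 by norm_num, one_mul]
    rw [hcoef]
    refine le_trans hb ?_
    rw [hn1, hn1', hre1]
    rw [show (-(1/2) : ℝ) - 2 = -(5/2) by norm_num]
    have hpos : (0:ℝ) < m₀ ^ (-(7/2):ℝ) := Real.rpow_pos_of_pos hm₀ _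
    nlinarith [Real.rpow_pos_of_pos hm₀ (-(5/2):ℝ), pow_pos hδpos 3,
      mul_pos (mul_pos (pow_pos hK 2) hL) (pow_pos hδpos 3)]
  · have hb := integral_aux E ec m₀ L K δ hm₀ hE hδpos hK (-(3/2) : ℂ)
      him2 (by rw [hre2]; norm_num) (ζ δ) (dζ δ) (w δ) hζd hdζc hclosed harc hwc hwb hKδ
    have hcoef : 3 * ((2 * (E - ec) : ℝ) : ℂ) ^ (-(5/2) : ℂ)
        = -2*(-(3/2) : ℂ)*(2*((E:ℂ)-(ec:ℂ)))^((-(3/2) : ℂ)-1) := by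
      rw [hbase, show ((-(3/2) : ℂ)-1) = (-(5/2):ℂ) by norm_num,
        show (-2*(-(3/2) : ℂ)) = 3 by norm_num]
    rw [hcoef]
    refine le_trans hb ?_
    rw [hn2, hn2', hre2]
    rw [show (-(3/2) : ℝ) - 2 = -(7/2) by norm_num]
    have hpos : (0:ℝ) < m₀ ^ (-(5/2):ℝ) := Real.rpow_pos_of_pos hm₀ _
    nlinarith [Real.rpow_pos_of_pos hm₀ (-(7/2):ℝ), pow_pos hδpos 3,
      mul_pos (mul_pos (pow_pos hK 2) hL) (pow_pos hδpos 3)]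
end

section
/- Suppose in addition there are constants 0 < c₁ ≤ c₂ such that Γ₀(δ) := −Im ∫₀¹ w(t) ζ′(t) dt satisfies c₁δ² ≤ Γ₀(δ) ≤ c₂δ² for all δ ∈ (0,δ₀]. Then there exists δ₁ ∈ (0,δ₀] such that for every δ ∈ (0,δ₁] the function β(E) := Im ∫₀¹ √(2(E − w(t))) ζ′(t) dt is positive, strictly decreasing, and strictly convex on Δ. -/
open Set Complex intervalIntegral

namespace Stmt9

set_option maxHeartbeats 1000000

lemma slit_of_re {m : ℝ} {u : ℂ} (hm : 0 < m) (h : m ≤ u.re) : u ∈ Complex.slitPlane :=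
  Or.inl (lt_of_lt_of_le hm h)

lemma ne_zero_of_re {m : ℝ} {u : ℂ} (hm : 0 < m) (h : m ≤ u.re) : u ≠ 0 :=
  Complex.slitPlane_ne_zero (slit_of_re hm h)

lemma norm_ge_of_re {m : ℝ} {u : ℂ} (h : m ≤ u.re) : m ≤ ‖u‖ :=
  le_trans h (le_trans (le_abs_self _) (Complex.abs_re_le_norm u))

lemma norm_cpow_le {m : ℝ} {u : ℂ} (hm : 0 < m) (h : m ≤ u.re) {s : ℝ} (hs : s ≤ 0) :
    ‖u ^ (s:ℂ)‖ ≤ m ^ s := by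
  rw [Complex.norm_cpow_of_ne_zero (ne_zero_of_re hm h)]
  simp only [Complex.ofReal_re, Complex.ofReal_im, mul_zero, Real.exp_zero, div_one]
  exact Real.rpow_le_rpow_of_nonpos hm (norm_ge_of_re h) hs

/-- derivative in the complex variable `z` of `z ↦ (2(E-z))^c`. -/
lemma hasDerivAt_czpow (E : ℝ) (c : ℂ) {z : ℂ} (h : 2 * ((E:ℂ) - z) ∈ Complex.slitPlane) :
    HasDerivAt (fun z : ℂ => (2 * ((E:ℂ) - z)) ^ c)
      (-2 * c * (2 * ((E:ℂ) - z)) ^ (c - 1)) z := by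
  have h1 : HasDerivAt (fun z : ℂ => 2 * ((E:ℂ) - z)) (-2) z := by
    simpa using (((hasDerivAt_id z).const_sub (E:ℂ)).const_mul (2:ℂ))
  have := h1.cpow_const (c := c) h
  convert this using 1
  ring

/-- derivative in the real variable `x` of `x ↦ (2(x-z))^c`. -/
lemma hasDerivAt_cEpow (z : ℂ) (c : ℂ) {x : ℝ} (h : 2 * ((x:ℂ) - z) ∈ Complex.slitPlane) :
    HasDerivAt (fun y : ℝ => (2 * ((y:ℂ) - z)) ^ c)
      (2 * c * (2 * ((x:ℂ) - z)) ^ (c - 1)) x := by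
  have h1 : HasDerivAt (fun y : ℂ => 2 * (y - z)) (2) (x:ℂ) := by
    simpa using (((hasDerivAt_id (x:ℂ)).sub_const z).const_mul (2:ℂ))
  have h2 : HasDerivAt (fun y : ℂ => (2 * (y - z)) ^ c)
      (c * (2 * ((x:ℂ) - z)) ^ (c - 1) * 2) (x:ℂ) := h1.cpow_const h
  have := h2.comp_ofReal
  convert this using 1
  ring

/-- derivative of real rpow of `2(x-e)`. -/
lemma hasDerivAt_rpow2 (e : ℝ) (p : ℝ) {x : ℝ} (h : 0 < 2 * (x - e)) :
    HasDerivAt (fun y : ℝ => (2 * (y - e)) ^ p) (2 * p * (2 * (x - e)) ^ (p - 1)) x := by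
  have h1 : HasDerivAt (fun y : ℝ => 2 * (y - e)) 2 x := by
    simpa using ((hasDerivAt_id x).sub_const e).const_mul (2:ℝ)
  have h2 := (Real.hasDerivAt_rpow_const (x := 2 * (x - e)) (p := p) (Or.inl (ne_of_gt h))).comp x h1
  refine h2.congr_deriv ?_
  ring


lemma mvt1C {f f' : ℂ → ℂ} {s : Set ℂ} {C : ℝ} (hs : Convex ℝ s)
    (H : ∀ z ∈ s, HasDerivAt f (f' z) z) (HC : ∀ z ∈ s, ‖f' z‖ ≤ C)
    {x y : ℂ} (hx : x ∈ s) (hy : y ∈ s) : ‖f y - f x‖ ≤ C * ‖y - x‖ := by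
  refine hs.norm_image_sub_le_of_norm_hasFDerivWithin_le
    (f' := fun z => ((1 : ℂ →L[ℂ] ℂ).smulRight (f' z)).restrictScalars ℝ)
    (fun z hz => (((H z hz).hasFDerivAt).restrictScalars ℝ).hasFDerivWithinAt)
    (fun z hz => ?_) hx hy
  rw [ContinuousLinearMap.norm_restrictScalars, ContinuousLinearMap.norm_smulRight_apply]
  simpa using HC z hz

/-- second-order Taylor bound, complex domain. -/
lemma taylor2C {f f' f'' : ℂ → ℂ} {s : Set ℂ} {C : ℝ} (hs : Convex ℝ s)
    (H1 : ∀ z ∈ s, HasDerivAt f (f' z) z) (H2 : ∀ z ∈ s, HasDerivAt f' (f'' z) z)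
    (HC : ∀ z ∈ s, ‖f'' z‖ ≤ C)
    {x y : ℂ} (hx : x ∈ s) (hy : y ∈ s) :
    ‖f y - f x - f' x * (y - x)‖ ≤ C * ‖y - x‖ ^ 2 := by
  set s' := s ∩ Metric.closedBall x ‖y - x‖ with hs'
  have hs'c : Convex ℝ s' := hs.inter (convex_closedBall _ _)
  have hxs' : x ∈ s' := ⟨hx, by simp⟩
  have hys' : y ∈ s' := ⟨hy, by simp [Metric.mem_closedBall, dist_eq_norm]⟩
  have hC0 : 0 ≤ C := le_trans (norm_nonneg _) (HC x hx)
  have key : ∀ z ∈ s', ‖f' z - f' x‖ ≤ C * ‖y - x‖ := by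
    intro z hz
    have h1 := mvt1C hs H2 HC hx hz.1
    have h2 : ‖z - x‖ ≤ ‖y - x‖ := by
      have := hz.2
      rwa [Metric.mem_closedBall, dist_eq_norm] at this
    exact le_trans h1 (mul_le_mul_of_nonneg_left h2 hC0)
  have H1' : ∀ z ∈ s', HasDerivAt (fun z => f z - f' x * z) (f' z - f' x) z := by
    intro z hz
    have hid : HasDerivAt (fun z : ℂ => f' x * z) (f' x) z := by
      simpa using (hasDerivAt_id z).const_mul (f' x)
    exact (H1 z hz.1).sub hid
  have := mvt1C hs'c H1' key hxs' hys'
  have heq : f y - f' x * y - (f x - f' x * x) = f y - f x - f' x * (y - x) := by ring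
  calc ‖f y - f x - f' x * (y - x)‖ = ‖(fun z => f z - f' x * z) y - (fun z => f z - f' x * z) x‖ := by
        rw [← heq]
    _ ≤ C * ‖y - x‖ * ‖y - x‖ := this
    _ = C * ‖y - x‖ ^ 2 := by ring

/-- first-order MVT, real domain, complex valued. -/
lemma mvt1R {f f' : ℝ → ℂ} {s : Set ℝ} {C : ℝ} (hs : Convex ℝ s)
    (H : ∀ z ∈ s, HasDerivAt f (f' z) z) (HC : ∀ z ∈ s, ‖f' z‖ ≤ C)
    {x y : ℝ} (hx : x ∈ s) (hy : y ∈ s) : ‖f y - f x‖ ≤ C * |y - x| := by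
  have := hs.norm_image_sub_le_of_norm_hasDerivWithin_le
    (fun z hz => (H z hz).hasDerivWithinAt) HC hx hy
  simpa [Real.norm_eq_abs] using this

/-- second-order Taylor bound, real domain, complex valued. -/
lemma taylor2R {f f' f'' : ℝ → ℂ} {s : Set ℝ} {C : ℝ} (hs : Convex ℝ s)
    (H1 : ∀ z ∈ s, HasDerivAt f (f' z) z) (H2 : ∀ z ∈ s, HasDerivAt f' (f'' z) z)
    (HC : ∀ z ∈ s, ‖f'' z‖ ≤ C)
    {x y : ℝ} (hx : x ∈ s) (hy : y ∈ s) :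
    ‖f y - f x - ((y - x : ℝ) : ℂ) * f' x‖ ≤ C * |y - x| ^ 2 := by
  set s' := s ∩ Metric.closedBall x |y - x| with hs'
  have hs'c : Convex ℝ s' := hs.inter (convex_closedBall _ _)
  have hxs' : x ∈ s' := ⟨hx, by simp⟩
  have hys' : y ∈ s' := ⟨hy, by simp [Metric.mem_closedBall, dist_eq_norm, Real.norm_eq_abs]⟩
  have hC0 : 0 ≤ C := le_trans (norm_nonneg _) (HC x hx)
  have key : ∀ z ∈ s', ‖f' z - f' x‖ ≤ C * |y - x| := by
    intro z hz
    refine le_trans (mvt1R hs H2 HC hx hz.1) (mul_le_mul_of_nonneg_left ?_ hC0)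
    simpa [dist_eq_norm, Real.norm_eq_abs] using hz.2
  have H1' : ∀ z ∈ s', HasDerivAt (fun z : ℝ => f z - (z : ℂ) * f' x) (f' z - f' x) z := by
    intro z hz
    have h0 : HasDerivAt (fun z : ℝ => (z : ℂ) * f' x) (f' x) z := by
      have := (hasDerivAt_id z).smul_const (f' x)
      simpa [Complex.real_smul] using this
    exact (H1 z hz.1).sub h0
  have := mvt1R hs'c H1' key hxs' hys'
  have heq : f y - (y : ℂ) * f' x - (f x - (x : ℂ) * f' x)
      = f y - f x - ((y - x : ℝ) : ℂ) * f' x := by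
    push_cast; ring
  calc ‖f y - f x - ((y - x : ℝ) : ℂ) * f' x‖
      = ‖(fun z : ℝ => f z - (z : ℂ) * f' x) y - (fun z : ℝ => f z - (z : ℂ) * f' x) x‖ := by
        rw [← heq]
    _ ≤ C * |y - x| * |y - x| := this
    _ = C * |y - x| ^ 2 := by ring


lemma monoOn {f f' : ℝ → ℝ} {a b : ℝ} (H : ∀ x ∈ Icc a b, HasDerivAt f (f' x) x)
    (h0 : ∀ x ∈ Icc a b, 0 ≤ f' x) : MonotoneOn f (Icc a b) := by
  apply monotoneOn_of_deriv_nonneg (convex_Icc a b)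
  · exact fun x hx => (H x hx).continuousAt.continuousWithinAt
  · exact fun x hx =>
      (H x (interior_subset hx)).differentiableAt.differentiableWithinAt
  · intro x hx
    rw [(H x (interior_subset hx)).deriv]
    exact h0 x (interior_subset hx)

lemma antiOn {f f' : ℝ → ℝ} {a b : ℝ} (H : ∀ x ∈ Icc a b, HasDerivAt f (f' x) x)
    (h0 : ∀ x ∈ Icc a b, f' x ≤ 0) : AntitoneOn f (Icc a b) := by
  have := monoOn (f := fun x => -f x) (f' := fun x => -f' x)
    (fun x hx => (H x hx).neg) (fun x hx => neg_nonneg.mpr (h0 x hx))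
  intro x hx y hy hxy
  have h := this hx hy hxy
  simp only at h
  linarith

/-- If `f' ≥ m` pointwise (in the sense of increments of the derivative),
increments of `f` are `≥ m * (y-x)`. -/
lemma incr_of_deriv_ge {g g' : ℝ → ℝ} {a b m : ℝ}
    (H : ∀ x ∈ Icc a b, HasDerivAt g (g' x) x) (hm : ∀ x ∈ Icc a b, m ≤ g' x)
    {x y : ℝ} (hx : x ∈ Icc a b) (hy : y ∈ Icc a b) (hxy : x ≤ y) :
    m * (y - x) ≤ g y - g x := by
  have h := monoOn (f := fun t => g t - m * t) (f' := fun t => g' t - m)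
    (fun t ht => (H t ht).sub (by simpa using (hasDerivAt_id t).const_mul m))
    (fun t ht => by linarith [hm t ht]) hx hy hxy
  simp only at h
  linarith

/-- Taylor lower bound for a real function whose derivative has increments `≥ m * Δ`. -/
lemma taylor_lower {g g' : ℝ → ℝ} {a b m : ℝ}
    (H : ∀ x ∈ Icc a b, HasDerivAt g (g' x) x)
    (Hincr : ∀ x y, x ∈ Icc a b → y ∈ Icc a b → x ≤ y → m * (y - x) ≤ g' y - g' x)
    {x y : ℝ} (hx : x ∈ Icc a b) (hy : y ∈ Icc a b) :
    g y + g' y * (x - y) + (m / 2) * (x - y) ^ 2 ≤ g x := by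
  set F : ℝ → ℝ := fun t => g t - g' y * t - (m / 2) * (t - y) ^ 2 with hF
  have hF' : ∀ t ∈ Icc a b, HasDerivAt F (g' t - g' y - m * (t - y)) t := by
    intro t ht
    have h1 : HasDerivAt (fun t : ℝ => g' y * t) (g' y) t := by
      simpa using (hasDerivAt_id t).const_mul (g' y)
    have h2 : HasDerivAt (fun t : ℝ => (m / 2) * (t - y) ^ 2) (m / 2 * (2 * (t - y))) t := by
      have : HasDerivAt (fun t : ℝ => (t - y) ^ 2) (2 * (t - y)) t := by
        simpa using ((hasDerivAt_id t).sub_const y).fun_pow 2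
      simpa using this.const_mul (m / 2)
    have := ((H t ht).sub h1).sub h2
    refine this.congr_deriv ?_
    ring
  rcases le_total y x with hyx | hxy
  · -- F monotone on Icc y b
    have hyI : y ∈ Icc y b := ⟨le_refl _, hy.2⟩
    have hxI : x ∈ Icc y b := ⟨hyx, hx.2⟩
    have hsub : Icc y b ⊆ Icc a b := Icc_subset_Icc hy.1 (le_refl _)
    have hmono := monoOn (f := F) (f' := fun t => g' t - g' y - m * (t - y))
      (fun t ht => hF' t (hsub ht))
      (fun t ht => by
        have := Hincr y t hy (hsub ht) ht.1
        linarith) hyI hxI hyx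
    simp only [hF] at hmono
    nlinarith [hmono]
  · -- F antitone on Icc a y
    have hyI : y ∈ Icc a y := ⟨hy.1, le_refl _⟩
    have hxI : x ∈ Icc a y := ⟨hx.1, hxy⟩
    have hsub : Icc a y ⊆ Icc a b := Icc_subset_Icc (le_refl _) hy.2
    have hanti := antiOn (f := F) (f' := fun t => g' t - g' y - m * (t - y))
      (fun t ht => hF' t (hsub ht))
      (fun t ht => by
        have := Hincr t y (hsub ht) hy ht.2
        linarith) hxI hyI hxy
    simp only [hF] at hanti
    nlinarith [hanti]

/-- Lower bound for the second divided-difference combination of a uniformly convex function. -/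
lemma dd2_lower {g g' : ℝ → ℝ} {a b m : ℝ}
    (H : ∀ x ∈ Icc a b, HasDerivAt g (g' x) x)
    (Hincr : ∀ x y, x ∈ Icc a b → y ∈ Icc a b → x ≤ y → m * (y - x) ≤ g' y - g' x)
    {x y z : ℝ} (hx : x ∈ Icc a b) (hy : y ∈ Icc a b) (hz : z ∈ Icc a b)
    (hxy : x ≤ y) (hyz : y ≤ z) :
    m / 2 * ((z - y) * (y - x) * (z - x)) ≤ (z - y) * g x - (z - x) * g y + (y - x) * g z := by
  have h1 := taylor_lower H Hincr hx hy
  have h2 := taylor_lower H Hincr hz hy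
  nlinarith [mul_le_mul_of_nonneg_left h1 (by linarith : (0:ℝ) ≤ z - y),
    mul_le_mul_of_nonneg_left h2 (by linarith : (0:ℝ) ≤ y - x)]


lemma dd2_norm {h h' h'' : ℝ → ℂ} {C a b : ℝ}
    (H1 : ∀ x ∈ Icc a b, HasDerivAt h (h' x) x)
    (H2 : ∀ x ∈ Icc a b, HasDerivAt h' (h'' x) x)
    (HC : ∀ x ∈ Icc a b, ‖h'' x‖ ≤ C)
    {x y z : ℝ} (hx : x ∈ Icc a b) (hy : y ∈ Icc a b) (hz : z ∈ Icc a b)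
    (hxy : x ≤ y) (hyz : y ≤ z) :
    ‖((z - y : ℝ) : ℂ) * h x - ((z - x : ℝ) : ℂ) * h y + ((y - x : ℝ) : ℂ) * h z‖
      ≤ C * ((z - y) * (y - x) * (z - x)) := by
  have hC0 : 0 ≤ C := le_trans (norm_nonneg _) (HC x hx)
  have T1 := taylor2R (convex_Icc a b) H1 H2 HC hy hx
  have T2 := taylor2R (convex_Icc a b) H1 H2 HC hy hz
  have key : ((z - y : ℝ) : ℂ) * h x - ((z - x : ℝ) : ℂ) * h y + ((y - x : ℝ) : ℂ) * h z
      = ((z - y : ℝ) : ℂ) * (h x - h y - ((x - y : ℝ) : ℂ) * h' y)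
        + ((y - x : ℝ) : ℂ) * (h z - h y - ((z - y : ℝ) : ℂ) * h' y) := by
    push_cast; ring
  rw [key]
  calc ‖((z - y : ℝ) : ℂ) * (h x - h y - ((x - y : ℝ) : ℂ) * h' y)
        + ((y - x : ℝ) : ℂ) * (h z - h y - ((z - y : ℝ) : ℂ) * h' y)‖
      ≤ ‖((z - y : ℝ) : ℂ) * (h x - h y - ((x - y : ℝ) : ℂ) * h' y)‖
        + ‖((y - x : ℝ) : ℂ) * (h z - h y - ((z - y : ℝ) : ℂ) * h' y)‖ := norm_add_le _ _
    _ = |z - y| * ‖h x - h y - ((x - y : ℝ) : ℂ) * h' y‖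
        + |y - x| * ‖h z - h y - ((z - y : ℝ) : ℂ) * h' y‖ := by
        simp [norm_mul, ← Complex.ofReal_sub, Complex.norm_real, Real.norm_eq_abs]
    _ ≤ |z - y| * (C * |x - y| ^ 2) + |y - x| * (C * |z - y| ^ 2) := by
        gcongr
    _ = C * ((z - y) * (y - x) * (z - x)) := by
        rw [_root_.abs_of_nonneg (by linarith : (0:ℝ) ≤ z - y),
          abs_sub_comm x y,
          _root_.abs_of_nonneg (by linarith : (0:ℝ) ≤ y - x)]
        ring


lemma core {Z dZ W : ℝ → ℂ} {e : ℂ} {G : ℂ → ℂ} {a M ρ ℓ γ : ℝ}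
    (hZ : ∀ t ∈ Icc (0:ℝ) 1, HasDerivWithinAt Z (dZ t) (Icc (0:ℝ) 1) t)
    (hdZc : ContinuousOn dZ (Icc (0:ℝ) 1))
    (hcl : Z 0 = Z 1)
    (hlen : (∫ t in (0:ℝ)..1, ‖dZ t‖) ≤ ℓ)
    (hWc : ContinuousOn W (Icc (0:ℝ) 1))
    (hWb : ∀ t ∈ Icc (0:ℝ) 1, ‖W t - e‖ ≤ ρ)
    (hγ : γ ≤ -(∫ t in (0:ℝ)..1, W t * dZ t).im)
    (ha : 0 ≤ a) (hM : 0 ≤ M * ρ ^ 2)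
    (hGW : ContinuousOn (fun t => G (W t)) (Icc (0:ℝ) 1))
    (hTay : ∀ z : ℂ, ‖z - e‖ ≤ ρ → ‖G z - G e + (a : ℂ) * (z - e)‖ ≤ M * ρ ^ 2) :
    a * γ - M * ρ ^ 2 * ℓ ≤ (∫ t in (0:ℝ)..1, G (W t) * dZ t).im := by
  have h01 : (0:ℝ) ≤ 1 := zero_le_one
  have huIcc : Set.uIcc (0:ℝ) 1 = Icc (0:ℝ) 1 := uIcc_of_le h01
  set R : ℂ → ℂ := fun z => G z - G e + (a : ℂ) * (z - e) with hR
  -- integrability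
  have intZ : IntervalIntegrable dZ MeasureTheory.volume 0 1 :=
    (huIcc ▸ hdZc).intervalIntegrable
  have intW : IntervalIntegrable (fun t => W t * dZ t) MeasureTheory.volume 0 1 :=
    (huIcc ▸ (hWc.mul hdZc)).intervalIntegrable
  have intGW : IntervalIntegrable (fun t => G (W t) * dZ t) MeasureTheory.volume 0 1 :=
    (huIcc ▸ (hGW.mul hdZc)).intervalIntegrable
  have hRWc : ContinuousOn (fun t => R (W t) * dZ t) (Icc (0:ℝ) 1) := by
    exact ((hGW.sub continuousOn_const).add
      (continuousOn_const.mul (hWc.sub continuousOn_const))).mul hdZc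
  have intRW : IntervalIntegrable (fun t => R (W t) * dZ t) MeasureTheory.volume 0 1 :=
    (huIcc ▸ hRWc).intervalIntegrable
  have intdZn : IntervalIntegrable (fun t => ‖dZ t‖) MeasureTheory.volume 0 1 :=
    (huIcc ▸ hdZc.norm).intervalIntegrable
  have intRWn : IntervalIntegrable (fun t => ‖R (W t) * dZ t‖) MeasureTheory.volume 0 1 :=
    (huIcc ▸ hRWc.norm).intervalIntegrable
  -- the loop is closed
  have hI0 : (∫ t in (0:ℝ)..1, dZ t) = 0 := by
    have contZ : ContinuousOn Z (Icc (0:ℝ) 1) := fun t ht => (hZ t ht).continuousWithinAt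
    have hderiv : ∀ x ∈ Ioo (0:ℝ) 1, HasDerivWithinAt Z (dZ x) (Ioi x) x := fun x hx =>
      (((hZ x (Ioo_subset_Icc_self hx)).hasDerivAt
        (Icc_mem_nhds hx.1 hx.2)).hasDerivWithinAt)
    rw [intervalIntegral.integral_eq_sub_of_hasDeriv_right_of_le h01 contZ hderiv intZ, hcl,
      sub_self]
  -- decomposition
  have hIR : (∫ t in (0:ℝ)..1, G (W t) * dZ t)
      = (∫ t in (0:ℝ)..1, R (W t) * dZ t) - (a : ℂ) * (∫ t in (0:ℝ)..1, W t * dZ t) := by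
    have key : (∫ t in (0:ℝ)..1, R (W t) * dZ t)
        = (∫ t in (0:ℝ)..1, (G (W t) * dZ t + (a:ℂ) * (W t * dZ t)
            - (G e + (a:ℂ) * e) * dZ t)) := by
      congr 1; funext t; simp only [hR]; ring
    rw [key, intervalIntegral.integral_sub (intGW.add (intW.const_mul _))
      (intZ.const_mul _), intervalIntegral.integral_add intGW (intW.const_mul _),
      intervalIntegral.integral_const_mul, intervalIntegral.integral_const_mul, hI0, mul_zero,
      sub_zero]
    ring
  -- bound on the remainder integral
  have hRIb : ‖(∫ t in (0:ℝ)..1, R (W t) * dZ t)‖ ≤ M * ρ ^ 2 * ℓ := by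
    refine le_trans (intervalIntegral.norm_integral_le_integral_norm h01) ?_
    have hmono : (∫ t in (0:ℝ)..1, ‖R (W t) * dZ t‖)
        ≤ ∫ t in (0:ℝ)..1, (M * ρ ^ 2) * ‖dZ t‖ := by
      refine intervalIntegral.integral_mono_on h01 intRWn (intdZn.const_mul _) ?_
      intro t ht
      rw [norm_mul]
      exact mul_le_mul_of_nonneg_right (hTay (W t) (hWb t ht)) (norm_nonneg _)
    refine le_trans hmono ?_
    rw [intervalIntegral.integral_const_mul]
    exact mul_le_mul_of_nonneg_left hlen hM
  -- conclusion
  have him : (∫ t in (0:ℝ)..1, G (W t) * dZ t).im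
      = (∫ t in (0:ℝ)..1, R (W t) * dZ t).im - a * (∫ t in (0:ℝ)..1, W t * dZ t).im := by
    rw [hIR, Complex.sub_im]
    simp [Complex.mul_im]
  rw [him]
  have h1 : -(M * ρ ^ 2 * ℓ) ≤ (∫ t in (0:ℝ)..1, R (W t) * dZ t).im := by
    have := Complex.abs_im_le_norm (∫ t in (0:ℝ)..1, R (W t) * dZ t)
    have := abs_le.mp (le_trans this hRIb)
    linarith [this.1]
  have h2 : a * γ ≤ a * (-(∫ t in (0:ℝ)..1, W t * dZ t).im) :=
    mul_le_mul_of_nonneg_left hγ ha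
  linarith


variable {E₁ E₂ ec m₀ ρ : ℝ}

lemma region (hm₀ : 0 < m₀) (hρm : 2*ρ ≤ m₀) (hgap : ∀ E ∈ Icc E₁ E₂, m₀ ≤ E - ec)
    {x : ℝ} (hx : x ∈ Icc E₁ E₂) {ζ : ℂ} (hζ : ‖ζ - (ec:ℂ)‖ ≤ ρ) :
    m₀ ≤ (2*((x:ℂ) - ζ)).re := by
  have h1 : (2*((x:ℂ) - ζ)).re = 2*(x - ζ.re) := by
    simp [Complex.mul_re]
  have h2 : ζ.re - ec ≤ ρ := by
    have h3 : |(ζ - (ec:ℂ)).re| ≤ ‖ζ - (ec:ℂ)‖ := by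
      exact Complex.abs_re_le_norm _
    have h4 : (ζ - (ec:ℂ)).re = ζ.re - ec := by simp
    rw [h4] at h3
    exact le_trans (le_abs_self _) (le_trans h3 hζ)
  have := hgap x hx
  rw [h1]; linarith

lemma hd_phi (x : ℝ) {ζ : ℂ} (h : 2*((x:ℂ)-ζ) ∈ Complex.slitPlane) :
    HasDerivAt (fun ζ : ℂ => (2*((x:ℂ)-ζ))^((1:ℂ)/2))
      (-(2*((x:ℂ)-ζ))^(-((1:ℂ)/2))) ζ := by
  have h' := hasDerivAt_czpow x ((1:ℂ)/2) h
  convert h' using 1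
  have e1 : ((1:ℂ)/2 - 1) = -((1:ℂ)/2) := by norm_num
  rw [e1]; ring

lemma hd_phi' (x : ℝ) {ζ : ℂ} (h : 2*((x:ℂ)-ζ) ∈ Complex.slitPlane) :
    HasDerivAt (fun ζ : ℂ => -(2*((x:ℂ)-ζ))^(-((1:ℂ)/2)))
      (-(2*((x:ℂ)-ζ))^(-((3:ℂ)/2))) ζ := by
  have h' := (hasDerivAt_czpow x (-((1:ℂ)/2)) h).neg
  refine h'.congr_deriv ?_
  have e1 : (-((1:ℂ)/2) - 1) = -((3:ℂ)/2) := by norm_num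
  rw [e1]; ring

lemma norm32 {u : ℂ} (hm : 0 < m₀) (h : m₀ ≤ u.re) :
    ‖-u ^ (-((3:ℂ)/2))‖ ≤ m₀ ^ (-(3/2) : ℝ) := by
  rw [norm_neg]
  have e1 : (-((3:ℂ)/2)) = ((-(3/2) : ℝ) : ℂ) := by norm_num
  rw [e1]
  exact norm_cpow_le hm h (by norm_num)

lemma rpow_cast {x : ℝ} (p : ℝ) (h : 0 ≤ 2*(x-ec)) :
    (((2*(x-ec))^p : ℝ) : ℂ) = (2*((x:ℂ)-(ec:ℂ)))^((p:ℝ):ℂ) := by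
  rw [Complex.ofReal_cpow h p]
  norm_cast

lemma keyP (hm₀ : 0 < m₀) (hρ : 0 ≤ ρ) (hρm : 2*ρ ≤ m₀)
    (hgap : ∀ E ∈ Icc E₁ E₂, m₀ ≤ E - ec)
    {x : ℝ} (hx : x ∈ Icc E₁ E₂) {ζ : ℂ} (hζ : ‖ζ - (ec:ℂ)‖ ≤ ρ) :
    ‖(2*((x:ℂ)-ζ))^((1:ℂ)/2) - (2*((x:ℂ)-(ec:ℂ)))^((1:ℂ)/2)
      + (((2*(x-ec))^(-(1/2) : ℝ) : ℝ) : ℂ) * (ζ - (ec:ℂ))‖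
      ≤ m₀ ^ (-(3/2):ℝ) * ρ^2 := by
  set s : Set ℂ := Metric.closedBall (ec:ℂ) ρ with hsdef
  have hmem : ∀ ξ : ℂ, ξ ∈ s ↔ ‖ξ - (ec:ℂ)‖ ≤ ρ := by
    intro ξ; rw [hsdef, Metric.mem_closedBall, dist_eq_norm]
  have hre : ∀ ξ ∈ s, m₀ ≤ (2*((x:ℂ) - ξ)).re := fun ξ hξ =>
    region hm₀ hρm hgap hx ((hmem ξ).mp hξ)
  have hslit : ∀ ξ ∈ s, 2*((x:ℂ)-ξ) ∈ Complex.slitPlane := fun ξ hξ =>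
    slit_of_re hm₀ (hre ξ hξ)
  have hec : (ec:ℂ) ∈ s := by rw [hmem]; simpa using hρ
  have hζs : ζ ∈ s := (hmem ζ).mpr hζ
  have T := taylor2C (convex_closedBall _ _)
    (f := fun ξ : ℂ => (2*((x:ℂ)-ξ))^((1:ℂ)/2))
    (f' := fun ξ : ℂ => -(2*((x:ℂ)-ξ))^(-((1:ℂ)/2)))
    (f'' := fun ξ : ℂ => -(2*((x:ℂ)-ξ))^(-((3:ℂ)/2)))
    (fun ξ hξ => hd_phi x (hslit ξ hξ))
    (fun ξ hξ => hd_phi' x (hslit ξ hξ))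
    (fun ξ hξ => norm32 hm₀ (hre ξ hξ)) hec hζs
  have hcast : (((2*(x-ec))^(-(1/2) : ℝ) : ℝ) : ℂ) = (2*((x:ℂ)-(ec:ℂ)))^(-((1:ℂ)/2)) := by
    have h0 : (0:ℝ) ≤ 2*(x-ec) := by
      have := hgap x hx; nlinarith
    rw [rpow_cast (-(1/2) : ℝ) h0]
    norm_num
  have heq : (2*((x:ℂ)-ζ))^((1:ℂ)/2) - (2*((x:ℂ)-(ec:ℂ)))^((1:ℂ)/2)
      + (((2*(x-ec))^(-(1/2) : ℝ) : ℝ) : ℂ) * (ζ - (ec:ℂ))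
      = (2*((x:ℂ)-ζ))^((1:ℂ)/2) - (2*((x:ℂ)-(ec:ℂ)))^((1:ℂ)/2)
        - (-(2*((x:ℂ)-(ec:ℂ)))^(-((1:ℂ)/2))) * (ζ - (ec:ℂ)) := by
    rw [hcast]; ring
  rw [heq]
  refine le_trans T ?_
  have : ‖ζ - (ec:ℂ)‖^2 ≤ ρ^2 := by
    apply pow_le_pow_left₀ (norm_nonneg _) hζ
  have hM : (0:ℝ) ≤ m₀ ^ (-(3/2):ℝ) := Real.rpow_nonneg (le_of_lt hm₀) _
  nlinarith


lemma hd_F (ζ : ℂ) {x : ℝ} (h : 2*((x:ℂ)-ζ) ∈ Complex.slitPlane) :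
    HasDerivAt (fun s : ℝ => -(2*((s:ℂ)-ζ))^(-((3:ℂ)/2)))
      (3*(2*((x:ℂ)-ζ))^(-((5:ℂ)/2))) x := by
  have h' := (hasDerivAt_cEpow ζ (-((3:ℂ)/2)) h).neg
  refine h'.congr_deriv ?_
  have e1 : (-((3:ℂ)/2) - 1) = -((5:ℂ)/2) := by norm_num
  rw [e1]; ring

lemma norm52 {u : ℂ} (hm : 0 < m₀) (h : m₀ ≤ u.re) :
    ‖(3:ℂ) * u ^ (-((5:ℂ)/2))‖ ≤ 3 * m₀ ^ (-(5/2) : ℝ) := by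
  rw [norm_mul]
  have e1 : (-((5:ℂ)/2)) = ((-(5/2) : ℝ) : ℂ) := by norm_num
  rw [e1]
  have := norm_cpow_le hm h (s := (-(5/2) : ℝ)) (by norm_num)
  calc ‖(3:ℂ)‖ * ‖u ^ ((-(5/2):ℝ):ℂ)‖ = 3 * ‖u ^ ((-(5/2):ℝ):ℂ)‖ := by norm_num
    _ ≤ 3 * m₀ ^ (-(5/2) : ℝ) := by linarith

lemma keyD (hm₀ : 0 < m₀) (hρ : 0 ≤ ρ) (hρm : 2*ρ ≤ m₀) (h12 : E₁ ≤ E₂)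
    (hgap : ∀ E ∈ Icc E₁ E₂, m₀ ≤ E - ec)
    {x y : ℝ} (hx : x ∈ Icc E₁ E₂) (hy : y ∈ Icc E₁ E₂) (hxy : x ≤ y)
    {ζ : ℂ} (hζ : ‖ζ - (ec:ℂ)‖ ≤ ρ) :
    ‖((2*((x:ℂ)-ζ))^((1:ℂ)/2) - (2*((y:ℂ)-ζ))^((1:ℂ)/2))
      - ((2*((x:ℂ)-(ec:ℂ)))^((1:ℂ)/2) - (2*((y:ℂ)-(ec:ℂ)))^((1:ℂ)/2))
      + ((((2*(x-ec))^(-(1/2):ℝ) - (2*(y-ec))^(-(1/2):ℝ)) : ℝ) : ℂ) * (ζ - (ec:ℂ))‖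
      ≤ (3 * m₀ ^ (-(5/2):ℝ)) * (y - x) * ρ^2 := by
  set s : Set ℂ := Metric.closedBall (ec:ℂ) ρ with hsdef
  have hmem : ∀ ξ : ℂ, ξ ∈ s ↔ ‖ξ - (ec:ℂ)‖ ≤ ρ := by
    intro ξ; rw [hsdef, Metric.mem_closedBall, dist_eq_norm]
  have hre : ∀ u ∈ Icc E₁ E₂, ∀ ξ ∈ s, m₀ ≤ (2*((u:ℂ) - ξ)).re := fun u hu ξ hξ =>
    region hm₀ hρm hgap hu ((hmem ξ).mp hξ)
  have hslit : ∀ u ∈ Icc E₁ E₂, ∀ ξ ∈ s, 2*((u:ℂ)-ξ) ∈ Complex.slitPlane :=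
    fun u hu ξ hξ => slit_of_re hm₀ (hre u hu ξ hξ)
  have hec : (ec:ℂ) ∈ s := by rw [hmem]; simpa using hρ
  have hζs : ζ ∈ s := (hmem ζ).mpr hζ
  -- second derivative bound via mvt in the real parameter
  have HC : ∀ ξ ∈ s,
      ‖(-(2*((x:ℂ)-ξ))^(-((3:ℂ)/2))) - (-(2*((y:ℂ)-ξ))^(-((3:ℂ)/2)))‖
        ≤ (3 * m₀ ^ (-(5/2):ℝ)) * (y - x) := by
    intro ξ hξ
    have hmv := mvt1R (f := fun s : ℝ => -(2*((s:ℂ)-ξ))^(-((3:ℂ)/2)))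
      (f' := fun s : ℝ => 3*(2*((s:ℂ)-ξ))^(-((5:ℂ)/2)))
      (convex_Icc E₁ E₂)
      (fun u hu => hd_F ξ (hslit u hu ξ hξ))
      (fun u hu => norm52 hm₀ (hre u hu ξ hξ)) hy hx
    calc ‖(-(2*((x:ℂ)-ξ))^(-((3:ℂ)/2))) - (-(2*((y:ℂ)-ξ))^(-((3:ℂ)/2)))‖
        ≤ 3 * m₀ ^ (-(5/2):ℝ) * |x - y| := hmv
      _ = (3 * m₀ ^ (-(5/2):ℝ)) * (y - x) := by
          rw [abs_sub_comm, _root_.abs_of_nonneg (by linarith : (0:ℝ) ≤ y - x)]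
  have T := taylor2C (convex_closedBall _ _)
    (f := fun ξ : ℂ => (2*((x:ℂ)-ξ))^((1:ℂ)/2) - (2*((y:ℂ)-ξ))^((1:ℂ)/2))
    (f' := fun ξ : ℂ => (-(2*((x:ℂ)-ξ))^(-((1:ℂ)/2))) - (-(2*((y:ℂ)-ξ))^(-((1:ℂ)/2))))
    (f'' := fun ξ : ℂ => (-(2*((x:ℂ)-ξ))^(-((3:ℂ)/2))) - (-(2*((y:ℂ)-ξ))^(-((3:ℂ)/2))))
    (fun ξ hξ => (hd_phi x (hslit x hx ξ hξ)).sub (hd_phi y (hslit y hy ξ hξ)))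
    (fun ξ hξ => (hd_phi' x (hslit x hx ξ hξ)).sub (hd_phi' y (hslit y hy ξ hξ)))
    HC hec hζs
  have h0x : (0:ℝ) ≤ 2*(x-ec) := by have := hgap x hx; nlinarith
  have h0y : (0:ℝ) ≤ 2*(y-ec) := by have := hgap y hy; nlinarith
  have hcast : ((((2*(x-ec))^(-(1/2):ℝ) - (2*(y-ec))^(-(1/2):ℝ)) : ℝ) : ℂ)
      = (2*((x:ℂ)-(ec:ℂ)))^(-((1:ℂ)/2)) - (2*((y:ℂ)-(ec:ℂ)))^(-((1:ℂ)/2)) := by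
    push_cast
    rw [rpow_cast (-(1/2) : ℝ) h0x, rpow_cast (-(1/2) : ℝ) h0y]
    norm_num
  have heq : ((2*((x:ℂ)-ζ))^((1:ℂ)/2) - (2*((y:ℂ)-ζ))^((1:ℂ)/2))
      - ((2*((x:ℂ)-(ec:ℂ)))^((1:ℂ)/2) - (2*((y:ℂ)-(ec:ℂ)))^((1:ℂ)/2))
      + ((((2*(x-ec))^(-(1/2):ℝ) - (2*(y-ec))^(-(1/2):ℝ)) : ℝ) : ℂ) * (ζ - (ec:ℂ))
      = ((2*((x:ℂ)-ζ))^((1:ℂ)/2) - (2*((y:ℂ)-ζ))^((1:ℂ)/2))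
      - ((2*((x:ℂ)-(ec:ℂ)))^((1:ℂ)/2) - (2*((y:ℂ)-(ec:ℂ)))^((1:ℂ)/2))
      - ((-(2*((x:ℂ)-(ec:ℂ)))^(-((1:ℂ)/2))) - (-(2*((y:ℂ)-(ec:ℂ)))^(-((1:ℂ)/2))))
          * (ζ - (ec:ℂ)) := by
    rw [hcast]; ring
  rw [heq]
  refine le_trans T ?_
  have h2 : ‖ζ - (ec:ℂ)‖^2 ≤ ρ^2 := pow_le_pow_left₀ (norm_nonneg _) hζ _
  have hM : (0:ℝ) ≤ (3 * m₀ ^ (-(5/2):ℝ)) * (y - x) := by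
    have : (0:ℝ) ≤ m₀ ^ (-(5/2):ℝ) := Real.rpow_nonneg (le_of_lt hm₀) _
    nlinarith
  nlinarith


lemma hd_F' (ζ : ℂ) {x : ℝ} (h : 2*((x:ℂ)-ζ) ∈ Complex.slitPlane) :
    HasDerivAt (fun s : ℝ => 3*(2*((s:ℂ)-ζ))^(-((5:ℂ)/2)))
      (-15*(2*((x:ℂ)-ζ))^(-((7:ℂ)/2))) x := by
  have h' := (hasDerivAt_cEpow ζ (-((5:ℂ)/2)) h).const_mul (3:ℂ)
  refine h'.congr_deriv ?_
  have e1 : (-((5:ℂ)/2) - 1) = -((7:ℂ)/2) := by norm_num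
  rw [e1]; ring

lemma norm72 {u : ℂ} (hm : 0 < m₀) (h : m₀ ≤ u.re) :
    ‖(-15:ℂ) * u ^ (-((7:ℂ)/2))‖ ≤ 15 * m₀ ^ (-(7/2) : ℝ) := by
  rw [norm_mul]
  have e1 : (-((7:ℂ)/2)) = ((-(7/2) : ℝ) : ℂ) := by norm_num
  rw [e1]
  have := norm_cpow_le hm h (s := (-(7/2) : ℝ)) (by norm_num)
  have h15 : ‖(-15:ℂ)‖ = 15 := by norm_num
  rw [h15]
  linarith

lemma keyC (hm₀ : 0 < m₀) (hρ : 0 ≤ ρ) (hρm : 2*ρ ≤ m₀)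
    (hgap : ∀ E ∈ Icc E₁ E₂, m₀ ≤ E - ec)
    {x y z : ℝ} (hx : x ∈ Icc E₁ E₂) (hy : y ∈ Icc E₁ E₂) (hz : z ∈ Icc E₁ E₂)
    (hxy : x ≤ y) (hyz : y ≤ z)
    {ζ : ℂ} (hζ : ‖ζ - (ec:ℂ)‖ ≤ ρ) :
    ‖(((z-y:ℝ):ℂ) * (2*((x:ℂ)-ζ))^((1:ℂ)/2) - ((z-x:ℝ):ℂ) * (2*((y:ℂ)-ζ))^((1:ℂ)/2)
        + ((y-x:ℝ):ℂ) * (2*((z:ℂ)-ζ))^((1:ℂ)/2))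
      - (((z-y:ℝ):ℂ) * (2*((x:ℂ)-(ec:ℂ)))^((1:ℂ)/2)
        - ((z-x:ℝ):ℂ) * (2*((y:ℂ)-(ec:ℂ)))^((1:ℂ)/2)
        + ((y-x:ℝ):ℂ) * (2*((z:ℂ)-(ec:ℂ)))^((1:ℂ)/2))
      + ((((z-y) * (2*(x-ec))^(-(1/2):ℝ) - (z-x) * (2*(y-ec))^(-(1/2):ℝ)
          + (y-x) * (2*(z-ec))^(-(1/2):ℝ)) : ℝ) : ℂ) * (ζ - (ec:ℂ))‖
      ≤ (15 * m₀ ^ (-(7/2):ℝ)) * ((z-y) * (y-x) * (z-x)) * ρ^2 := by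
  set s : Set ℂ := Metric.closedBall (ec:ℂ) ρ with hsdef
  have hmem : ∀ ξ : ℂ, ξ ∈ s ↔ ‖ξ - (ec:ℂ)‖ ≤ ρ := by
    intro ξ; rw [hsdef, Metric.mem_closedBall, dist_eq_norm]
  have hre : ∀ u ∈ Icc E₁ E₂, ∀ ξ ∈ s, m₀ ≤ (2*((u:ℂ) - ξ)).re := fun u hu ξ hξ =>
    region hm₀ hρm hgap hu ((hmem ξ).mp hξ)
  have hslit : ∀ u ∈ Icc E₁ E₂, ∀ ξ ∈ s, 2*((u:ℂ)-ξ) ∈ Complex.slitPlane :=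
    fun u hu ξ hξ => slit_of_re hm₀ (hre u hu ξ hξ)
  have hec : (ec:ℂ) ∈ s := by rw [hmem]; simpa using hρ
  have hζs : ζ ∈ s := (hmem ζ).mpr hζ
  have HC : ∀ ξ ∈ s,
      ‖((z-y:ℝ):ℂ) * (-(2*((x:ℂ)-ξ))^(-((3:ℂ)/2)))
        - ((z-x:ℝ):ℂ) * (-(2*((y:ℂ)-ξ))^(-((3:ℂ)/2)))
        + ((y-x:ℝ):ℂ) * (-(2*((z:ℂ)-ξ))^(-((3:ℂ)/2)))‖
        ≤ (15 * m₀ ^ (-(7/2):ℝ)) * ((z-y) * (y-x) * (z-x)) := by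
    intro ξ hξ
    have := dd2_norm (a := E₁) (b := E₂)
      (h := fun s : ℝ => -(2*((s:ℂ)-ξ))^(-((3:ℂ)/2)))
      (h' := fun s : ℝ => 3*(2*((s:ℂ)-ξ))^(-((5:ℂ)/2)))
      (h'' := fun s : ℝ => -15*(2*((s:ℂ)-ξ))^(-((7:ℂ)/2)))
      (fun u hu => hd_F ξ (hslit u hu ξ hξ))
      (fun u hu => hd_F' ξ (hslit u hu ξ hξ))
      (fun u hu => norm72 hm₀ (hre u hu ξ hξ)) hx hy hz hxy hyz
    exact this
  have T := taylor2C (convex_closedBall _ _)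
    (f := fun ξ : ℂ => ((z-y:ℝ):ℂ) * (2*((x:ℂ)-ξ))^((1:ℂ)/2)
        - ((z-x:ℝ):ℂ) * (2*((y:ℂ)-ξ))^((1:ℂ)/2)
        + ((y-x:ℝ):ℂ) * (2*((z:ℂ)-ξ))^((1:ℂ)/2))
    (f' := fun ξ : ℂ => ((z-y:ℝ):ℂ) * (-(2*((x:ℂ)-ξ))^(-((1:ℂ)/2)))
        - ((z-x:ℝ):ℂ) * (-(2*((y:ℂ)-ξ))^(-((1:ℂ)/2)))
        + ((y-x:ℝ):ℂ) * (-(2*((z:ℂ)-ξ))^(-((1:ℂ)/2))))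
    (f'' := fun ξ : ℂ => ((z-y:ℝ):ℂ) * (-(2*((x:ℂ)-ξ))^(-((3:ℂ)/2)))
        - ((z-x:ℝ):ℂ) * (-(2*((y:ℂ)-ξ))^(-((3:ℂ)/2)))
        + ((y-x:ℝ):ℂ) * (-(2*((z:ℂ)-ξ))^(-((3:ℂ)/2))))
    (fun ξ hξ => (((hd_phi x (hslit x hx ξ hξ)).const_mul _).sub
        ((hd_phi y (hslit y hy ξ hξ)).const_mul _)).add
        ((hd_phi z (hslit z hz ξ hξ)).const_mul _))
    (fun ξ hξ => (((hd_phi' x (hslit x hx ξ hξ)).const_mul _).sub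
        ((hd_phi' y (hslit y hy ξ hξ)).const_mul _)).add
        ((hd_phi' z (hslit z hz ξ hξ)).const_mul _))
    HC hec hζs
  have h0x : (0:ℝ) ≤ 2*(x-ec) := by have := hgap x hx; nlinarith
  have h0y : (0:ℝ) ≤ 2*(y-ec) := by have := hgap y hy; nlinarith
  have h0z : (0:ℝ) ≤ 2*(z-ec) := by have := hgap z hz; nlinarith
  have hcast : ((((z-y) * (2*(x-ec))^(-(1/2):ℝ) - (z-x) * (2*(y-ec))^(-(1/2):ℝ)
      + (y-x) * (2*(z-ec))^(-(1/2):ℝ)) : ℝ) : ℂ)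
      = ((z-y:ℝ):ℂ) * (2*((x:ℂ)-(ec:ℂ)))^(-((1:ℂ)/2))
        - ((z-x:ℝ):ℂ) * (2*((y:ℂ)-(ec:ℂ)))^(-((1:ℂ)/2))
        + ((y-x:ℝ):ℂ) * (2*((z:ℂ)-(ec:ℂ)))^(-((1:ℂ)/2)) := by
    push_cast
    rw [rpow_cast (-(1/2) : ℝ) h0x, rpow_cast (-(1/2) : ℝ) h0y,
      rpow_cast (-(1/2) : ℝ) h0z]
    norm_num
  have heq : (((z-y:ℝ):ℂ) * (2*((x:ℂ)-ζ))^((1:ℂ)/2) - ((z-x:ℝ):ℂ) * (2*((y:ℂ)-ζ))^((1:ℂ)/2)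
        + ((y-x:ℝ):ℂ) * (2*((z:ℂ)-ζ))^((1:ℂ)/2))
      - (((z-y:ℝ):ℂ) * (2*((x:ℂ)-(ec:ℂ)))^((1:ℂ)/2)
        - ((z-x:ℝ):ℂ) * (2*((y:ℂ)-(ec:ℂ)))^((1:ℂ)/2)
        + ((y-x:ℝ):ℂ) * (2*((z:ℂ)-(ec:ℂ)))^((1:ℂ)/2))
      + ((((z-y) * (2*(x-ec))^(-(1/2):ℝ) - (z-x) * (2*(y-ec))^(-(1/2):ℝ)
          + (y-x) * (2*(z-ec))^(-(1/2):ℝ)) : ℝ) : ℂ) * (ζ - (ec:ℂ))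
      = (((z-y:ℝ):ℂ) * (2*((x:ℂ)-ζ))^((1:ℂ)/2) - ((z-x:ℝ):ℂ) * (2*((y:ℂ)-ζ))^((1:ℂ)/2)
        + ((y-x:ℝ):ℂ) * (2*((z:ℂ)-ζ))^((1:ℂ)/2))
      - (((z-y:ℝ):ℂ) * (2*((x:ℂ)-(ec:ℂ)))^((1:ℂ)/2)
        - ((z-x:ℝ):ℂ) * (2*((y:ℂ)-(ec:ℂ)))^((1:ℂ)/2)
        + ((y-x:ℝ):ℂ) * (2*((z:ℂ)-(ec:ℂ)))^((1:ℂ)/2))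
      - (((z-y:ℝ):ℂ) * (-(2*((x:ℂ)-(ec:ℂ)))^(-((1:ℂ)/2)))
        - ((z-x:ℝ):ℂ) * (-(2*((y:ℂ)-(ec:ℂ)))^(-((1:ℂ)/2)))
        + ((y-x:ℝ):ℂ) * (-(2*((z:ℂ)-(ec:ℂ)))^(-((1:ℂ)/2)))) * (ζ - (ec:ℂ)) := by
    rw [hcast]; ring
  rw [heq]
  refine le_trans T ?_
  have h2 : ‖ζ - (ec:ℂ)‖^2 ≤ ρ^2 := pow_le_pow_left₀ (norm_nonneg _) hζ _
  have hM : (0:ℝ) ≤ (15 * m₀ ^ (-(7/2):ℝ)) * ((z-y) * (y-x) * (z-x)) := by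
    have h1 : (0:ℝ) ≤ m₀ ^ (-(7/2):ℝ) := Real.rpow_nonneg (le_of_lt hm₀) _
    exact mul_nonneg (mul_nonneg (by norm_num) h1)
      (mul_nonneg (mul_nonneg (by linarith) (by linarith)) (by linarith))
  exact mul_le_mul_of_nonneg_left h2 hM


lemma hpos (hm₀ : 0 < m₀) (hgap : ∀ E ∈ Icc E₁ E₂, m₀ ≤ E - ec)
    {x : ℝ} (hx : x ∈ Icc E₁ E₂) : 0 < 2*(x-ec) := by
  have := hgap x hx; nlinarith

lemma hd_psi (hm₀ : 0 < m₀) (hgap : ∀ E ∈ Icc E₁ E₂, m₀ ≤ E - ec)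
    {x : ℝ} (hx : x ∈ Icc E₁ E₂) :
    HasDerivAt (fun s : ℝ => (2*(s-ec))^(-(1/2):ℝ)) (-(2*(x-ec))^(-(3/2):ℝ)) x := by
  have h := hasDerivAt_rpow2 ec (-(1/2) : ℝ) (hpos hm₀ hgap hx)
  convert h using 1
  rw [show (-(1/2):ℝ) - 1 = -(3/2) by norm_num]
  ring

lemma hd_psi' (hm₀ : 0 < m₀) (hgap : ∀ E ∈ Icc E₁ E₂, m₀ ≤ E - ec)
    {x : ℝ} (hx : x ∈ Icc E₁ E₂) :
    HasDerivAt (fun s : ℝ => -(2*(s-ec))^(-(3/2):ℝ)) (3*(2*(x-ec))^(-(5/2):ℝ)) x := by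
  have h := (hasDerivAt_rpow2 ec (-(3/2) : ℝ) (hpos hm₀ hgap hx)).neg
  refine h.congr_deriv ?_
  rw [show (-(3/2):ℝ) - 1 = -(5/2) by norm_num]
  ring

lemma rpow_mono (hm₀ : 0 < m₀) (hgap : ∀ E ∈ Icc E₁ E₂, m₀ ≤ E - ec)
    {x : ℝ} (hx : x ∈ Icc E₁ E₂) {p : ℝ} (hp : p ≤ 0) :
    (2*(E₂-ec))^p ≤ (2*(x-ec))^p :=
  Real.rpow_le_rpow_of_nonpos (hpos hm₀ hgap hx) (by linarith [hx.2]) hp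

lemma psi_lb (hm₀ : 0 < m₀) (hgap : ∀ E ∈ Icc E₁ E₂, m₀ ≤ E - ec)
    {x : ℝ} (hx : x ∈ Icc E₁ E₂) :
    (2*(E₂-ec))^(-(1/2):ℝ) ≤ (2*(x-ec))^(-(1/2):ℝ) :=
  rpow_mono hm₀ hgap hx (by norm_num)

lemma psiD_lb (hm₀ : 0 < m₀) (hgap : ∀ E ∈ Icc E₁ E₂, m₀ ≤ E - ec)
    {x y : ℝ} (hx : x ∈ Icc E₁ E₂) (hy : y ∈ Icc E₁ E₂) (hxy : x ≤ y) :
    (2*(E₂-ec))^(-(3/2):ℝ) * (y - x)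
      ≤ (2*(x-ec))^(-(1/2):ℝ) - (2*(y-ec))^(-(1/2):ℝ) := by
  have h := incr_of_deriv_ge (g := fun s : ℝ => -(2*(s-ec))^(-(1/2):ℝ))
    (g' := fun s : ℝ => (2*(s-ec))^(-(3/2):ℝ)) (m := (2*(E₂-ec))^(-(3/2):ℝ))
    (fun s hs => by exact (hd_psi hm₀ hgap hs).neg.congr_deriv (neg_neg _))
    (fun s hs => rpow_mono hm₀ hgap hs (by norm_num)) hx hy hxy
  linarith

lemma psiC_lb (hm₀ : 0 < m₀) (hgap : ∀ E ∈ Icc E₁ E₂, m₀ ≤ E - ec)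
    {x y z : ℝ} (hx : x ∈ Icc E₁ E₂) (hy : y ∈ Icc E₁ E₂) (hz : z ∈ Icc E₁ E₂)
    (hxy : x ≤ y) (hyz : y ≤ z) :
    (3*(2*(E₂-ec))^(-(5/2):ℝ)) / 2 * ((z-y)*(y-x)*(z-x))
      ≤ (z-y) * (2*(x-ec))^(-(1/2):ℝ) - (z-x) * (2*(y-ec))^(-(1/2):ℝ)
        + (y-x) * (2*(z-ec))^(-(1/2):ℝ) := by
  have h := dd2_lower (g := fun s : ℝ => (2*(s-ec))^(-(1/2):ℝ))
    (g' := fun s : ℝ => -(2*(s-ec))^(-(3/2):ℝ)) (m := 3*(2*(E₂-ec))^(-(5/2):ℝ))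
    (fun s hs => hd_psi hm₀ hgap hs)
    (fun u v hu hv huv => by
      have h2 := incr_of_deriv_ge (g := fun s : ℝ => -(2*(s-ec))^(-(3/2):ℝ))
        (g' := fun s : ℝ => 3*(2*(s-ec))^(-(5/2):ℝ)) (m := 3*(2*(E₂-ec))^(-(5/2):ℝ))
        (fun s hs => hd_psi' hm₀ hgap hs)
        (fun s hs => by
          have := rpow_mono hm₀ hgap hs (p := (-(5/2):ℝ)) (by norm_num)
          linarith) hu hv huv
      simpa using h2) hx hy hz hxy hyz
  simpa using h


lemma master (E₁ E₂ ec m₀ ρ ℓ γ : ℝ) (h12 : E₁ ≤ E₂) (hm₀ : 0 < m₀)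
    (hgap : ∀ E ∈ Icc E₁ E₂, m₀ ≤ E - ec)
    (hρ : 0 < ρ) (hρm : 2*ρ ≤ m₀) (hγ : 0 < γ) (hℓ : 0 ≤ ℓ)
    {Z dZ W : ℝ → ℂ}
    (hZ : ∀ t ∈ Icc (0:ℝ) 1, HasDerivWithinAt Z (dZ t) (Icc (0:ℝ) 1) t)
    (hdZc : ContinuousOn dZ (Icc (0:ℝ) 1))
    (hcl : Z 0 = Z 1)
    (hlen : (∫ t in (0:ℝ)..1, ‖dZ t‖) ≤ ℓ)
    (hWc : ContinuousOn W (Icc (0:ℝ) 1))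
    (hWb : ∀ t ∈ Icc (0:ℝ) 1, ‖W t - (ec:ℂ)‖ ≤ ρ)
    (hγint : γ ≤ -(∫ t in (0:ℝ)..1, W t * dZ t).im)
    (hs1 : m₀^(-(3/2):ℝ) * ρ^2 * ℓ < (2*(E₂-ec))^(-(1/2):ℝ) * γ)
    (hs2 : 3*m₀^(-(5/2):ℝ) * ρ^2 * ℓ < (2*(E₂-ec))^(-(3/2):ℝ) * γ)
    (hs3 : 15*m₀^(-(7/2):ℝ) * ρ^2 * ℓ < (3*(2*(E₂-ec))^(-(5/2):ℝ))/2 * γ) :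
    (∀ E ∈ Icc E₁ E₂,
        0 < (∫ t in (0:ℝ)..1, (2*((E:ℂ) - W t))^((1:ℂ)/2) * dZ t).im) ∧
    StrictAntiOn
      (fun E : ℝ => (∫ t in (0:ℝ)..1, (2*((E:ℂ) - W t))^((1:ℂ)/2) * dZ t).im)
      (Icc E₁ E₂) ∧
    StrictConvexOn ℝ (Icc E₁ E₂)
      (fun E : ℝ => (∫ t in (0:ℝ)..1, (2*((E:ℂ) - W t))^((1:ℂ)/2) * dZ t).im) := by
  have hρ0 : (0:ℝ) ≤ ρ := hρ.le
  have huIcc : Set.uIcc (0:ℝ) 1 = Icc (0:ℝ) 1 := uIcc_of_le zero_le_one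
  -- continuity of the composed integrand
  have hcont : ∀ x ∈ Icc E₁ E₂,
      ContinuousOn (fun t => (2*((x:ℂ) - W t))^((1:ℂ)/2)) (Icc (0:ℝ) 1) := by
    intro x hx t ht
    have hs : 2*((x:ℂ) - W t) ∈ Complex.slitPlane :=
      slit_of_re hm₀ (region hm₀ hρm hgap hx (hWb t ht))
    exact (hd_phi x hs).continuousAt.comp_continuousWithinAt (hWc t ht)
  have hII : ∀ x ∈ Icc E₁ E₂,
      IntervalIntegrable (fun t => (2*((x:ℂ) - W t))^((1:ℂ)/2) * dZ t)
        MeasureTheory.volume 0 1 := fun x hx =>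
    (huIcc ▸ ((hcont x hx).mul hdZc)).intervalIntegrable
  -- the three positivity statements
  set β : ℝ → ℝ := fun E => (∫ t in (0:ℝ)..1, (2*((E:ℂ) - W t))^((1:ℂ)/2) * dZ t).im
    with hβ
  -- (1) positivity
  have hpos1 : ∀ E ∈ Icc E₁ E₂, 0 < β E := by
    intro E hE
    have ha : (0:ℝ) ≤ (2*(E-ec))^(-(1/2):ℝ) :=
      Real.rpow_nonneg (le_of_lt (hpos hm₀ hgap hE)) _
    have hM : (0:ℝ) ≤ m₀^(-(3/2):ℝ) * ρ^2 :=
      mul_nonneg (Real.rpow_nonneg hm₀.le _) (sq_nonneg ρ)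
    have hco := core (G := fun ζ : ℂ => (2*((E:ℂ)-ζ))^((1:ℂ)/2))
      (a := (2*(E-ec))^(-(1/2):ℝ)) (M := m₀^(-(3/2):ℝ))
      hZ hdZc hcl hlen hWc hWb hγint ha hM (hcont E hE)
      (fun z hz => keyP hm₀ hρ0 hρm hgap hE hz)
    have hlow : (2*(E₂-ec))^(-(1/2):ℝ) * γ ≤ (2*(E-ec))^(-(1/2):ℝ) * γ :=
      mul_le_mul_of_nonneg_right (psi_lb hm₀ hgap hE) hγ.le
    have : 0 < (2*(E-ec))^(-(1/2):ℝ) * γ - m₀^(-(3/2):ℝ) * ρ^2 * ℓ := by linarith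
    calc (0:ℝ) < _ := this
      _ ≤ β E := hco
  -- (2) strict difference for x < y
  have hdiff : ∀ x ∈ Icc E₁ E₂, ∀ y ∈ Icc E₁ E₂, x < y → 0 < β x - β y := by
    intro x hx y hy hxy
    have haD : (0:ℝ) ≤ (2*(x-ec))^(-(1/2):ℝ) - (2*(y-ec))^(-(1/2):ℝ) := by
      have h1 := psiD_lb hm₀ hgap hx hy hxy.le
      have h2 : (0:ℝ) ≤ (2*(E₂-ec))^(-(3/2):ℝ) * (y - x) :=
        mul_nonneg (Real.rpow_nonneg (by nlinarith [hgap E₂ (right_mem_Icc.mpr h12)]) _)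
          (by linarith)
      linarith
    have hMD : (0:ℝ) ≤ (3 * m₀ ^ (-(5/2):ℝ)) * (y - x) * ρ^2 :=
      mul_nonneg (mul_nonneg (mul_nonneg (by norm_num) (Real.rpow_nonneg hm₀.le _))
        (by linarith)) (sq_nonneg ρ)
    have hGWc : ContinuousOn
        (fun t => (fun ζ : ℂ => (2*((x:ℂ)-ζ))^((1:ℂ)/2) - (2*((y:ℂ)-ζ))^((1:ℂ)/2)) (W t))
        (Icc (0:ℝ) 1) := (hcont x hx).sub (hcont y hy)
    have hco := core
      (G := fun ζ : ℂ => (2*((x:ℂ)-ζ))^((1:ℂ)/2) - (2*((y:ℂ)-ζ))^((1:ℂ)/2))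
      (a := (2*(x-ec))^(-(1/2):ℝ) - (2*(y-ec))^(-(1/2):ℝ))
      (M := (3 * m₀ ^ (-(5/2):ℝ)) * (y - x))
      hZ hdZc hcl hlen hWc hWb hγint haD (by linarith) hGWc
      (fun z hz => keyD hm₀ hρ0 hρm h12 hgap hx hy hxy.le hz)
    have hsplit : (∫ t in (0:ℝ)..1,
          ((2*((x:ℂ) - W t))^((1:ℂ)/2) - (2*((y:ℂ) - W t))^((1:ℂ)/2)) * dZ t)
        = (∫ t in (0:ℝ)..1, (2*((x:ℂ) - W t))^((1:ℂ)/2) * dZ t)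
          - (∫ t in (0:ℝ)..1, (2*((y:ℂ) - W t))^((1:ℂ)/2) * dZ t) := by
      rw [← intervalIntegral.integral_sub (hII x hx) (hII y hy)]
      congr 1; funext t; ring
    have him : (∫ t in (0:ℝ)..1,
          ((2*((x:ℂ) - W t))^((1:ℂ)/2) - (2*((y:ℂ) - W t))^((1:ℂ)/2)) * dZ t).im
        = β x - β y := by rw [hsplit, Complex.sub_im]
    rw [← him]
    have hlow := psiD_lb hm₀ hgap hx hy hxy.le
    have h3 : (2*(E₂-ec))^(-(3/2):ℝ) * (y-x) * γ
        ≤ ((2*(x-ec))^(-(1/2):ℝ) - (2*(y-ec))^(-(1/2):ℝ)) * γ :=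
      mul_le_mul_of_nonneg_right hlow hγ.le
    have h4 : (3*m₀^(-(5/2):ℝ) * ρ^2 * ℓ) * (y-x) < ((2*(E₂-ec))^(-(3/2):ℝ) * γ) * (y-x) :=
      mul_lt_mul_of_pos_right hs2 (by linarith)
    have h5 : 0 < ((2*(x-ec))^(-(1/2):ℝ) - (2*(y-ec))^(-(1/2):ℝ)) * γ
        - (3 * m₀ ^ (-(5/2):ℝ)) * (y - x) * ρ^2 * ℓ := by nlinarith
    calc (0:ℝ) < _ := h5
      _ ≤ _ := hco
  refine ⟨hpos1, ?_, ?_⟩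
  · intro x hx y hy hxy
    have := hdiff x hx y hy hxy
    simp only [hβ] at this ⊢
    linarith
  · -- strict convexity
    refine strictConvexOn_of_slope_strict_mono_adjacent (convex_Icc E₁ E₂) ?_
    intro x y z hx hz hxy hyz
    have hy : y ∈ Icc E₁ E₂ := ⟨le_trans hx.1 hxy.le, le_trans hyz.le hz.2⟩
    -- second divided difference of β is positive
    have haC : (0:ℝ) ≤ (z-y) * (2*(x-ec))^(-(1/2):ℝ) - (z-x) * (2*(y-ec))^(-(1/2):ℝ)
        + (y-x) * (2*(z-ec))^(-(1/2):ℝ) := by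
      have h1 := psiC_lb hm₀ hgap hx hy hz hxy.le hyz.le
      have h2 : (0:ℝ) ≤ (3*(2*(E₂-ec))^(-(5/2):ℝ)) / 2 * ((z-y)*(y-x)*(z-x)) := by
        have := Real.rpow_nonneg (x := 2*(E₂-ec))
          (by nlinarith [hgap E₂ (right_mem_Icc.mpr h12)]) (-(5/2):ℝ)
        have hzz : (0:ℝ) ≤ (z-y)*(y-x)*(z-x) :=
          mul_nonneg (mul_nonneg (by linarith) (by linarith)) (by linarith)
        positivity
      linarith
    have hMC : (0:ℝ) ≤ (15 * m₀ ^ (-(7/2):ℝ)) * ((z-y) * (y-x) * (z-x)) * ρ^2 := by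
      have h1 : (0:ℝ) ≤ m₀ ^ (-(7/2):ℝ) := Real.rpow_nonneg hm₀.le _
      have hzz : (0:ℝ) ≤ (z-y)*(y-x)*(z-x) :=
        mul_nonneg (mul_nonneg (by linarith) (by linarith)) (by linarith)
      positivity
    have hGWc : ContinuousOn (fun t =>
        (fun ζ : ℂ => ((z-y:ℝ):ℂ) * (2*((x:ℂ)-ζ))^((1:ℂ)/2)
          - ((z-x:ℝ):ℂ) * (2*((y:ℂ)-ζ))^((1:ℂ)/2)
          + ((y-x:ℝ):ℂ) * (2*((z:ℂ)-ζ))^((1:ℂ)/2)) (W t)) (Icc (0:ℝ) 1) :=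
      ((continuousOn_const.mul (hcont x hx)).sub
        (continuousOn_const.mul (hcont y hy))).add
        (continuousOn_const.mul (hcont z hz))
    have hco := core
      (G := fun ζ : ℂ => ((z-y:ℝ):ℂ) * (2*((x:ℂ)-ζ))^((1:ℂ)/2)
          - ((z-x:ℝ):ℂ) * (2*((y:ℂ)-ζ))^((1:ℂ)/2)
          + ((y-x:ℝ):ℂ) * (2*((z:ℂ)-ζ))^((1:ℂ)/2))
      (a := (z-y) * (2*(x-ec))^(-(1/2):ℝ) - (z-x) * (2*(y-ec))^(-(1/2):ℝ)
          + (y-x) * (2*(z-ec))^(-(1/2):ℝ))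
      (M := (15 * m₀ ^ (-(7/2):ℝ)) * ((z-y) * (y-x) * (z-x)))
      hZ hdZc hcl hlen hWc hWb hγint haC (by linarith) hGWc
      (fun ζ hζ => keyC hm₀ hρ0 hρm hgap hx hy hz hxy.le hyz.le hζ)
    have hsplit : (∫ t in (0:ℝ)..1,
          (((z-y:ℝ):ℂ) * (2*((x:ℂ) - W t))^((1:ℂ)/2)
            - ((z-x:ℝ):ℂ) * (2*((y:ℂ) - W t))^((1:ℂ)/2)
            + ((y-x:ℝ):ℂ) * (2*((z:ℂ) - W t))^((1:ℂ)/2)) * dZ t)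
        = ((z-y:ℝ):ℂ) * (∫ t in (0:ℝ)..1, (2*((x:ℂ) - W t))^((1:ℂ)/2) * dZ t)
          - ((z-x:ℝ):ℂ) * (∫ t in (0:ℝ)..1, (2*((y:ℂ) - W t))^((1:ℂ)/2) * dZ t)
          + ((y-x:ℝ):ℂ) * (∫ t in (0:ℝ)..1, (2*((z:ℂ) - W t))^((1:ℂ)/2) * dZ t) := by
      rw [← intervalIntegral.integral_const_mul, ← intervalIntegral.integral_const_mul,
        ← intervalIntegral.integral_const_mul,
        ← intervalIntegral.integral_sub ((hII x hx).const_mul _) ((hII y hy).const_mul _),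
        ← intervalIntegral.integral_add
          (((hII x hx).const_mul _).sub ((hII y hy).const_mul _)) ((hII z hz).const_mul _)]
      congr 1; funext t; ring
    have him : (∫ t in (0:ℝ)..1,
          (((z-y:ℝ):ℂ) * (2*((x:ℂ) - W t))^((1:ℂ)/2)
            - ((z-x:ℝ):ℂ) * (2*((y:ℂ) - W t))^((1:ℂ)/2)
            + ((y-x:ℝ):ℂ) * (2*((z:ℂ) - W t))^((1:ℂ)/2)) * dZ t).im
        = (z-y) * β x - (z-x) * β y + (y-x) * β z := by
      rw [hsplit]
      simp only [Complex.add_im, Complex.sub_im, Complex.mul_im, Complex.ofReal_re,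
        Complex.ofReal_im, zero_mul, add_zero]
      rfl
    have hT : 0 < (z-y) * β x - (z-x) * β y + (y-x) * β z := by
      rw [← him]
      have h1 := psiC_lb hm₀ hgap hx hy hz hxy.le hyz.le
      have h3 : (3*(2*(E₂-ec))^(-(5/2):ℝ)) / 2 * ((z-y)*(y-x)*(z-x)) * γ
          ≤ ((z-y) * (2*(x-ec))^(-(1/2):ℝ) - (z-x) * (2*(y-ec))^(-(1/2):ℝ)
            + (y-x) * (2*(z-ec))^(-(1/2):ℝ)) * γ :=
        mul_le_mul_of_nonneg_right h1 hγ.le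
      have hP : (0:ℝ) < (z-y)*(y-x)*(z-x) :=
        mul_pos (mul_pos (by linarith) (by linarith)) (by linarith)
      have h4 : (15*m₀^(-(7/2):ℝ) * ρ^2 * ℓ) * ((z-y)*(y-x)*(z-x))
          < ((3*(2*(E₂-ec))^(-(5/2):ℝ))/2 * γ) * ((z-y)*(y-x)*(z-x)) :=
        mul_lt_mul_of_pos_right hs3 hP
      have h5 : 0 < ((z-y) * (2*(x-ec))^(-(1/2):ℝ) - (z-x) * (2*(y-ec))^(-(1/2):ℝ)
            + (y-x) * (2*(z-ec))^(-(1/2):ℝ)) * γ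
          - (15 * m₀ ^ (-(7/2):ℝ)) * ((z-y) * (y-x) * (z-x)) * ρ^2 * ℓ := by nlinarith
      calc (0:ℝ) < _ := h5
        _ ≤ _ := hco
    rw [div_lt_div_iff₀ (by linarith) (by linarith)]
    have hexp : ((z-y) * β x - (z-x) * β y + (y-x) * β z)
        = (β z - β y) * (y - x) - (β y - β x) * (z - y) := by ring
    simp only [hβ] at hT ⊢
    nlinarith [hT]


lemma small_helper {M κ c K L δ : ℝ} (hκ : 0 < κ) (hc : 0 < c)
    (hK : 0 < K) (hL : 0 < L) (hδ : 0 < δ) (hM : 0 < M)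
    (hδle : δ ≤ κ * c / (2 * (M * K ^ 2 * L))) :
    M * (K * δ) ^ 2 * (L * δ) < κ * (c * δ ^ 2) := by
  have hden : 0 < M * K ^ 2 * L := by positivity
  have h1 : M * K ^ 2 * L * δ ≤ κ * c / 2 := by
    calc M * K ^ 2 * L * δ ≤ M * K ^ 2 * L * (κ * c / (2 * (M * K ^ 2 * L))) :=
          mul_le_mul_of_nonneg_left hδle hden.le
      _ = κ * c / 2 := by field_simp
  have h2 : (M * K ^ 2 * L * δ) * δ ^ 2 ≤ (κ * c / 2) * δ ^ 2 :=
    mul_le_mul_of_nonneg_right h1 (sq_nonneg δ)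
  have h3 : (κ * c / 2) * δ ^ 2 < κ * c * δ ^ 2 := by
    have := mul_pos (mul_pos hκ hc) (pow_pos hδ 2)
    nlinarith
  nlinarith

end Stmt9

/-- Same setting as Statement 7, and assume in addition that
`Γ₀(δ) := −Im ∫₀¹ w ζ′ dt` satisfies `c₁δ² ≤ Γ₀(δ) ≤ c₂δ²` on `(0,δ₀]`.
Then there exists `δ₁ ∈ (0,δ₀]` such that for every `δ ∈ (0,δ₁]` the function
`β(E) := Im ∫₀¹ √(2(E−w)) ζ′ dt` is positive, strictly decreasing, and strictly
convex on Δ. -/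
theorem stmt_9 (E₁ E₂ ec m₀ L K δ₀ : ℝ)
    (h12 : E₁ ≤ E₂) (hm₀ : 0 < m₀) (hgap : ∀ E ∈ Set.Icc E₁ E₂, m₀ ≤ E - ec)
    (hL : 0 < L) (hK : 0 < K) (hδ₀ : 0 < δ₀)
    (ζ dζ w : ℝ → ℝ → ℂ)
    (hdata : ∀ δ ∈ Set.Ioc (0 : ℝ) δ₀,
      (∀ t ∈ Set.Icc (0 : ℝ) 1,
        HasDerivWithinAt (ζ δ) (dζ δ t) (Set.Icc (0 : ℝ) 1) t) ∧
      ContinuousOn (dζ δ) (Set.Icc (0 : ℝ) 1) ∧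
      ζ δ 0 = ζ δ 1 ∧
      (∫ t in (0 : ℝ)..1, ‖dζ δ t‖) ≤ L * δ ∧
      ContinuousOn (w δ) (Set.Icc (0 : ℝ) 1) ∧
      (∀ t ∈ Set.Icc (0 : ℝ) 1, ‖w δ t - (ec : ℂ)‖ ≤ K * δ))
    (c₁ c₂ : ℝ) (hc₁ : 0 < c₁) (hc₁₂ : c₁ ≤ c₂)
    (hΓ : ∀ δ ∈ Set.Ioc (0 : ℝ) δ₀,
      c₁ * δ ^ 2 ≤ -(∫ t in (0 : ℝ)..1, w δ t * dζ δ t).im ∧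
      -(∫ t in (0 : ℝ)..1, w δ t * dζ δ t).im ≤ c₂ * δ ^ 2) :
    ∃ δ₁ ∈ Set.Ioc (0 : ℝ) δ₀, ∀ δ ∈ Set.Ioc (0 : ℝ) δ₁,
      (∀ E ∈ Set.Icc E₁ E₂,
        0 < (∫ t in (0 : ℝ)..1, (2 * ((E : ℂ) - w δ t)) ^ ((1 : ℂ) / 2) * dζ δ t).im) ∧
      StrictAntiOn
        (fun E : ℝ =>
          (∫ t in (0 : ℝ)..1, (2 * ((E : ℂ) - w δ t)) ^ ((1 : ℂ) / 2) * dζ δ t).im)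
        (Set.Icc E₁ E₂) ∧
      StrictConvexOn ℝ (Set.Icc E₁ E₂)
        (fun E : ℝ =>
          (∫ t in (0 : ℝ)..1, (2 * ((E : ℂ) - w δ t)) ^ ((1 : ℂ) / 2) * dζ δ t).im) := by
  have hB : 0 < 2 * (E₂ - ec) := by
    have := hgap E₂ (Set.right_mem_Icc.mpr h12); nlinarith
  set κP : ℝ := (2*(E₂-ec))^(-(1/2):ℝ) with hκP
  set κD : ℝ := (2*(E₂-ec))^(-(3/2):ℝ) with hκD
  set κC : ℝ := 3*(2*(E₂-ec))^(-(5/2):ℝ)/2 with hκC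
  set MP : ℝ := m₀^(-(3/2):ℝ) with hMP
  set MD : ℝ := 3*m₀^(-(5/2):ℝ) with hMD
  set MC : ℝ := 15*m₀^(-(7/2):ℝ) with hMC
  have hκP0 : 0 < κP := Real.rpow_pos_of_pos hB _
  have hκD0 : 0 < κD := Real.rpow_pos_of_pos hB _
  have hκC0 : 0 < κC := by
    have := Real.rpow_pos_of_pos hB (-(5/2):ℝ); rw [hκC]; positivity
  have hMP0 : 0 < MP := Real.rpow_pos_of_pos hm₀ _
  have hMD0 : 0 < MD := by
    have := Real.rpow_pos_of_pos hm₀ (-(5/2):ℝ); rw [hMD]; positivity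
  have hMC0 : 0 < MC := by
    have := Real.rpow_pos_of_pos hm₀ (-(7/2):ℝ); rw [hMC]; positivity
  set δ₁ : ℝ := min δ₀ (min (m₀/(2*K))
    (min (κP*c₁/(2*(MP*K^2*L)))
      (min (κD*c₁/(2*(MD*K^2*L))) (κC*c₁/(2*(MC*K^2*L)))))) with hδ₁
  have hδ₁pos : 0 < δ₁ := by
    refine lt_min hδ₀ (lt_min (by positivity) (lt_min (by positivity)
      (lt_min (by positivity) (by positivity))))
  refine ⟨δ₁, ⟨hδ₁pos, min_le_left _ _⟩, ?_⟩
  intro δ hδ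
  have hδpos : 0 < δ := hδ.1
  have hδδ₀ : δ ∈ Set.Ioc (0:ℝ) δ₀ := ⟨hδpos, le_trans hδ.2 (min_le_left _ _)⟩
  obtain ⟨hZ, hdZc, hcl, hlen, hWc, hWb⟩ := hdata δ hδδ₀
  have hγint := (hΓ δ hδδ₀).1
  have hδle1 : δ ≤ m₀/(2*K) := le_trans hδ.2 (le_trans (min_le_right _ _) (min_le_left _ _))
  have hδle2 : δ ≤ κP*c₁/(2*(MP*K^2*L)) := le_trans hδ.2 (le_trans (min_le_right _ _)
    (le_trans (min_le_right _ _) (min_le_left _ _)))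
  have hδle3 : δ ≤ κD*c₁/(2*(MD*K^2*L)) := le_trans hδ.2 (le_trans (min_le_right _ _)
    (le_trans (min_le_right _ _) (le_trans (min_le_right _ _) (min_le_left _ _))))
  have hδle4 : δ ≤ κC*c₁/(2*(MC*K^2*L)) := le_trans hδ.2 (le_trans (min_le_right _ _)
    (le_trans (min_le_right _ _) (le_trans (min_le_right _ _) (min_le_right _ _))))
  have hρm : 2*(K*δ) ≤ m₀ := by
    have h := (le_div_iff₀ (by positivity : (0:ℝ) < 2*K)).mp hδle1
    nlinarith
  have hs1 : MP*(K*δ)^2*(L*δ) < κP*(c₁*δ^2) :=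
    Stmt9.small_helper hκP0 hc₁ hK hL hδpos hMP0 hδle2
  have hs2 : MD*(K*δ)^2*(L*δ) < κD*(c₁*δ^2) :=
    Stmt9.small_helper hκD0 hc₁ hK hL hδpos hMD0 hδle3
  have hs3 : MC*(K*δ)^2*(L*δ) < κC*(c₁*δ^2) :=
    Stmt9.small_helper hκC0 hc₁ hK hL hδpos hMC0 hδle4
  exact Stmt9.master E₁ E₂ ec m₀ (K*δ) (L*δ) (c₁*δ^2) h12 hm₀ hgap
    (by positivity) hρm (by positivity) (by positivity)
    hZ hdZc hcl hlen hWc hWb hγint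
    (by rw [hMP, hκP] at hs1; exact hs1)
    (by rw [hMD, hκD] at hs2; exact hs2)
    (by rw [hMC, hκC] at hs3; exact hs3)
end

section
/- Let G : Δ → ℝ be C³ with G ≥ 0, G(E₀) = 0, G′(E₀) = 0, g := G″(E₀) > 0, and E₀ the unique global minimizer of G on Δ. Let d > 0, let Γ₀ : (0,d] → (0,∞) satisfy Γ₀(δ) ≤ Dδ² for some D > 0, and let r : Δ × (0,d] → ℝ be C² in E with |∂ⁿ_E r(E,δ)| ≤ Cδ³ for n = 0,1,2. Define α(E,δ) := G(E) + Γ₀(δ)/k_c(E) + r(E,δ). Then there exist δ₀ ∈ (0,d] and C′ > 0 such that for all δ ∈ (0,δ₀]: α(·,δ) has a unique global minimizer E*(δ) on Δ, E*(δ) lies in the interior of Δ, and |E*(δ) − E₀ − Γ₀(δ)/(g·k_c(E₀)³)| ≤ C′δ³, |α(E*(δ),δ) − Γ₀(δ)/k_c(E₀)| ≤ C′δ³, and |∂²_E α(E*(δ),δ) − g| ≤ C′δ². -/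
open Set
set_option maxHeartbeats 1000000

private lemma seg_mvt {K : Set ℝ} (hconv : Convex ℝ K) {ψ ψ' : ℝ → ℝ}
    (hd : ∀ y ∈ K, HasDerivWithinAt ψ (ψ' y) K y) {x₀ x C : ℝ}
    (hx₀ : x₀ ∈ K) (hx : x ∈ K)
    (hC : ∀ y ∈ K, |y - x₀| ≤ |x - x₀| → |ψ' y| ≤ C) :
    |ψ x - ψ x₀| ≤ C * |x - x₀| := by
  set s : Set ℝ := K ∩ Metric.closedBall x₀ (|x - x₀|) with hs
  have hsub : s ⊆ K := inter_subset_left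
  have h1 : ∀ y ∈ s, HasDerivWithinAt ψ (ψ' y) s y :=
    fun y hy => (hd y (hsub hy)).mono hsub
  have h2 : ∀ y ∈ s, ‖ψ' y‖ ≤ C := by
    intro y hy
    rw [Real.norm_eq_abs]
    exact hC y (hsub hy) (by simpa [Real.dist_eq] using hy.2)
  have h3 : Convex ℝ s := hconv.inter (convex_closedBall _ _)
  have hx₀s : x₀ ∈ s := ⟨hx₀, by simp⟩
  have hxs : x ∈ s := ⟨hx, by simp [Real.dist_eq]⟩
  simpa [Real.norm_eq_abs] using
    h3.norm_image_sub_le_of_norm_hasDerivWithin_le h1 h2 hx₀s hxs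

/-- Δ = [E₁,E₂] with interior point E₀; `E − e_c ≥ m₀ > 0` on Δ, `k_c(E) := √(2(E−e_c))`.
`G` is C³ with `G ≥ 0`, `G(E₀) = 0`, `G′(E₀) = 0`, `g := G″(E₀) > 0` and `E₀` the
unique global minimizer; `Γ₀ : (0,d] → (0,∞)` with `Γ₀(δ) ≤ Dδ²`; `r` is C² in `E`
with `|∂ⁿ_E r| ≤ Cδ³` for `n = 0,1,2`; `α(E,δ) := G(E) + Γ₀(δ)/k_c(E) + r(E,δ)`.
Then there are `δ₀ ∈ (0,d]` and `C′ > 0` such that for `δ ∈ (0,δ₀]`: `α(·,δ)` has a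
unique interior global minimizer `E*(δ)` with
`|E*(δ) − E₀ − Γ₀(δ)/(g k_c(E₀)³)| ≤ C′δ³`, `|α(E*(δ),δ) − Γ₀(δ)/k_c(E₀)| ≤ C′δ³`,
and `|∂²_E α(E*(δ),δ) − g| ≤ C′δ²`. -/
theorem stmt_13 (E₁ E₂ E₀ : ℝ) (hE₀ : E₀ ∈ Set.Ioo E₁ E₂)
    (ec m₀ : ℝ) (hm₀ : 0 < m₀) (hgap : ∀ E ∈ Set.Icc E₁ E₂, m₀ ≤ E - ec)
    (G : ℝ → ℝ) (hG : ContDiffOn ℝ 3 G (Set.Icc E₁ E₂))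
    (hGnn : ∀ E ∈ Set.Icc E₁ E₂, 0 ≤ G E) (hG0 : G E₀ = 0)
    (hG1 : derivWithin G (Set.Icc E₁ E₂) E₀ = 0)
    (g : ℝ) (hg : iteratedDerivWithin 2 G (Set.Icc E₁ E₂) E₀ = g) (hgpos : 0 < g)
    (hGuniq : ∀ E ∈ Set.Icc E₁ E₂, E ≠ E₀ → G E₀ < G E)
    (d D : ℝ) (hd : 0 < d) (hD : 0 < D)
    (Γ₀ : ℝ → ℝ) (hΓ : ∀ δ ∈ Set.Ioc (0 : ℝ) d, 0 < Γ₀ δ ∧ Γ₀ δ ≤ D * δ ^ 2)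
    (r : ℝ → ℝ → ℝ) (Cr : ℝ)
    (hr : ∀ δ ∈ Set.Ioc (0 : ℝ) d,
      ContDiffOn ℝ 2 (fun E => r E δ) (Set.Icc E₁ E₂) ∧
      ∀ E ∈ Set.Icc E₁ E₂, ∀ n : ℕ, n ≤ 2 →
        |iteratedDerivWithin n (fun E' => r E' δ) (Set.Icc E₁ E₂) E| ≤ Cr * δ ^ 3) :
    ∃ δ₀ ∈ Set.Ioc (0 : ℝ) d, ∃ C' : ℝ, 0 < C' ∧
      ∀ δ ∈ Set.Ioc (0 : ℝ) δ₀, ∃ Estar ∈ Set.Ioo E₁ E₂,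
        (∀ E ∈ Set.Icc E₁ E₂, E ≠ Estar →
          G Estar + Γ₀ δ / Real.sqrt (2 * (Estar - ec)) + r Estar δ <
            G E + Γ₀ δ / Real.sqrt (2 * (E - ec)) + r E δ) ∧
        |Estar - E₀ - Γ₀ δ / (g * Real.sqrt (2 * (E₀ - ec)) ^ 3)| ≤ C' * δ ^ 3 ∧
        |(G Estar + Γ₀ δ / Real.sqrt (2 * (Estar - ec)) + r Estar δ) -
            Γ₀ δ / Real.sqrt (2 * (E₀ - ec))| ≤ C' * δ ^ 3 ∧
        |iteratedDerivWithin 2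
            (fun E => G E + Γ₀ δ / Real.sqrt (2 * (E - ec)) + r E δ)
            (Set.Icc E₁ E₂) Estar - g| ≤ C' * δ ^ 2 := by
  obtain ⟨hE₁0, hE₀2⟩ := hE₀
  have hE12 : E₁ < E₂ := hE₁0.trans hE₀2
  set K : Set ℝ := Set.Icc E₁ E₂ with hKdef
  have hUD : UniqueDiffOn ℝ K := uniqueDiffOn_Icc hE12
  have hKconv : Convex ℝ K := convex_Icc _ _
  have hKcomp : IsCompact K := isCompact_Icc
  have hE₀K : E₀ ∈ K := ⟨hE₁0.le, hE₀2.le⟩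
  -- sqrt facts
  set s₀ : ℝ := Real.sqrt (2*m₀) with hs₀def
  have hs₀ : 0 < s₀ := Real.sqrt_pos.mpr (by linarith)
  have hsge : ∀ E ∈ K, s₀ ≤ Real.sqrt (2*(E-ec)) := fun E hE =>
    Real.sqrt_le_sqrt (by nlinarith [hgap E hE])
  have hspos : ∀ E ∈ K, 0 < Real.sqrt (2*(E-ec)) := fun E hE => lt_of_lt_of_le hs₀ (hsge E hE)
  have hsinvpos : ∀ E ∈ K, 0 < (Real.sqrt (2*(E-ec)))⁻¹ := fun E hE => inv_pos.mpr (hspos E hE)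
  have hsinvle : ∀ E ∈ K, (Real.sqrt (2*(E-ec)))⁻¹ ≤ s₀⁻¹ := fun E hE =>
    inv_anti₀ hs₀ (hsge E hE)
  -- derivative of sqrt(2(E-ec))
  have hsq : ∀ x ∈ K, HasDerivAt (fun E => Real.sqrt (2*(E-ec)))
      ((Real.sqrt (2*(x-ec)))⁻¹) x := by
    intro x hx
    have hpos : 0 < 2*(x-ec) := by nlinarith [hgap x hx]
    have hu : HasDerivAt (fun E : ℝ => 2*(E-ec)) 2 x := by
      simpa using ((hasDerivAt_id x).sub_const ec).const_mul (2:ℝ)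
    have h := (Real.hasDerivAt_sqrt hpos.ne').comp x hu
    have key : ∀ t : ℝ, t ≠ 0 → 1/(2*t) * 2 = t⁻¹ := by
      intro t ht; field_simp <;> ring
    rw [← key _ (Real.sqrt_pos.mpr hpos).ne']
    exact h
  have hFd : ∀ x ∈ K, HasDerivAt (fun E => (Real.sqrt (2*(E-ec)))⁻¹)
      (-((Real.sqrt (2*(x-ec)))⁻¹)^3) x := by
    intro x hx
    have hne : Real.sqrt (2*(x-ec)) ≠ 0 := (hspos x hx).ne'
    have h := (hsq x hx).inv hne
    have key : ∀ t : ℝ, t ≠ 0 → -t⁻¹ / t^2 = -(t⁻¹)^3 := by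
      intro t ht; field_simp <;> ring
    rw [← key _ hne]
    exact h
  have hF'd : ∀ x ∈ K, HasDerivAt (fun E => -((Real.sqrt (2*(E-ec)))⁻¹)^3)
      (3*((Real.sqrt (2*(x-ec)))⁻¹)^5) x := by
    intro x hx
    have hne : Real.sqrt (2*(x-ec)) ≠ 0 := (hspos x hx).ne'
    have hcube : HasDerivAt (fun E => (Real.sqrt (2*(E-ec)))^3)
        ((3:ℕ) * (Real.sqrt (2*(x-ec)))^(3-1) * (Real.sqrt (2*(x-ec)))⁻¹) x :=
      (hsq x hx).pow 3
    have h := (hcube.inv (by positivity)).neg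
    have hfeq : (fun E => -(((Real.sqrt (2*(E-ec)))^3)⁻¹))
        = (fun E => -((Real.sqrt (2*(E-ec)))⁻¹)^3) := by
      funext E; rw [← inv_pow]
    rw [show (-(fun E => (Real.sqrt (2*(E-ec)))^3)⁻¹) = (fun E => -((Real.sqrt (2*(E-ec)))⁻¹)^3) from hfeq] at h
    have key : ∀ t : ℝ, t ≠ 0 → 3*(t⁻¹)^5 = -(-((3:ℕ) * t^(3-1) * t⁻¹) / (t^3)^2) := by
      intro t ht; field_simp <;> ring
    rw [key _ hne]
    exact h
  -- G derivatives
  have hGdiff : DifferentiableOn ℝ G K := hG.differentiableOn (by norm_num)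
  set G1 : ℝ → ℝ := derivWithin G K with hG1def
  set G2 : ℝ → ℝ := iteratedDerivWithin 2 G K with hG2def
  set G3 : ℝ → ℝ := iteratedDerivWithin 3 G K with hG3def
  have hG1d : ∀ x ∈ K, HasDerivWithinAt G (G1 x) K x := fun x hx =>
    (hGdiff x hx).hasDerivWithinAt
  have hG2d : ∀ x ∈ K, HasDerivWithinAt G1 (G2 x) K x := by
    intro x hx
    have hdiff : DifferentiableOn ℝ (iteratedDerivWithin 1 G K) K :=
      hG.differentiableOn_iteratedDerivWithin (by norm_num) hUD
    have h1 := (hdiff x hx).hasDerivWithinAt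
    rw [← iteratedDerivWithin_succ] at h1
    exact h1.congr (fun y hy => (congrFun iteratedDerivWithin_one y).symm)
      (congrFun iteratedDerivWithin_one x).symm
  have hG3d : ∀ x ∈ K, HasDerivWithinAt G2 (G3 x) K x := by
    intro x hx
    have hdiff : DifferentiableOn ℝ (iteratedDerivWithin 2 G K) K :=
      hG.differentiableOn_iteratedDerivWithin (by norm_num) hUD
    have h1 := (hdiff x hx).hasDerivWithinAt
    rw [← iteratedDerivWithin_succ] at h1
    exact h1
  -- bound on third derivative
  have hG3c : ContinuousOn G3 K := by
    rw [hG3def]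
    exact hG.continuousOn_iteratedDerivWithin (by norm_num) hUD
  obtain ⟨M0, hM0b⟩ := hKcomp.exists_bound_of_continuousOn hG3c
  set M : ℝ := max M0 0 with hMdef
  have hM0 : 0 ≤ M := le_max_right _ _
  have hM : ∀ x ∈ K, |G3 x| ≤ M := fun x hx =>
    le_trans (by simpa using hM0b x hx) (le_max_left _ _)
  clear_value M
  -- Taylor bounds
  have hT2 : ∀ E ∈ K, |G2 E - g| ≤ M * |E - E₀| := by
    intro E hE
    have h := seg_mvt hKconv hG3d hE₀K hE (C := M) (fun y hy _ => hM y hy)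
    calc |G2 E - g| = |G2 E - G2 E₀| := by rw [hg]
    _ ≤ M * |E - E₀| := h
  have hT1 : ∀ E ∈ K, |G1 E - g*(E - E₀)| ≤ M * |E - E₀| * |E - E₀| := by
    intro E hE
    have hd : ∀ y ∈ K, HasDerivWithinAt (fun z => G1 z - g*(z - E₀)) (G2 y - g) K y := by
      intro y hy
      have h2 : HasDerivWithinAt (fun z : ℝ => g*(z - E₀)) g K y := by
        simpa using ((((hasDerivAt_id y).sub_const E₀).const_mul g).hasDerivWithinAt
          (s := K))
      exact (hG2d y hy).sub h2
    have hC : ∀ y ∈ K, |y - E₀| ≤ |E - E₀| → |G2 y - g| ≤ M * |E - E₀| := fun y hy hle =>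
      le_trans (hT2 y hy) (mul_le_mul_of_nonneg_left hle hM0)
    have h := seg_mvt hKconv hd hE₀K hE hC
    simpa [hG1] using h
  have hT0 : ∀ E ∈ K, |G E - g/2*(E - E₀)^2| ≤ M * |E - E₀| * |E - E₀| * |E - E₀| := by
    intro E hE
    have hd : ∀ y ∈ K, HasDerivWithinAt (fun z => G z - g/2*(z - E₀)^2)
        (G1 y - g*(y - E₀)) K y := by
      intro y hy
      have h2 : HasDerivAt (fun z : ℝ => g/2*(z - E₀)^2) (g*(y - E₀)) y := by
        have := (((hasDerivAt_id y).sub_const E₀).pow 2).const_mul (g/2)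
        refine this.congr_deriv ?_
        simp only [id_eq]
        push_cast
        ring
      exact (hG1d y hy).sub h2.hasDerivWithinAt
    have hC : ∀ y ∈ K, |y - E₀| ≤ |E - E₀| →
        |G1 y - g*(y - E₀)| ≤ M * |E - E₀| * |E - E₀| := by
      intro y hy hle
      refine le_trans (hT1 y hy) ?_
      have h1 : M * |y - E₀| ≤ M * |E - E₀| := mul_le_mul_of_nonneg_left hle hM0
      exact mul_le_mul h1 hle (abs_nonneg _) (by positivity)
    have h := seg_mvt hKconv hd hE₀K hE hC
    simpa [hG0] using h
  -- the neighborhood radius η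
  set η : ℝ := min (min ((E₀ - E₁)/2) ((E₂ - E₀)/2)) (g/(4*(M+1))) with hηdef
  have hη0 : 0 < η := lt_min (lt_min (by linarith) (by linarith)) (by positivity)
  have hηa : E₁ < E₀ - η := by
    have h1 : η ≤ (E₀ - E₁)/2 := le_trans (min_le_left _ _) (min_le_left _ _)
    linarith
  have hηb : E₀ + η < E₂ := by
    have h1 : η ≤ (E₂ - E₀)/2 := le_trans (min_le_left _ _) (min_le_right _ _)
    linarith
  have hηM : M * η ≤ g/4 := by
    have h1 : η ≤ g/(4*(M+1)) := min_le_right _ _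
    have h2 : M * η ≤ M * (g/(4*(M+1))) := mul_le_mul_of_nonneg_left h1 hM0
    have h3 : M * (g/(4*(M+1))) ≤ g/4 := by
      rw [show M * (g/(4*(M+1))) = g*M/(4*(M+1)) by ring,
        div_le_div_iff₀ (by positivity) (by norm_num : (0:ℝ) < 4)]
      nlinarith
    linarith
  clear_value η
  have habK : Set.Icc (E₀ - η) (E₀ + η) ⊆ K := by
    rw [hKdef]
    exact Icc_subset_Icc (by linarith) (by linarith)
  -- minimum of G outside the neighborhood
  set Kout : Set ℝ := K ∩ (Iic (E₀ - η) ∪ Ici (E₀ + η)) with hKoutdef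
  have hKoutcomp : IsCompact Kout := hKcomp.inter_right ((isClosed_Iic).union isClosed_Ici)
  have hKoutne : Kout.Nonempty := by
    refine ⟨E₁, ?_, Or.inl ?_⟩
    · rw [hKdef]; exact left_mem_Icc.mpr hE12.le
    · simp only [mem_Iic]; linarith
  obtain ⟨Em, hEmmem, hEmmin⟩ :=
    hKoutcomp.exists_isMinOn hKoutne (hG.continuousOn.mono inter_subset_left)
  set μ : ℝ := G Em with hμdef
  have hμpos : 0 < μ := by
    have hEmK : Em ∈ K := hEmmem.1
    have hne : Em ≠ E₀ := by
      rcases hEmmem.2 with h | h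
      · simp only [mem_Iic] at h; intro he; rw [he] at h; linarith
      · simp only [mem_Ici] at h; intro he; rw [he] at h; linarith
    have h := hGuniq Em hEmK hne
    rw [hG0] at h
    exact h
  clear_value μ
  -- nonnegativity of Cr
  have hCr0 : 0 ≤ Cr := by
    have h := (hr d ⟨hd, le_refl d⟩).2 E₀ hE₀K 0 (by norm_num)
    nlinarith [abs_nonneg (iteratedDerivWithin 0 (fun E' => r E' d) K E₀), pow_pos hd 3]
  -- bounds on the 1/k_c function
  set B₀ : ℝ := s₀⁻¹ with hB₀def
  set B₁ : ℝ := s₀⁻¹^3 with hB₁def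
  set B₂ : ℝ := 3*s₀⁻¹^5 with hB₂def
  have hB₀pos : 0 < B₀ := by positivity
  have hB₁pos : 0 < B₁ := by positivity
  have hB₂pos : 0 < B₂ := by positivity
  clear_value B₀ B₁ B₂
  have hsinv1 : ∀ E ∈ K, (Real.sqrt (2*(E-ec)))⁻¹ ≤ s₀⁻¹ := by
    intro E hE
    rw [← hB₀def]
    exact hsinvle E hE
  -- smallness threshold
  set P : ℝ := D*B₀ + D*B₁ + D*B₂ + 2*Cr + 1 with hPdef
  have hP : 0 < P := by
    have := mul_pos hD hB₀pos
    have := mul_pos hD hB₁pos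
    have := mul_pos hD hB₂pos
    nlinarith
  clear_value P
  set ε : ℝ := min (g/4) (min (g*η/4) (μ/2)) with hεdef
  have hε : 0 < ε := lt_min (by positivity) (lt_min (by positivity) (by positivity))
  have hεA : ε ≤ g/4 := min_le_left _ _
  have hεB : ε ≤ g*η/4 := le_trans (min_le_right _ _) (min_le_left _ _)
  have hεC : ε ≤ μ/2 := le_trans (min_le_right _ _) (min_le_right _ _)
  clear_value ε
  set δ₀ : ℝ := min d (min 1 (Real.sqrt (ε/P))) with hδ₀def
  have hδ₀pos : 0 < δ₀ := lt_min hd (lt_min one_pos (Real.sqrt_pos.mpr (by positivity)))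
  have hδ₀d : δ₀ ≤ d := min_le_left _ _
  have hδ₀1 : δ₀ ≤ 1 := le_trans (min_le_right _ _) (min_le_left _ _)
  have hδ₀ε : P * δ₀^2 ≤ ε := by
    have h1 : δ₀ ≤ Real.sqrt (ε/P) := le_trans (min_le_right _ _) (min_le_right _ _)
    have h2 : δ₀^2 ≤ ε/P := by
      rw [← Real.le_sqrt hδ₀pos.le (by positivity)]
      exact h1
    calc P*δ₀^2 ≤ P*(ε/P) := mul_le_mul_of_nonneg_left h2 hP.le
    _ = ε := by field_simp
  clear_value δ₀
  -- final constants
  set C₂ : ℝ := 2/g*(D*B₁ + Cr) with hC₂def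
  have hC₂0 : 0 ≤ C₂ := by
    have := mul_pos hD hB₁pos
    have : 0 ≤ D*B₁ + Cr := by linarith
    positivity
  clear_value C₂
  set C₃ : ℝ := (M*C₂^2 + D*B₂*C₂ + Cr)/g with hC₃def
  set C₄ : ℝ := g/2*C₂^2 + M*C₂^2*C₂ + D*B₁*C₂ + Cr with hC₄def
  set C₅ : ℝ := M*C₂ + D*B₂ + Cr with hC₅def
  have hC₃0 : 0 ≤ C₃ := by
    have h1 : 0 ≤ M*C₂^2 := by positivity
    have h2 : 0 ≤ D*B₂*C₂ := by positivity
    positivity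
  have hC₅0 : 0 ≤ C₅ := by
    have h1 : 0 ≤ M*C₂ := by positivity
    have h2 : 0 ≤ D*B₂ := by positivity
    linarith
  clear_value C₃ C₄ C₅
  set C' : ℝ := max (max C₃ C₄) C₅ + 1 with hC'def
  have hC'pos : 0 < C' := by
    have : C₅ ≤ max (max C₃ C₄) C₅ := le_max_right _ _
    linarith
  have hC'₃ : C₃ ≤ C' := by
    have : C₃ ≤ max (max C₃ C₄) C₅ := le_trans (le_max_left _ _) (le_max_left _ _)
    linarith
  have hC'₄ : C₄ ≤ C' := by
    have : C₄ ≤ max (max C₃ C₄) C₅ := le_trans (le_max_right _ _) (le_max_left _ _)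
    linarith
  have hC'₅ : C₅ ≤ C' := by
    have : C₅ ≤ max (max C₃ C₄) C₅ := le_max_right _ _
    linarith
  clear_value C'
  refine ⟨δ₀, ⟨hδ₀pos, hδ₀d⟩, C', hC'pos, ?_⟩
  intro δ hδ
  obtain ⟨hδ0, hδle⟩ := hδ
  have hδd' : δ ∈ Set.Ioc (0:ℝ) d := ⟨hδ0, hδle.trans hδ₀d⟩
  have hδ1 : δ ≤ 1 := hδle.trans hδ₀1
  have hδ32 : δ^3 ≤ δ^2 := pow_le_pow_of_le_one hδ0.le hδ1 (by norm_num)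
  have hδ43 : δ^4 ≤ δ^3 := pow_le_pow_of_le_one hδ0.le hδ1 (by norm_num)
  have hδ63 : δ^6 ≤ δ^3 := pow_le_pow_of_le_one hδ0.le hδ1 (by norm_num)
  have hPδ : P * δ^2 ≤ ε := by
    have h2 : δ^2 ≤ δ₀^2 := pow_le_pow_left₀ hδ0.le hδle 2
    exact le_trans (mul_le_mul_of_nonneg_left h2 hP.le) hδ₀ε
  obtain ⟨hΓpos, hΓle⟩ := hΓ δ hδd'
  obtain ⟨hrC, hrb⟩ := hr δ hδd'
  -- r's derivatives
  set r1 : ℝ → ℝ := derivWithin (fun E => r E δ) K with hr1def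
  set r2 : ℝ → ℝ := iteratedDerivWithin 2 (fun E => r E δ) K with hr2def
  have hr1d : ∀ x ∈ K, HasDerivWithinAt (fun E => r E δ) (r1 x) K x := fun x hx =>
    ((hrC.differentiableOn (by norm_num)) x hx).hasDerivWithinAt
  have hr2d : ∀ x ∈ K, HasDerivWithinAt r1 (r2 x) K x := by
    intro x hx
    have hdiff : DifferentiableOn ℝ (iteratedDerivWithin 1 (fun E => r E δ) K) K :=
      hrC.differentiableOn_iteratedDerivWithin (by norm_num) hUD
    have h1 := (hdiff x hx).hasDerivWithinAt
    rw [← iteratedDerivWithin_succ] at h1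
    rw [hr2def]
    exact h1.congr (fun y hy => by rw [hr1def, iteratedDerivWithin_one])
      (by rw [hr1def, iteratedDerivWithin_one])
  have hrb0 : ∀ E ∈ K, |r E δ| ≤ Cr*δ^3 := by
    intro E hE
    have h := hrb E hE 0 (by norm_num)
    simpa [iteratedDerivWithin_zero] using h
  have hrb1 : ∀ E ∈ K, |r1 E| ≤ Cr*δ^3 := by
    intro E hE
    have h := hrb E hE 1 (by norm_num)
    rw [iteratedDerivWithin_one] at h
    rw [hr1def]
    exact h
  have hrb2 : ∀ E ∈ K, |r2 E| ≤ Cr*δ^3 := by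
    intro E hE
    rw [hr2def]
    exact hrb E hE 2 le_rfl
  clear_value r1 r2
  have hCrδ : Cr*δ^3 ≤ Cr*δ^2 := mul_le_mul_of_nonneg_left hδ32 hCr0
  -- α and its derivatives
  set α : ℝ → ℝ := fun E => G E + Γ₀ δ / Real.sqrt (2*(E - ec)) + r E δ with hαdef
  set α' : ℝ → ℝ := fun E => G1 E + Γ₀ δ * (-((Real.sqrt (2*(E - ec)))⁻¹)^3) + r1 E
    with hα'def
  set α'' : ℝ → ℝ := fun E => G2 E + Γ₀ δ * (3*((Real.sqrt (2*(E - ec)))⁻¹)^5) + r2 E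
    with hα''def
  have hαd : ∀ x ∈ K, HasDerivWithinAt α (α' x) K x := by
    intro x hx
    simp only [hαdef, hα'def]
    have h2 : HasDerivWithinAt (fun E => Γ₀ δ / Real.sqrt (2*(E - ec)))
        (Γ₀ δ * (-((Real.sqrt (2*(x - ec)))⁻¹)^3)) K x := by
      have h := ((hFd x hx).const_mul (Γ₀ δ)).hasDerivWithinAt (s := K)
      exact h.congr (fun y hy => (div_eq_mul_inv _ _)) (div_eq_mul_inv _ _)
    exact ((hG1d x hx).add h2).add (hr1d x hx)
  have hα'd : ∀ x ∈ K, HasDerivWithinAt α' (α'' x) K x := by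
    intro x hx
    simp only [hα'def, hα''def]
    have h2 : HasDerivWithinAt (fun E => Γ₀ δ * (-((Real.sqrt (2*(E - ec)))⁻¹)^3))
        (Γ₀ δ * (3*((Real.sqrt (2*(x - ec)))⁻¹)^5)) K x :=
      ((hF'd x hx).const_mul (Γ₀ δ)).hasDerivWithinAt
    exact ((hG2d x hx).add h2).add (hr2d x hx)
  have hαW : ∀ x ∈ K, derivWithin α K x = α' x := fun x hx =>
    (hαd x hx).derivWithin (hUD x hx)
  have hα2W : ∀ x ∈ K, iteratedDerivWithin 2 α K x = α'' x := by
    intro x hx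
    have h1 : iteratedDerivWithin 2 α K x
        = derivWithin (iteratedDerivWithin 1 α K) K x := congrFun iteratedDerivWithin_succ x
    have h2 : derivWithin (iteratedDerivWithin 1 α K) K x = derivWithin α' K x := by
      apply derivWithin_congr
      · intro y hy
        rw [iteratedDerivWithin_one]
        exact hαW y hy
      · rw [iteratedDerivWithin_one]
        exact hαW x hx
    rw [h1, h2]
    exact (hα'd x hx).derivWithin (hUD x hx)
  have hα'cont : ContinuousOn α' K := fun y hy => ((hα'd y hy).continuousWithinAt)
  have hαcont : ContinuousOn α K := fun y hy => ((hαd y hy).continuousWithinAt)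
  clear_value α α' α''
  -- bounds on the middle terms
  have hmid1 : ∀ E ∈ K, |Γ₀ δ * (-((Real.sqrt (2*(E - ec)))⁻¹)^3)| ≤ D*δ^2*B₁ := by
    intro E hE
    have hv := hsinvpos E hE
    rw [abs_mul, abs_neg, abs_pow, abs_of_pos hv, abs_of_pos hΓpos]
    have h3 : ((Real.sqrt (2*(E-ec)))⁻¹)^3 ≤ B₁ := by
      rw [hB₁def]
      exact pow_le_pow_left₀ hv.le (hsinv1 E hE) 3
    calc Γ₀ δ * ((Real.sqrt (2*(E-ec)))⁻¹)^3 ≤ (D*δ^2) * B₁ :=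
          mul_le_mul hΓle h3 (by positivity) (by positivity)
    _ = D*δ^2*B₁ := by ring
  have hmid2 : ∀ E ∈ K, |Γ₀ δ * (3*((Real.sqrt (2*(E - ec)))⁻¹)^5)| ≤ D*δ^2*B₂ := by
    intro E hE
    have hv := hsinvpos E hE
    rw [abs_mul, abs_of_pos hΓpos, abs_of_pos (by positivity)]
    have h3 : 3*((Real.sqrt (2*(E-ec)))⁻¹)^5 ≤ B₂ := by
      rw [hB₂def]
      have h5 := pow_le_pow_left₀ hv.le (hsinv1 E hE) 5
      linarith only [h5]
    calc Γ₀ δ * (3*((Real.sqrt (2*(E-ec)))⁻¹)^5) ≤ (D*δ^2) * B₂ :=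
          mul_le_mul hΓle h3 (by positivity) (by positivity)
    _ = D*δ^2*B₂ := by ring
  -- smallness facts
  have hsmall : ∀ c : ℝ, c ≤ P → c*δ^2 ≤ ε := by
    intro c hc
    have h := mul_le_mul_of_nonneg_right hc (by positivity : (0:ℝ) ≤ δ^2)
    linarith only [h, hPδ]
  have hP1 : D*B₁ + Cr ≤ P := by
    rw [hPdef]
    linarith only [mul_pos hD hB₀pos, mul_pos hD hB₂pos, hCr0]
  have hP2 : D*B₂ + Cr ≤ P := by
    rw [hPdef]
    linarith only [mul_pos hD hB₀pos, mul_pos hD hB₁pos, hCr0]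
  have hP3 : D*B₀ + 2*Cr ≤ P := by
    rw [hPdef]
    linarith only [mul_pos hD hB₁pos, mul_pos hD hB₂pos]
  have hbound1 : D*δ^2*B₁ + Cr*δ^3 ≤ g*η/4 := by
    have h := hsmall _ hP1
    linarith only [h, hεB, hCrδ]
  have hbound2 : D*δ^2*B₂ + Cr*δ^3 ≤ g/4 := by
    have h := hsmall _ hP2
    linarith only [h, hεA, hCrδ]
  have hbound3 : D*δ^2*B₀ + 2*(Cr*δ^3) ≤ μ/2 := by
    have h := hsmall _ hP3
    linarith only [h, hεC, hCrδ]
  -- convexity on the neighborhood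
  have hIcc : ∀ x ∈ Set.Icc (E₀-η) (E₀+η), g/2 ≤ α'' x := by
    intro x hx
    have hxK := habK hx
    have h1 : |G2 x - g| ≤ g/4 := by
      refine le_trans (hT2 x hxK) ?_
      have hxa : |x - E₀| ≤ η := by
        rw [abs_le]
        exact ⟨by linarith only [hx.1], by linarith only [hx.2]⟩
      linarith only [mul_le_mul_of_nonneg_left hxa hM0, hηM]
    have h2 := abs_le.mp (hmid2 x hxK)
    have h3 := abs_le.mp (hrb2 x hxK)
    have h1' := abs_le.mp h1
    rw [hα''def]
    linarith only [h1'.1, h2.1, h3.1, hbound2]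
  -- endpoints of the neighborhood
  have haK : (E₀-η) ∈ K := habK ⟨le_refl _, by linarith only [hη0]⟩
  have hbK : (E₀+η) ∈ K := habK ⟨by linarith only [hη0], le_refl _⟩
  have hgη : 0 < g*η := mul_pos hgpos hη0
  have hMηη : M*η*η ≤ g/4*η := mul_le_mul_of_nonneg_right hηM hη0.le
  have hsignb : 0 < α' (E₀+η) := by
    have h1 := hT1 (E₀+η) hbK
    have h2 := abs_le.mp (hmid1 (E₀+η) hbK)
    have h3 := abs_le.mp (hrb1 (E₀+η) hbK)
    have he : (E₀+η) - E₀ = η := by ring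
    rw [he, abs_of_pos hη0] at h1
    have h1' := abs_le.mp h1
    rw [hα'def]
    linarith only [h1'.1, h2.1, h3.1, hbound1, hgη, hMηη]
  have hsigna : α' (E₀-η) < 0 := by
    have h1 := hT1 (E₀-η) haK
    have h2 := abs_le.mp (hmid1 (E₀-η) haK)
    have h3 := abs_le.mp (hrb1 (E₀-η) haK)
    have he : (E₀-η) - E₀ = -η := by ring
    rw [he, abs_neg, abs_of_pos hη0] at h1
    have h1' := abs_le.mp h1
    rw [hα'def]
    linarith only [h1'.2, h2.2, h3.2, hbound1, hgη, hMηη]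
  -- the critical point
  have hivt := intermediate_value_Ioo (by linarith only [hη0] : E₀-η ≤ E₀+η)
    (hα'cont.mono habK)
  obtain ⟨Es, hEsIoo, hEs0⟩ := hivt ⟨hsigna, hsignb⟩
  have hEsab : Es ∈ Set.Icc (E₀-η) (E₀+η) := Ioo_subset_Icc_self hEsIoo
  have hEsK : Es ∈ K := habK hEsab
  -- strict monotonicity of α' on the neighborhood
  have hmono : StrictMonoOn α' (Set.Icc (E₀-η) (E₀+η)) := by
    apply strictMonoOn_of_deriv_pos (convex_Icc _ _) (hα'cont.mono habK)
    intro x hx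
    rw [interior_Icc] at hx
    have hxab : x ∈ Set.Icc (E₀-η) (E₀+η) := Ioo_subset_Icc_self hx
    have hxK : x ∈ K := habK hxab
    have hnh : K ∈ nhds x := by
      rw [hKdef]
      exact Icc_mem_nhds (by linarith only [hx.1, hηa]) (by linarith only [hx.2, hηb])
    rw [((hα'd x hxK).hasDerivAt hnh).deriv]
    linarith only [hIcc x hxab, hgpos]
  -- local strict minimum
  have hlocmin : ∀ E ∈ Set.Icc (E₀-η) (E₀+η), E ≠ Es → α Es < α E := by
    intro E hE hne
    rcases lt_or_gt_of_ne hne with hlt | hgt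
    · have hanti : StrictAntiOn α (Set.Icc (E₀-η) Es) := by
        apply strictAntiOn_of_deriv_neg (convex_Icc _ _)
          (hαcont.mono (fun y hy => habK ⟨hy.1, le_trans hy.2 hEsab.2⟩))
        intro x hx
        rw [interior_Icc] at hx
        have hxab : x ∈ Set.Icc (E₀-η) (E₀+η) := ⟨hx.1.le, le_trans hx.2.le hEsab.2⟩
        have hxK : x ∈ K := habK hxab
        have hnh : K ∈ nhds x := by
          rw [hKdef]
          refine Icc_mem_nhds (by linarith only [hx.1, hηa]) ?_
          linarith only [hx.2, hEsIoo.2, hηb]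
        rw [((hαd x hxK).hasDerivAt hnh).deriv]
        have h := hmono hxab hEsab hx.2
        rw [hEs0] at h
        linarith only [h]
      exact hanti ⟨hE.1, hlt.le⟩ ⟨hEsab.1, le_refl _⟩ hlt
    · have hmonoα : StrictMonoOn α (Set.Icc Es (E₀+η)) := by
        apply strictMonoOn_of_deriv_pos (convex_Icc _ _)
          (hαcont.mono (fun y hy => habK ⟨le_trans hEsab.1 hy.1, hy.2⟩))
        intro x hx
        rw [interior_Icc] at hx
        have hxab : x ∈ Set.Icc (E₀-η) (E₀+η) := ⟨le_trans hEsab.1 hx.1.le, hx.2.le⟩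
        have hxK : x ∈ K := habK hxab
        have hnh : K ∈ nhds x := by
          rw [hKdef]
          refine Icc_mem_nhds ?_ (by linarith only [hx.2, hηb])
          linarith only [hx.1, hEsIoo.1, hηa]
        rw [((hαd x hxK).hasDerivAt hnh).deriv]
        have h := hmono hEsab hxab hx.1
        rw [hEs0] at h
        linarith only [h]
      exact hmonoα ⟨le_refl _, hEsab.2⟩ ⟨hgt.le, hE.2⟩ hgt
  -- global strict minimum
  have hglob : ∀ E ∈ K, E ≠ Es → α Es < α E := by
    intro E hE hne
    by_cases hcase : E ∈ Set.Icc (E₀-η) (E₀+η)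
    · exact hlocmin E hcase hne
    · have hEKout : E ∈ Kout := by
        rw [hKoutdef]
        refine ⟨hE, ?_⟩
        rw [Set.mem_Icc, not_and_or] at hcase
        rcases hcase with h | h
        · exact Or.inl (le_of_lt (lt_of_not_ge h))
        · exact Or.inr (le_of_lt (lt_of_not_ge h))
      have hGE : μ ≤ G E := by
        rw [hμdef]
        exact hEmmin hEKout
      have h1 : 0 < Γ₀ δ / Real.sqrt (2*(E - ec)) := div_pos hΓpos (hspos E hE)
      have h2 := abs_le.mp (hrb0 E hE)
      have hE₀ab : E₀ ∈ Set.Icc (E₀-η) (E₀+η) :=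
        ⟨by linarith only [hη0], by linarith only [hη0]⟩
      have h3 : α Es ≤ α E₀ := by
        by_cases he : E₀ = Es
        · rw [he]
        · exact (hlocmin E₀ hE₀ab he).le
      have h4 : α E₀ ≤ D*δ^2*B₀ + Cr*δ^3 := by
        rw [hαdef]
        simp only
        rw [hG0]
        have h5 : Γ₀ δ / Real.sqrt (2*(E₀ - ec)) ≤ D*δ^2*B₀ := by
          rw [div_eq_mul_inv]
          calc Γ₀ δ * (Real.sqrt (2*(E₀-ec)))⁻¹ ≤ (D*δ^2)*B₀ := by
                refine mul_le_mul hΓle ?_ (hsinvpos E₀ hE₀K).le (by positivity)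
                exact hsinvle E₀ hE₀K
          _ = D*δ^2*B₀ := by ring
        have h6 := (abs_le.mp (hrb0 E₀ hE₀K)).2
        linarith only [h5, h6]
      have h9 : μ - Cr*δ^3 ≤ α E := by
        rw [hαdef]
        simp only
        linarith only [h2.1, hGE, h1]
      linarith only [hbound3, hμpos, h3, h4, h9]
  -- crude bound |Es - E₀| ≤ C₂ δ²
  have h0 : G1 Es + Γ₀ δ * (-((Real.sqrt (2*(Es - ec)))⁻¹)^3) + r1 Es = 0 := by
    rw [hα'def] at hEs0
    exact hEs0
  have hΔ : |Es - E₀| ≤ C₂*δ^2 := by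
    have h1 := hT1 Es hEsK
    have h2 := abs_le.mp (hmid1 Es hEsK)
    have h3 := abs_le.mp (hrb1 Es hEsK)
    have hΔη : |Es - E₀| ≤ η := by
      rw [abs_le]
      exact ⟨by linarith only [hEsab.1], by linarith only [hEsab.2]⟩
    have h4 : M* |Es-E₀| * |Es-E₀| ≤ g/4* |Es-E₀| := by
      have hh : M* |Es-E₀| ≤ g/4 :=
        le_trans (mul_le_mul_of_nonneg_left hΔη hM0) hηM
      exact mul_le_mul_of_nonneg_right hh (abs_nonneg _)
    have h5 : |G1 Es| ≤ D*δ^2*B₁ + Cr*δ^3 := by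
      rw [abs_le]
      constructor
      · linarith only [h2.1, h2.2, h3.1, h3.2, h0]
      · linarith only [h2.1, h2.2, h3.1, h3.2, h0]
    have hgabs : g* |Es-E₀| ≤ |G1 Es| + M* |Es-E₀| * |Es-E₀| := by
      have hh := abs_le.mp h1
      rcases abs_cases (Es-E₀) with ⟨he, _⟩ | ⟨he, _⟩
      · rw [he] at hh ⊢
        linarith only [le_abs_self (G1 Es), hh.1, hh.2]
      · rw [he] at hh ⊢
        linarith only [neg_abs_le (G1 Es), hh.1, hh.2]
    have hgC₂ : g/2*C₂ = D*B₁ + Cr := by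
      rw [hC₂def]
      field_simp
    have hgC₂δ : g/2*C₂*δ^2 = (D*B₁ + Cr)*δ^2 := by rw [hgC₂]
    have hnn : (0:ℝ) ≤ g*(C₂*δ^2) :=
      mul_nonneg hgpos.le (mul_nonneg hC₂0 (by positivity))
    have hgine : g* |Es-E₀| ≤ g*(C₂*δ^2) := by
      linarith only [hgabs, h4, h5, hCrδ, hgC₂δ, hnn]
    exact le_of_mul_le_mul_left hgine hgpos
  -- refine the goals
  refine ⟨Es, ⟨by linarith only [hEsIoo.1, hηa], by linarith only [hEsIoo.2, hηb]⟩,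
    ?_, ?_, ?_, ?_⟩
  · -- uniqueness of the global minimizer
    intro E hE hne
    have h := hglob E hE hne
    simpa [hαdef] using h
  · -- first estimate
    set kk := Real.sqrt (2*(E₀ - ec)) with hkkdef
    have hkpos : 0 < kk := hspos E₀ hE₀K
    have hgk : g * (Es - E₀ - Γ₀ δ / (g * kk^3))
        = g*(Es-E₀) - Γ₀ δ * (kk⁻¹)^3 := by
      field_simp
    have hf' : |((Real.sqrt (2*(Es-ec)))⁻¹)^3 - (kk⁻¹)^3| ≤ B₂* |Es-E₀| := by
      have hC : ∀ y ∈ K, |y - E₀| ≤ |Es - E₀| →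
          |3*((Real.sqrt (2*(y - ec)))⁻¹)^5| ≤ B₂ := by
        intro y hy _
        have hv := hsinvpos y hy
        rw [abs_of_pos (by positivity)]
        rw [hB₂def]
        have h5 := pow_le_pow_left₀ hv.le (hsinv1 y hy) 5
        linarith only [h5]
      have h := seg_mvt hKconv
        (fun y hy => (hF'd y hy).hasDerivWithinAt (s := K)) hE₀K hEsK hC
      calc |((Real.sqrt (2*(Es-ec)))⁻¹)^3 - (kk⁻¹)^3|
          = |(-((Real.sqrt (2*(Es-ec)))⁻¹)^3) - (-((Real.sqrt (2*(E₀-ec)))⁻¹)^3)| := by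
            rw [hkkdef, ← abs_neg]
            ring_nf
      _ ≤ B₂* |Es-E₀| := h
    have hdec0 : g*(Es-E₀) - Γ₀ δ*(kk⁻¹)^3
        = -(G1 Es - g*(Es-E₀))
          + Γ₀ δ*(((Real.sqrt (2*(Es-ec)))⁻¹)^3 - (kk⁻¹)^3) - r1 Es := by
      linear_combination h0
    have hmain : |g*(Es-E₀) - Γ₀ δ*(kk⁻¹)^3|
        ≤ M* |Es-E₀| * |Es-E₀| + D*δ^2*(B₂* |Es-E₀|) + Cr*δ^3 := by
      rw [hdec0]
      have t1 := abs_sub (-(G1 Es - g*(Es-E₀))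
          + Γ₀ δ*(((Real.sqrt (2*(Es-ec)))⁻¹)^3 - (kk⁻¹)^3)) (r1 Es)
      have t2 := abs_add_le (-(G1 Es - g*(Es-E₀)))
          (Γ₀ δ*(((Real.sqrt (2*(Es-ec)))⁻¹)^3 - (kk⁻¹)^3))
      have t3 : |Γ₀ δ*(((Real.sqrt (2*(Es-ec)))⁻¹)^3 - (kk⁻¹)^3)|
          ≤ D*δ^2*(B₂* |Es-E₀|) := by
        rw [abs_mul, abs_of_pos hΓpos]
        calc Γ₀ δ * |((Real.sqrt (2*(Es-ec)))⁻¹)^3 - (kk⁻¹)^3|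
            ≤ (D*δ^2)*(B₂* |Es-E₀|) := mul_le_mul hΓle hf' (abs_nonneg _) (by positivity)
        _ = D*δ^2*(B₂* |Es-E₀|) := by ring
      have t4 := hT1 Es hEsK
      have t5 := hrb1 Es hEsK
      rw [abs_neg] at t2
      linarith only [t1, t2, t3, t4, t5]
    have hgC₃ : g*C₃ = M*C₂^2 + D*B₂*C₂ + Cr := by
      rw [hC₃def]
      field_simp
    have hnnM : (0:ℝ) ≤ M*(C₂*δ^2) := mul_nonneg hM0 (mul_nonneg hC₂0 (by positivity))
    have hq1 : M* |Es-E₀| * |Es-E₀| ≤ M*C₂^2*δ^4 := by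
      refine le_trans (mul_le_mul (mul_le_mul_of_nonneg_left hΔ hM0) hΔ
        (abs_nonneg _) hnnM) (le_of_eq (by ring))
    have hq2 : D*δ^2*(B₂* |Es-E₀|) ≤ D*B₂*C₂*δ^4 := by
      have h := mul_le_mul_of_nonneg_left (mul_le_mul_of_nonneg_left hΔ hB₂pos.le)
        (by positivity : (0:ℝ) ≤ D*δ^2)
      exact le_trans h (le_of_eq (by ring))
    have hcoef0 : (0:ℝ) ≤ M*C₂^2 + D*B₂*C₂ := by
      have u1 := mul_nonneg hM0 (sq_nonneg C₂)
      have u2 := mul_nonneg (mul_pos hD hB₂pos).le hC₂0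
      linarith only [u1, u2]
    have hmain2 : |g*(Es-E₀) - Γ₀ δ*(kk⁻¹)^3| ≤ g*C₃*δ^3 := by
      have hq3 := mul_le_mul_of_nonneg_left hδ43 hcoef0
      have hgC₃δ : g*C₃*δ^3 = (M*C₂^2 + D*B₂*C₂ + Cr)*δ^3 := by rw [hgC₃]
      linarith only [hmain, hq1, hq2, hq3, hgC₃δ]
    have habsg : |g * (Es - E₀ - Γ₀ δ / (g * kk^3))|
        = g * |Es - E₀ - Γ₀ δ / (g * kk^3)| := by
      rw [abs_mul, abs_of_pos hgpos]
    rw [hgk] at habsg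
    have hfin : g * |Es - E₀ - Γ₀ δ / (g * kk^3)| ≤ g*C₃*δ^3 := by
      rw [← habsg]
      exact hmain2
    have hC'3 : C₃*δ^3 ≤ C'*δ^3 := mul_le_mul_of_nonneg_right hC'₃ (by positivity)
    have hfin' : g * |Es - E₀ - Γ₀ δ / (g * kk^3)| ≤ g*(C₃*δ^3) := by
      linarith only [hfin]
    exact le_trans (le_of_mul_le_mul_left hfin' hgpos) hC'3
  · -- second estimate
    have hest2 : |α Es - Γ₀ δ / Real.sqrt (2*(E₀ - ec))| ≤ C'*δ^3 := by
      have hdec2 : α Es - Γ₀ δ/(Real.sqrt (2*(E₀-ec)))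
          = (G Es - g/2*(Es-E₀)^2) + g/2*(Es-E₀)^2
            + Γ₀ δ*((Real.sqrt (2*(Es-ec)))⁻¹ - (Real.sqrt (2*(E₀-ec)))⁻¹) + r Es δ := by
        rw [hαdef]
        simp only
        rw [div_eq_mul_inv, div_eq_mul_inv]
        ring
      have hfdiff : |(Real.sqrt (2*(Es-ec)))⁻¹ - (Real.sqrt (2*(E₀-ec)))⁻¹|
          ≤ B₁* |Es-E₀| := by
        have hC : ∀ y ∈ K, |y - E₀| ≤ |Es - E₀| →
            |(-((Real.sqrt (2*(y - ec)))⁻¹)^3)| ≤ B₁ := by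
          intro y hy _
          have hv := hsinvpos y hy
          rw [abs_neg, abs_of_pos (by positivity)]
          rw [hB₁def]
          exact pow_le_pow_left₀ hv.le (hsinv1 y hy) 3
        exact seg_mvt hKconv
          (fun y hy => (hFd y hy).hasDerivWithinAt (s := K)) hE₀K hEsK hC
      have t0 := hT0 Es hEsK
      have t1 : |Γ₀ δ*((Real.sqrt (2*(Es-ec)))⁻¹ - (Real.sqrt (2*(E₀-ec)))⁻¹)|
          ≤ D*δ^2*(B₁* |Es-E₀|) := by
        rw [abs_mul, abs_of_pos hΓpos]
        calc Γ₀ δ * |(Real.sqrt (2*(Es-ec)))⁻¹ - (Real.sqrt (2*(E₀-ec)))⁻¹|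
            ≤ (D*δ^2)*(B₁* |Es-E₀|) := mul_le_mul hΓle hfdiff (abs_nonneg _) (by positivity)
        _ = D*δ^2*(B₁* |Es-E₀|) := by ring
      have t2 := hrb0 Es hEsK
      -- assemble
      have habs : |α Es - Γ₀ δ/(Real.sqrt (2*(E₀-ec)))|
          ≤ |G Es - g/2*(Es-E₀)^2| + g/2*(Es-E₀)^2
            + |Γ₀ δ*((Real.sqrt (2*(Es-ec)))⁻¹ - (Real.sqrt (2*(E₀-ec)))⁻¹)| + |r Es δ| := by
        rw [hdec2]
        have u1 := abs_add_le ((G Es - g/2*(Es-E₀)^2) + g/2*(Es-E₀)^2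
            + Γ₀ δ*((Real.sqrt (2*(Es-ec)))⁻¹ - (Real.sqrt (2*(E₀-ec)))⁻¹)) (r Es δ)
        have u2 := abs_add_le ((G Es - g/2*(Es-E₀)^2) + g/2*(Es-E₀)^2)
            (Γ₀ δ*((Real.sqrt (2*(Es-ec)))⁻¹ - (Real.sqrt (2*(E₀-ec)))⁻¹))
        have u3 := abs_add_le (G Es - g/2*(Es-E₀)^2) (g/2*(Es-E₀)^2)
        have u4 : |g/2*(Es-E₀)^2| = g/2*(Es-E₀)^2 := abs_of_nonneg (by positivity)
        linarith only [u1, u2, u3, u4]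
      -- numeric bounds
      have hsq' : (Es-E₀)^2 = |Es-E₀| * |Es-E₀| := by
        rw [abs_mul_abs_self]
        ring
      have hnnM : (0:ℝ) ≤ M*(C₂*δ^2) := mul_nonneg hM0 (mul_nonneg hC₂0 (by positivity))
      have hnnM2 : (0:ℝ) ≤ M*(C₂*δ^2)*(C₂*δ^2) :=
        mul_nonneg hnnM (mul_nonneg hC₂0 (by positivity))
      have hq1 : |G Es - g/2*(Es-E₀)^2| ≤ M*C₂^2*C₂*δ^6 := by
        refine le_trans t0 ?_
        have b2 := mul_le_mul (mul_le_mul_of_nonneg_left hΔ hM0) hΔ (abs_nonneg _) hnnM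
        have b3 := mul_le_mul b2 hΔ (abs_nonneg _) hnnM2
        exact le_trans b3 (le_of_eq (by ring))
      have hq2 : g/2*(Es-E₀)^2 ≤ g/2*C₂^2*δ^4 := by
        rw [hsq']
        have b := mul_le_mul hΔ hΔ (abs_nonneg _) (mul_nonneg hC₂0 (by positivity))
        have b2 := mul_le_mul_of_nonneg_left b (div_nonneg hgpos.le (by norm_num : (0:ℝ) ≤ 2))
        exact le_trans b2 (le_of_eq (by ring))
      have hq3 : D*δ^2*(B₁* |Es-E₀|) ≤ D*B₁*C₂*δ^4 := by
        have h := mul_le_mul_of_nonneg_left (mul_le_mul_of_nonneg_left hΔ hB₁pos.le)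
          (by positivity : (0:ℝ) ≤ D*δ^2)
        exact le_trans h (le_of_eq (by ring))
      have hC4 : |α Es - Γ₀ δ/(Real.sqrt (2*(E₀-ec)))| ≤ C₄*δ^3 := by
        have w1 : M*C₂^2*C₂*δ^6 ≤ M*C₂^2*C₂*δ^3 :=
          mul_le_mul_of_nonneg_left hδ63 (by positivity)
        have w2 : g/2*C₂^2*δ^4 ≤ g/2*C₂^2*δ^3 :=
          mul_le_mul_of_nonneg_left hδ43 (by positivity)
        have w3 : D*B₁*C₂*δ^4 ≤ D*B₁*C₂*δ^3 :=
          mul_le_mul_of_nonneg_left hδ43 (by positivity)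
        rw [hC₄def]
        linarith only [habs, hq1, hq2, hq3, t1, t2, w1, w2, w3]
      have hC'4 : C₄*δ^3 ≤ C'*δ^3 := mul_le_mul_of_nonneg_right hC'₄ (by positivity)
      linarith only [hC4, hC'4]
    simpa [hαdef] using hest2
  · -- third estimate
    rw [hα2W Es hEsK, hα''def]
    have h1 := hT2 Es hEsK
    have h2 := hmid2 Es hEsK
    have h3 := hrb2 Es hEsK
    have habs : |G2 Es + Γ₀ δ * (3*((Real.sqrt (2*(Es - ec)))⁻¹)^5) + r2 Es - g|
        ≤ |G2 Es - g| + |Γ₀ δ * (3*((Real.sqrt (2*(Es - ec)))⁻¹)^5)| + |r2 Es| := by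
      have u1 := abs_add_le ((G2 Es - g) + Γ₀ δ * (3*((Real.sqrt (2*(Es - ec)))⁻¹)^5)) (r2 Es)
      have u2 := abs_add_le (G2 Es - g) (Γ₀ δ * (3*((Real.sqrt (2*(Es - ec)))⁻¹)^5))
      have e1 : G2 Es + Γ₀ δ * (3*((Real.sqrt (2*(Es - ec)))⁻¹)^5) + r2 Es - g
          = ((G2 Es - g) + Γ₀ δ * (3*((Real.sqrt (2*(Es - ec)))⁻¹)^5)) + r2 Es := by ring
      rw [e1]
      linarith only [u1, u2]
    have hq1 : M* |Es-E₀| ≤ M*C₂*δ^2 :=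
      le_trans (mul_le_mul_of_nonneg_left hΔ hM0) (le_of_eq (by ring))
    have hC5 : |G2 Es + Γ₀ δ * (3*((Real.sqrt (2*(Es - ec)))⁻¹)^5) + r2 Es - g| ≤ C₅*δ^2 := by
      rw [hC₅def]
      linarith only [habs, h1, hq1, h2, h3, hCrδ]
    have hC'5 : C₅*δ^2 ≤ C'*δ^2 := mul_le_mul_of_nonneg_right hC'₅ (by positivity)
    linarith only [hC5, hC'5]
end
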